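/- arXiv:2510.22843 — 6 statements merged into one kernel-verified Lean document; each statement's English description precedes it below -/
import Mathlib

section
/- The Boolean lattice consisting of all subsets of a 5-element set, ordered by inclusion (a ranked poset with rank equal to cardinality), is a Macaulay poset. -/
/-- `q` covers `p` with respect to the order relation `le`:
`p < q` and there is no element strictly between them. -/
def CoversR {α : Type*} (le : α → α → Prop) (p q : α) : Prop :=
  le p q ∧ p ≠ q ∧ ∀ r, le p r → le r q → r = p ∨ r = q

/-- The upper shadow of `A`: all elements covering some element of `A`. -/
def UpperShadowR {α : Type*} (le : α → α → Prop) (A : Set α) : Set α :=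
  {q | ∃ a ∈ A, CoversR le a q}

/-- `r` is a rank function for the order relation `le`: minimal elements have
rank `0` and ranks increase by one along covers. -/
def IsRankFunctionR {α : Type*} (le : α → α → Prop) (r : α → ℕ) : Prop :=
  (∀ p, (∀ q, le q p → q = p) → r p = 0) ∧
    ∀ p q, CoversR le p q → r q = r p + 1

/-- `S` is an initial segment (a set of largest elements) of the level `L`
with respect to the total order `t`. -/
def IsInitialSegIn {α : Type*} (t : α → α → Prop) (L S : Set α) : Prop :=
  S ⊆ L ∧ ∀ a ∈ S, ∀ b ∈ L, t a b → b ∈ S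

/-- The poset given by `le`, ranked by `r`, satisfies the Macaulay conditions with
respect to the total order `t`: for every rank `d` and every `A ⊆ P_d`, the initial
segment `S` of `P_d` of size `|A|` has `|∇S| ≤ |∇A|`, and `∇S` is again an initial
segment (of `P_{d+1}`). -/
def MacaulayWith {α : Type*} (le : α → α → Prop) (r : α → ℕ) (t : α → α → Prop) : Prop :=
  ∀ d : ℕ, ∀ A : Set α, A ⊆ {p | r p = d} →
    ∀ S : Set α, IsInitialSegIn t {p | r p = d} S → S.ncard = A.ncard →
      (UpperShadowR le S).ncard ≤ (UpperShadowR le A).ncard ∧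
        IsInitialSegIn t {p | r p = d + 1} (UpperShadowR le S)

/-- The poset given by `le` with rank function `r` (with finite rank levels) is
a Macaulay poset: some total order witnesses the Macaulay conditions. -/
def IsMacaulayPosetR {α : Type*} (le : α → α → Prop) (r : α → ℕ) : Prop :=
  IsRankFunctionR le r ∧ (∀ d : ℕ, {p | r p = d}.Finite) ∧
    ∃ t : α → α → Prop, IsLinearOrder α t ∧ MacaulayWith le r t

/-- The poset given by `le` is a Macaulay poset. -/
def IsMacaulayPoset {α : Type*} (le : α → α → Prop) : Prop :=
  ∃ r : α → ℕ, IsMacaulayPosetR le r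

attribute [-instance] instDecidableEqFin

open Finset
open scoped FinsetFamily

private lemma coversR_iff {s q : Finset (Fin 5)} :
    CoversR (· ≤ ·) s q ↔ s ⋖ q := by
  constructor
  · rintro ⟨h1, h2, h3⟩
    refine ⟨lt_of_le_of_ne h1 h2, fun r hsr hrq => ?_⟩
    rcases h3 r hsr.le hrq.le with rfl | rfl
    · exact lt_irrefl _ hsr
    · exact lt_irrefl _ hrq
  · rintro hc
    refine ⟨hc.le, hc.lt.ne, fun r hsr hrq => ?_⟩
    by_contra h
    push_neg at h
    exact hc.2 (lt_of_le_of_ne hsr (Ne.symm h.1)) (lt_of_le_of_ne hrq h.2)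

private lemma upperShadow_coe (𝒮 : Finset (Finset (Fin 5))) :
    UpperShadowR (· ≤ ·) (↑𝒮 : Set (Finset (Fin 5))) = ↑(∂⁺ 𝒮) := by
  ext q
  simp only [UpperShadowR, Set.mem_setOf_eq, Finset.mem_coe, mem_upShadow_iff]
  constructor
  · rintro ⟨a, ha, hc⟩
    obtain ⟨x, hx, rfl⟩ := Finset.covBy_iff_exists_insert.1 (coversR_iff.1 hc)
    exact ⟨a, ha, x, hx, rfl⟩
  · rintro ⟨a, ha, x, hx, rfl⟩
    exact ⟨a, ha, coversR_iff.2 (Finset.covBy_iff_exists_insert.2 ⟨x, hx, rfl⟩)⟩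

private lemma mem_upShadow_iff_compl (𝒮 : Finset (Finset (Fin 5))) (q : Finset (Fin 5)) :
    q ∈ ∂⁺ 𝒮 ↔ qᶜ ∈ ∂ 𝒮ᶜˢ := by
  rw [Finset.shadow_compls, Finset.mem_compls, compl_compl]

/-- The Boolean lattice of all subsets of a 5-element set, ordered by inclusion
and ranked by cardinality, is a Macaulay poset. -/
theorem booleanLattice_five_isMacaulay :
    IsMacaulayPosetR (· ≤ · : Finset (Fin 5) → Finset (Fin 5) → Prop)
      (fun s => s.card) := by
  classical
  refine ⟨⟨?_, ?_⟩, fun d => Set.toFinite _, ?_⟩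
  · intro p hp
    have h := hp ∅ bot_le
    simp [← h]
  · intro p q hc
    obtain ⟨x, hx, rfl⟩ := Finset.covBy_iff_exists_insert.1 (coversR_iff.1 hc)
    simp [Finset.card_insert_of_notMem hx]
  · refine ⟨fun a b => toColex bᶜ ≤ toColex aᶜ, ?_, ?_⟩
    · exact
        { refl := fun a => le_refl _
          trans := fun a b c hab hbc => le_trans hbc hab
          antisymm := fun a b hab hba =>
            (compl_injective (toColex_inj.1 (le_antisymm hab hba))).symm
          total := fun a b => le_total _ _ }
    · intro d A hA S hS hcard
      have hSfin : S.Finite := Set.toFinite S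
      have hAfin : A.Finite := Set.toFinite A
      set S' := hSfin.toFinset with hS'
      set A' := hAfin.toFinset with hA'
      have hScoe : (↑S' : Set (Finset (Fin 5))) = S := hSfin.coe_toFinset
      have hAcoe : (↑A' : Set (Finset (Fin 5))) = A := hAfin.coe_toFinset
      -- sizes
      have hSsize : ∀ s ∈ S, s.card = d := fun s hs => hS.1 hs
      have hAsize : ∀ s ∈ A, s.card = d := fun s hs => hA hs
      have hcompl_card : ∀ s : Finset (Fin 5), s.card = d → sᶜ.card = 5 - d := by
        intro s hs
        rw [Finset.card_compl, hs]
        rfl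
      have h𝒜r : ((A'ᶜˢ : Finset (Finset (Fin 5))) : Set (Finset (Fin 5))).Sized (5 - d) := by
        intro x hx
        rw [Finset.mem_coe, Finset.mem_compls] at hx
        have hxA : xᶜ ∈ A := hAfin.mem_toFinset.1 hx
        have := hcompl_card _ (hAsize _ hxA)
        rwa [compl_compl] at this
      have h𝒞init : Finset.Colex.IsInitSeg (S'ᶜˢ) (5 - d) := by
        constructor
        · intro x hx
          rw [Finset.mem_coe, Finset.mem_compls] at hx
          have hxS : xᶜ ∈ S := hSfin.mem_toFinset.1 hx
          have := hcompl_card _ (hSsize _ hxS)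
          rwa [compl_compl] at this
        · intro s u hs hu
          rw [Finset.mem_compls] at hs
          have haS : sᶜ ∈ S := hSfin.mem_toFinset.1 hs
          have hd5 : d ≤ 5 := by
            have := hSsize _ haS
            have h2 : sᶜ.card ≤ 5 := le_trans (Finset.card_le_univ _) (by simp)
            omega
          have hbcard : uᶜ.card = d := by
            rw [Finset.card_compl, hu.2]
            simp only [Fintype.card_fin]
            omega
          have hbS : uᶜ ∈ S := by
            refine hS.2 sᶜ haS uᶜ hbcard ?_
            show toColex uᶜᶜ ≤ toColex sᶜᶜ
            rw [compl_compl, compl_compl]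
            exact hu.1.le
          rw [Finset.mem_compls]
          exact hSfin.mem_toFinset.2 hbS
      have hncS : S.ncard = S'.card := Set.ncard_eq_toFinset_card S hSfin
      have hncA : A.ncard = A'.card := Set.ncard_eq_toFinset_card A hAfin
      have hcards : (S'ᶜˢ).card = (A'ᶜˢ).card := by
        rw [Finset.card_compls, Finset.card_compls, ← hncS, ← hncA]
        exact hcard
      have hKK : (∂ (S'ᶜˢ)).card ≤ (∂ (A'ᶜˢ)).card :=
        Finset.kruskal_katona h𝒜r hcards.le h𝒞init
      have hupS : UpperShadowR (· ≤ ·) S = ↑(∂⁺ S') := by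
        rw [← hScoe, upperShadow_coe]
      have hupA : UpperShadowR (· ≤ ·) A = ↑(∂⁺ A') := by
        rw [← hAcoe, upperShadow_coe]
      have hcardup : ∀ 𝒯 : Finset (Finset (Fin 5)), (∂⁺ 𝒯).card = (∂ (𝒯ᶜˢ)).card := by
        intro 𝒯
        rw [Finset.shadow_compls, Finset.card_compls]
      constructor
      · rw [hupS, hupA, Set.ncard_coe_finset, Set.ncard_coe_finset, hcardup, hcardup]
        exact hKK
      · rw [hupS]
        have hSsized : ((S' : Finset (Finset (Fin 5))) : Set (Finset (Fin 5))).Sized d := by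
          intro x hx
          rw [Finset.mem_coe] at hx
          exact hSsize x (hSfin.mem_toFinset.1 hx)
        have hupSized := hSsized.upShadow
        constructor
        · intro q hq
          rw [Finset.mem_coe] at hq
          exact hupSized hq
        · intro a ha b hb ht
          rw [Finset.mem_coe] at ha ⊢
          have hacard : a.card = d + 1 := hupSized ha
          have hd5 : d + 1 ≤ 5 := by
            have h2 : a.card ≤ 5 := le_trans (Finset.card_le_univ _) (by simp)
            omega
          rcases eq_or_lt_of_le ht with heq | hlt
          · have : bᶜ = aᶜ := toColex_inj.1 heq
            rwa [compl_injective this]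
          · have hshadow := h𝒞init.shadow
            have hain : aᶜ ∈ ∂ (S'ᶜˢ) := (mem_upShadow_iff_compl S' a).1 ha
            have hbcard : bᶜ.card = 5 - d - 1 := by
              rw [Finset.card_compl]
              simp only [Fintype.card_fin]
              have : b.card = d + 1 := hb
              omega
            have hbin : bᶜ ∈ ∂ (S'ᶜˢ) := hshadow.2 hain ⟨hlt, hbcard⟩
            exact (mem_upShadow_iff_compl S' b).2 hbin
end

section
/- The disjoint union of the Boolean lattice of all subsets of a 5-element set (ordered by inclusion) with a 7-element chain — the poset on the disjoint union of the two underlying sets in which elements from different components are incomparable and each component keeps its own order — is a ranked poset (a subset has rank equal to its cardinality; the i-th chain element has rank i for 0 ≤ i ≤ 6) which is NOT Macaulay: no total order on it satisfies the Macaulay conditions. -/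
namespace NotMacaulayAux

abbrev P := Finset (Fin 5) ⊕ Fin 7

/-- cover characterization from a left (boolean) element -/
lemma covers_inl_iff {s : Finset (Fin 5)} {q : P} :
    CoversR (· ≤ ·) (Sum.inl s) q ↔ ∃ u, q = Sum.inl u ∧ s ⊆ u ∧ u.card = s.card + 1 := by
  constructor
  · rintro ⟨hle, hne, hmin⟩
    cases q with
    | inr j => exact absurd hle Sum.not_inl_le_inr
    | inl u =>
      have hsu : s ⊆ u := Sum.inl_le_inl_iff.mp hle
      have hne' : s ≠ u := fun h => hne (by rw [h])
      obtain ⟨x, hxu, hxs⟩ := Finset.exists_of_ssubset (ssubset_of_subset_of_ne hsu hne')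
      have h1 : (Sum.inl (insert x s) : P) = Sum.inl s ∨ (Sum.inl (insert x s) : P) = Sum.inl u := by
        apply hmin
        · exact Sum.inl_le_inl_iff.mpr (Finset.subset_insert x s)
        · exact Sum.inl_le_inl_iff.mpr (Finset.insert_subset hxu hsu)
      rcases h1 with h1 | h1
      · exact absurd (Sum.inl.inj h1) (fun h => hxs (h ▸ Finset.mem_insert_self x s))
      · refine ⟨u, rfl, hsu, ?_⟩
        rw [← Sum.inl.inj h1, Finset.card_insert_of_notMem hxs]
  · rintro ⟨u, rfl, hsu, hcard⟩
    refine ⟨Sum.inl_le_inl_iff.mpr hsu, fun h => by rw [← Sum.inl.inj h] at hcard; omega, ?_⟩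
    rintro (v | k) h1 h2
    · have hsv : s ⊆ v := Sum.inl_le_inl_iff.mp h1
      have hvu : v ⊆ u := Sum.inl_le_inl_iff.mp h2
      have := Finset.card_le_card hsv
      have := Finset.card_le_card hvu
      rcases (by omega : v.card ≤ s.card ∨ u.card ≤ v.card) with h | h
      · exact Or.inl (by rw [Finset.eq_of_subset_of_card_le hsv h])
      · exact Or.inr (by rw [Finset.eq_of_subset_of_card_le hvu h])
    · exact absurd h1 Sum.not_inl_le_inr

/-- cover characterization from a right (chain) element -/
lemma covers_inr_iff {i : Fin 7} {q : P} :
    CoversR (· ≤ ·) (Sum.inr i) q ↔ ∃ j : Fin 7, q = Sum.inr j ∧ (j : ℕ) = (i : ℕ) + 1 := by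
  constructor
  · rintro ⟨hle, hne, hmin⟩
    cases q with
    | inl u => exact absurd hle Sum.not_inr_le_inl
    | inr j =>
      have hij0 : i ≤ j := Sum.inr_le_inr_iff.mp hle
      have hij : (i : ℕ) ≤ (j : ℕ) := hij0
      have hne' : (i : ℕ) ≠ (j : ℕ) := fun h => hne (by rw [Fin.ext h])
      have hjlt : (j : ℕ) < 7 := j.isLt
      set r : Fin 7 := ⟨(i : ℕ) + 1, by omega⟩ with hr
      have h1 : (Sum.inr r : P) = Sum.inr i ∨ (Sum.inr r : P) = Sum.inr j := by
        apply hmin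
        · exact Sum.inr_le_inr_iff.mpr (by simp [hr, Fin.le_def])
        · exact Sum.inr_le_inr_iff.mpr (by simp [hr, Fin.le_def]; omega)
      rcases h1 with h1 | h1
      · have := congrArg (fun x : P => Sum.elim (fun _ => 0) (fun k : Fin 7 => (k : ℕ)) x) h1
        simp [hr] at this
      · refine ⟨j, rfl, ?_⟩
        have := Sum.inr.inj h1
        rw [← this]
  · rintro ⟨j, rfl, hj⟩
    refine ⟨Sum.inr_le_inr_iff.mpr (by rw [Fin.le_def]; omega), fun h => by
      have := Sum.inr.inj h; rw [this] at hj; omega, ?_⟩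
    rintro (v | k) h1 h2
    · exact absurd h1 Sum.not_inr_le_inl
    · have h1'' : i ≤ k := Sum.inr_le_inr_iff.mp h1
      have h2'' : k ≤ j := Sum.inr_le_inr_iff.mp h2
      have h1' : (i : ℕ) ≤ (k : ℕ) := h1''
      have h2' : (k : ℕ) ≤ (j : ℕ) := h2''
      rcases (by omega : (k : ℕ) = (i : ℕ) ∨ (k : ℕ) = (j : ℕ)) with h | h
      · exact Or.inl (by rw [Fin.ext h])
      · exact Or.inr (by rw [Fin.ext h])

/-- every nonempty finset has a t-greatest element -/
lemma exists_top (t : P → P → Prop) (ht : IsLinearOrder P t) (F : Finset P) (hF : F.Nonempty) :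
    ∃ m ∈ F, ∀ b ∈ F, t b m := by
  haveI := ht
  classical
  induction F using Finset.induction_on with
  | empty => exact absurd hF (by simp)
  | @insert a F haF ih =>
    rcases F.eq_empty_or_nonempty with rfl | hFne
    · exact ⟨a, by simp, by simp [refl_of t a]⟩
    · obtain ⟨m, hmF, hm⟩ := ih hFne
      rcases total_of t a m with h | h
      · exact ⟨m, Finset.mem_insert_of_mem hmF, by
          intro b hb; rcases Finset.mem_insert.mp hb with rfl | hb
          · exact h
          · exact hm b hb⟩
      · exact ⟨a, Finset.mem_insert_self a F, by
          intro b hb; rcases Finset.mem_insert.mp hb with rfl | hb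
          · exact refl_of t b
          · exact trans_of t (hm b hb) h⟩

/-- initial segments of every size exist -/
lemma exists_seg (t : P → P → Prop) (ht : IsLinearOrder P t) (L : Set P) (k : ℕ)
    (hk : k ≤ L.ncard) : ∃ S, IsInitialSegIn t L S ∧ S.ncard = k := by
  haveI := ht
  induction k with
  | zero => exact ⟨∅, ⟨Set.empty_subset L, by simp⟩, by simp⟩
  | succ n ih =>
    obtain ⟨S, ⟨hSL, hSseg⟩, hScard⟩ := ih (by omega)
    have hLfin : L.Finite := Set.toFinite L
    have hSfin : S.Finite := Set.toFinite S
    have hdne : (L \ S).Nonempty := by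
      rw [Set.diff_nonempty]
      intro hLS
      have := Set.ncard_le_ncard hLS hSfin
      omega
    have hdfin : (L \ S).Finite := Set.toFinite _
    obtain ⟨m, hmF, hm⟩ := exists_top t ht hdfin.toFinset (by simpa [Set.Finite.toFinset] using hdne)
    rw [Set.Finite.mem_toFinset] at hmF
    refine ⟨insert m S, ⟨Set.insert_subset hmF.1 hSL, ?_⟩, ?_⟩
    · rintro a (rfl | haS) b hbL htab
      · by_cases hbS : b ∈ S
        · exact Or.inr hbS
        · left
          have hb' : b ∈ L \ S := ⟨hbL, hbS⟩
          have := hm b (hdfin.mem_toFinset.mpr hb')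
          exact antisymm this htab
      · exact Or.inr (hSseg a haS b hbL htab)
    · rw [Set.ncard_insert_of_notMem hmF.2 hSfin, hScard]

end NotMacaulayAux

namespace NotMacaulayAux

def rk : P → ℕ := Sum.elim (fun s : Finset (Fin 5) => s.card) (fun i : Fin 7 => (i : ℕ))

lemma level0 : {p : P | rk p = 0} = {Sum.inl ∅, Sum.inr 0} := by
  ext (s | i) <;> simp [rk, Finset.card_eq_zero]

lemma level1 : {p : P | rk p = 1} = insert (Sum.inr 1) (Sum.inl '' {s | s.card = 1}) := by
  ext (s | i)
  · simp [rk]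
  · simp [rk, Fin.ext_iff]

lemma ncard_sets (k : ℕ) :
    (Sum.inl '' {s : Finset (Fin 5) | s.card = k} : Set P).ncard
      = {s : Finset (Fin 5) | s.card = k}.ncard :=
  Set.ncard_image_of_injective _ Sum.inl_injective

lemma ncard_sets1 : (Sum.inl '' {s : Finset (Fin 5) | s.card = 1} : Set P).ncard = 5 := by
  rw [ncard_sets]
  rw [show {s : Finset (Fin 5) | s.card = 1}
      = ↑(Finset.univ.powersetCard 1 : Finset (Finset (Fin 5))) by
    ext s; simp [Finset.mem_powersetCard]]
  rw [Set.ncard_coe_finset]; decide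

lemma ncard_sets2 : (Sum.inl '' {s : Finset (Fin 5) | s.card = 2} : Set P).ncard = 10 := by
  rw [ncard_sets]
  rw [show {s : Finset (Fin 5) | s.card = 2}
      = ↑(Finset.univ.powersetCard 2 : Finset (Finset (Fin 5))) by
    ext s; simp [Finset.mem_powersetCard]]
  rw [Set.ncard_coe_finset]; decide

lemma ncard_level1 : {p : P | rk p = 1}.ncard = 6 := by
  rw [level1, Set.ncard_insert_of_notMem (by simp) (Set.toFinite _), ncard_sets1]

lemma shadow_singleton_inr (i j : Fin 7) (h : (j : ℕ) = (i : ℕ) + 1) :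
    UpperShadowR (· ≤ ·) ({Sum.inr i} : Set P) = {Sum.inr j} := by
  ext q
  simp only [UpperShadowR, Set.mem_setOf_eq, Set.mem_singleton_iff, exists_eq_left,
    covers_inr_iff]
  constructor
  · rintro ⟨j', rfl, hj'⟩
    congr 1
    exact Fin.ext (by omega)
  · rintro rfl
    exact ⟨j, rfl, h⟩

lemma shadow_inl_empty :
    UpperShadowR (· ≤ ·) ({Sum.inl ∅} : Set P) = Sum.inl '' {s | s.card = 1} := by
  ext q
  simp only [UpperShadowR, Set.mem_setOf_eq, Set.mem_singleton_iff, exists_eq_left,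
    covers_inl_iff, Set.mem_image]
  constructor
  · rintro ⟨u, rfl, -, hcard⟩
    exact ⟨u, by simpa using hcard, rfl⟩
  · rintro ⟨u, hu, rfl⟩
    exact ⟨u, rfl, Finset.empty_subset u, by simpa using hu⟩

lemma shadow_singles :
    UpperShadowR (· ≤ ·) (Sum.inl '' {s : Finset (Fin 5) | s.card = 1} : Set P)
      = Sum.inl '' {s | s.card = 2} := by
  ext q
  simp only [UpperShadowR, Set.mem_setOf_eq, Set.mem_image]
  constructor
  · rintro ⟨a, ⟨s, hs1, rfl⟩, hc⟩
    obtain ⟨u, rfl, hsu, hcard⟩ := covers_inl_iff.mp hc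
    exact ⟨u, by omega, rfl⟩
  · rintro ⟨u, hu2, rfl⟩
    obtain ⟨x, hx⟩ := Finset.card_pos.mp (by omega : 0 < u.card)
    refine ⟨Sum.inl {x}, ⟨{x}, by simp, rfl⟩, covers_inl_iff.mpr ⟨u, rfl, ?_, by simp [hu2]⟩⟩
    simpa using hx

end NotMacaulayAux

open NotMacaulayAux

/-- The disjoint union of the Boolean lattice of subsets of a 5-element set with a
7-element chain (elements in different components being incomparable) is ranked —
a subset has rank its cardinality, the `i`-th chain element has rank `i` — but it
is NOT a Macaulay poset: no total order satisfies the Macaulay conditions. -/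
theorem booleanLattice_union_chain_not_macaulay :
    IsRankFunctionR (· ≤ · : Finset (Fin 5) ⊕ Fin 7 → Finset (Fin 5) ⊕ Fin 7 → Prop)
      (Sum.elim (fun s : Finset (Fin 5) => s.card) (fun i : Fin 7 => (i : ℕ))) ∧
    (∀ d : ℕ, {p : Finset (Fin 5) ⊕ Fin 7 |
        Sum.elim (fun s : Finset (Fin 5) => s.card) (fun i : Fin 7 => (i : ℕ)) p = d}.Finite) ∧
    ¬∃ t : (Finset (Fin 5) ⊕ Fin 7) → (Finset (Fin 5) ⊕ Fin 7) → Prop,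
        IsLinearOrder (Finset (Fin 5) ⊕ Fin 7) t ∧
          MacaulayWith (· ≤ ·) (Sum.elim (fun s : Finset (Fin 5) => s.card) (fun i : Fin 7 => (i : ℕ))) t := by
  refine ⟨⟨?_, ?_⟩, fun d => Set.toFinite _, ?_⟩
  · -- minimal elements have rank 0
    rintro (s | i) hmin
    · have h := hmin (Sum.inl ∅) (Sum.inl_le_inl_iff.mpr (Finset.empty_subset s))
      have : (∅ : Finset (Fin 5)) = s := Sum.inl.inj h
      simp [← this]
    · have h := hmin (Sum.inr 0) (Sum.inr_le_inr_iff.mpr (Fin.zero_le i))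
      have : (0 : Fin 7) = i := Sum.inr.inj h
      simp [← this]
  · -- ranks increase along covers
    rintro (s | i) q hc
    · obtain ⟨u, rfl, -, hcard⟩ := covers_inl_iff.mp hc
      simpa using hcard
    · obtain ⟨j, rfl, hj⟩ := covers_inr_iff.mp hc
      simpa using hj
  · -- not Macaulay
    rintro ⟨t, ht, M⟩
    haveI := ht
    -- Step 0 : analyse level 0
    have hL0 : {p : P | rk p = 0}.ncard = 2 := by
      rw [level0, Set.ncard_pair (by simp)]
    obtain ⟨S0, hS0seg, hS0card⟩ := exists_seg t ht {p : P | rk p = 0} 1 (by rw [hL0]; omega)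
    have hM0 := M 0 {Sum.inr 0} (by rintro p rfl; rfl) S0 hS0seg
      (by rw [hS0card, Set.ncard_singleton])
    obtain ⟨hM01, hM02⟩ := hM0
    rw [shadow_singleton_inr 0 1 rfl] at hM01
    obtain ⟨a, rfl⟩ := Set.ncard_eq_one.mp hS0card
    have haL : a ∈ {p : P | rk p = 0} := hS0seg.1 rfl
    rw [level0] at haL
    rcases haL with rfl | rfl
    · -- the top element of level 0 cannot be ∅ : its shadow is too big
      rw [shadow_inl_empty, ncard_sets1, Set.ncard_singleton] at hM01
      omega
    · -- so it is the chain element, and inr 1 is the top of level 1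
      rw [shadow_singleton_inr 0 1 rfl] at hM02
      have htop : ∀ b ∈ {p : P | rk p = 1}, t (Sum.inr 1) b → b = Sum.inr 1 := by
        intro b hb htb
        exact hM02.2 (Sum.inr 1) rfl b hb htb
      -- Step 1 : analyse level 1
      obtain ⟨S1, hS1seg, hS1card⟩ := exists_seg t ht {p : P | rk p = 1} 5
        (by rw [ncard_level1]; omega)
      have hA1 : (Sum.inl '' {s : Finset (Fin 5) | s.card = 1} : Set P)
          ⊆ {p : P | rk p = 1} := by
        rintro p ⟨s, hs, rfl⟩; exact hs
      have hM1 := M 1 (Sum.inl '' {s | s.card = 1}) hA1 S1 hS1seg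
        (by rw [hS1card, ncard_sets1])
      have hM11 := hM1.1
      rw [shadow_singles, ncard_sets2] at hM11
      -- inr 1 belongs to S1
      have h1mem : (Sum.inr 1 : P) ∈ S1 := by
        obtain ⟨a, ha⟩ := Set.nonempty_of_ncard_ne_zero (by rw [hS1card]; omega) (s := S1)
        rcases total_of t a (Sum.inr 1) with h | h
        · exact hS1seg.2 a ha (Sum.inr 1) rfl h
        · have := htop a (hS1seg.1 ha) h
          rwa [← this]
      have hdiff : ({p : P | rk p = 1} \ S1).ncard = 1 := by
        rw [Set.ncard_diff hS1seg.1 (Set.toFinite _), ncard_level1, hS1card]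
      -- the shadow of S1 contains inr 2 and all 2-element sets
      have hsub : insert (Sum.inr 2) (Sum.inl '' {s : Finset (Fin 5) | s.card = 2})
          ⊆ UpperShadowR (· ≤ ·) S1 := by
        rintro q (rfl | ⟨u, hu2, rfl⟩)
        · exact ⟨Sum.inr 1, h1mem, covers_inr_iff.mpr ⟨2, rfl, rfl⟩⟩
        · obtain ⟨x, y, hxy, rfl⟩ := Finset.card_eq_two.mp hu2
          have key : Sum.inl ({x} : Finset (Fin 5)) ∈ S1 ∨ Sum.inl ({y} : Finset (Fin 5)) ∈ S1 := by
            by_contra hcon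
            push_neg at hcon
            have hsub2 : ({Sum.inl {x}, Sum.inl {y}} : Set P) ⊆ {p : P | rk p = 1} \ S1 := by
              rintro p (rfl | rfl)
              · exact ⟨by simp [rk], hcon.1⟩
              · exact ⟨by simp [rk], hcon.2⟩
            have hle2 := Set.ncard_le_ncard hsub2 (Set.toFinite _)
            rw [Set.ncard_pair (by simpa using hxy), hdiff] at hle2
            omega
          rcases key with hk | hk
          · exact ⟨_, hk, covers_inl_iff.mpr ⟨{x, y}, rfl, by simp, by simpa using hu2⟩⟩
          · exact ⟨_, hk, covers_inl_iff.mpr ⟨{x, y}, rfl, by simp, by simpa using hu2⟩⟩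
      have h11 : 11 ≤ (UpperShadowR (· ≤ ·) S1).ncard := by
        have hins : (insert (Sum.inr 2) (Sum.inl '' {s : Finset (Fin 5) | s.card = 2}) : Set P).ncard = 11 := by
          rw [Set.ncard_insert_of_notMem (by simp) (Set.toFinite _), ncard_sets2]
        rw [← hins]
        exact Set.ncard_le_ncard hsub (Set.toFinite _)
      exact absurd (le_trans h11 hM11) (by omega)
end

section
/- Presentation of the fiber product over K: let K be a field, I a proper homogeneous ideal of R = K[x_1,…,x_n], J a proper homogeneous ideal of S = K[y_1,…,y_m], A = R/I, B = S/J, and let π_A : A → K and π_B : B → K be the projections onto the degree-0 component. Then the fiber product A ×_K B = {(a,b) ∈ A × B : π_A(a) = π_B(b)}, a subring of the product ring A × B, is isomorphic as a K-algebra to T / (I·T + J·T + (x_i y_j : 1 ≤ i ≤ n, 1 ≤ j ≤ m)), where T = K[x_1,…,x_n,y_1,…,y_m]. -/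
open MvPolynomial

/-- `c` is a monomial of the quotient ring `R/I`: a nonzero coset of a monomial. -/
def MonClass {σ K : Type*} [Field K] (I : Ideal (MvPolynomial σ K))
    (c : MvPolynomial σ K ⧸ I) : Prop :=
  c ≠ 0 ∧ ∃ a : σ →₀ ℕ, c = Ideal.Quotient.mk I (monomial a (1 : K))

/-- The monomial poset `M_{R/I}`: the set of monomials of the quotient ring `R/I`. -/
def MonPoset {σ K : Type*} [Field K] (I : Ideal (MvPolynomial σ K)) : Type _ :=
  {c : MvPolynomial σ K ⧸ I // MonClass I c}

/-- The divisibility partial order on the monomial poset: `f ∣ g` iff `f h = g`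
for some monomial `h` of the quotient ring. -/
def monDvd {σ K : Type*} [Field K] (I : Ideal (MvPolynomial σ K))
    (f g : MonPoset I) : Prop :=
  ∃ h : MvPolynomial σ K ⧸ I, MonClass I h ∧ f.1 * h = g.1

/-- `I` is a homogeneous ideal: it contains all homogeneous components
of its elements. -/
def IsHomogIdeal {σ K : Type*} [Field K] (I : Ideal (MvPolynomial σ K)) : Prop :=
  ∀ f ∈ I, ∀ d : ℕ, homogeneousComponent d f ∈ I

/-- `I` is a monomial ideal: with any polynomial it contains all monomials
occurring in it. -/
def IsMonomialIdeal {σ K : Type*} [Field K] (I : Ideal (MvPolynomial σ K)) : Prop :=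
  ∀ f ∈ I, ∀ a ∈ f.support, monomial a (1 : K) ∈ I

/-- The coset of `1`: the least element of the monomial poset of a proper quotient. -/
noncomputable def oneMon {σ K : Type*} [Field K] (I : Ideal (MvPolynomial σ K)) (hI : I ≠ ⊤) :
    MonPoset I :=
  ⟨Ideal.Quotient.mk I 1, by
    refine ⟨?_, 0, by simp⟩
    rw [Ne, Ideal.Quotient.eq_zero_iff_mem]
    exact (Ideal.ne_top_iff_one I).mp hI⟩

namespace FPAux

variable {K : Type*} [CommRing K] {σ₁ σ₂ τ : Type*}

lemma constantCoeff_aeval_of {σ : Type*} (g : σ → MvPolynomial τ K)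
    (hg : ∀ k, constantCoeff (g k) = 0) (p : MvPolynomial σ K) :
    constantCoeff (aeval g p) = constantCoeff p := by
  induction p using MvPolynomial.induction_on with
  | C c => simp [algebraMap_eq]
  | add p q hp hq => simp only [map_add, hp, hq]
  | mul_X p k hp => simp only [map_mul, aeval_X, hp, hg, mul_zero, constantCoeff_X]

lemma mixed_monomial_mem (a : (σ₁ ⊕ σ₂) →₀ ℕ) (c : K) (i : σ₁) (j : σ₂)
    (hi : a (Sum.inl i) ≠ 0) (hj : a (Sum.inr j) ≠ 0) :
    monomial a c ∈ Ideal.span {q : MvPolynomial (σ₁ ⊕ σ₂) K |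
      ∃ i j, q = X (Sum.inl i) * X (Sum.inr j)} := by
  classical
  have hX1 : (X (Sum.inl i) : MvPolynomial (σ₁ ⊕ σ₂) K)
      = monomial (Finsupp.single (Sum.inl i) 1) 1 := rfl
  have hX2 : (X (Sum.inr j) : MvPolynomial (σ₁ ⊕ σ₂) K)
      = monomial (Finsupp.single (Sum.inr j) 1) 1 := rfl
  have key : monomial a c =
      monomial (a - Finsupp.single (Sum.inl i) 1 - Finsupp.single (Sum.inr j) 1) c *
        (X (Sum.inl i) * X (Sum.inr j)) := by
    have hsum : ((a - Finsupp.single (Sum.inl i) 1) - Finsupp.single (Sum.inr j) 1) +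
        (Finsupp.single (Sum.inl i) 1 + Finsupp.single (Sum.inr j) 1) = a := by
      ext k
      rcases k with k | k <;>
        simp only [Finsupp.add_apply, Finsupp.tsub_apply, Finsupp.single_apply,
          Sum.inl.injEq, Sum.inr.injEq, reduceCtorEq, if_false]
      · by_cases h : i = k
        · subst h; simp; omega
        · simp [h]
      · by_cases h : j = k
        · subst h; simp; omega
        · simp [h]
    rw [hX1, hX2, monomial_mul, monomial_mul, hsum]
    simp
  rw [key]
  exact Ideal.mul_mem_left _ _ (Ideal.subset_span ⟨i, j, rfl⟩)

lemma decomp_mem (p : MvPolynomial (σ₁ ⊕ σ₂) K) :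
    p - aeval (Sum.elim (fun i => X (Sum.inl i)) (fun _ => 0)) p
      - aeval (Sum.elim (fun _ => 0) (fun j => X (Sum.inr j))) p
      + C (constantCoeff p)
    ∈ Ideal.span {q : MvPolynomial (σ₁ ⊕ σ₂) K |
        ∃ i j, q = X (Sum.inl i) * X (Sum.inr j)} := by
  classical
  set M := Ideal.span {q : MvPolynomial (σ₁ ⊕ σ₂) K |
      ∃ i j, q = X (Sum.inl i) * X (Sum.inr j)} with hM
  induction p using MvPolynomial.induction_on' with
  | add p q hp hq =>
    have h := M.add_mem hp hq
    convert h using 1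
    simp only [map_add]
    ring
  | monomial a c =>
    by_cases hl : ∀ i, a (Sum.inl i) = 0 <;> by_cases hr : ∀ j, a (Sum.inr j) = 0
    · -- a = 0
      have ha : a = 0 := by ext k; rcases k with k | k; exacts [hl k, hr k]
      subst ha
      simp [monomial_zero', algebraMap_eq]
    · -- pure y monomial
      obtain ⟨j, hj⟩ := not_forall.mp hr
      have h1 : aeval (Sum.elim (fun i => X (Sum.inl i)) (fun _ => (0 : MvPolynomial (σ₁ ⊕ σ₂) K)))
          (monomial a c) = 0 := by
        rw [aeval_monomial]
        have : (a.prod fun k e => (Sum.elim (fun i => X (Sum.inl i))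
            (fun _ => (0 : MvPolynomial (σ₁ ⊕ σ₂) K)) k) ^ e) = 0 := by
          apply Finset.prod_eq_zero (Finsupp.mem_support_iff.mpr hj)
          simp [zero_pow hj]
        rw [this, mul_zero]
      have h2 : aeval (Sum.elim (fun _ => (0 : MvPolynomial (σ₁ ⊕ σ₂) K)) (fun j => X (Sum.inr j)))
          (monomial a c) = monomial a c := by
        rw [aeval_monomial, monomial_eq]
        congr 1
        apply Finsupp.prod_congr
        intro k hk
        rcases k with k | k
        · exact absurd (hl k) (Finsupp.mem_support_iff.mp hk)
        · rfl
      have hcc : constantCoeff (monomial a c) = 0 := by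
        rw [constantCoeff_monomial, if_neg]
        intro h; exact hj (by rw [h]; rfl)
      rw [h1, h2, hcc]
      simp
    · -- pure x monomial
      obtain ⟨i, hi⟩ := not_forall.mp hl
      have h1 : aeval (Sum.elim (fun i => X (Sum.inl i)) (fun _ => (0 : MvPolynomial (σ₁ ⊕ σ₂) K)))
          (monomial a c) = monomial a c := by
        rw [aeval_monomial, monomial_eq]
        congr 1
        apply Finsupp.prod_congr
        intro k hk
        rcases k with k | k
        · rfl
        · exact absurd (hr k) (Finsupp.mem_support_iff.mp hk)
      have h2 : aeval (Sum.elim (fun _ => (0 : MvPolynomial (σ₁ ⊕ σ₂) K)) (fun j => X (Sum.inr j)))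
          (monomial a c) = 0 := by
        rw [aeval_monomial]
        have : (a.prod fun k e => (Sum.elim (fun _ => (0 : MvPolynomial (σ₁ ⊕ σ₂) K))
            (fun j => X (Sum.inr j)) k) ^ e) = 0 := by
          apply Finset.prod_eq_zero (Finsupp.mem_support_iff.mpr hi)
          simp [zero_pow hi]
        rw [this, mul_zero]
      have hcc : constantCoeff (monomial a c) = 0 := by
        rw [constantCoeff_monomial, if_neg]
        intro h; exact hi (by rw [h]; rfl)
      rw [h1, h2, hcc]
      simp
    · -- mixed
      obtain ⟨i, hi⟩ := not_forall.mp hl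
      obtain ⟨j, hj⟩ := not_forall.mp hr
      have h1 : aeval (Sum.elim (fun i => X (Sum.inl i)) (fun _ => (0 : MvPolynomial (σ₁ ⊕ σ₂) K)))
          (monomial a c) = 0 := by
        rw [aeval_monomial]
        have : (a.prod fun k e => (Sum.elim (fun i => X (Sum.inl i))
            (fun _ => (0 : MvPolynomial (σ₁ ⊕ σ₂) K)) k) ^ e) = 0 := by
          apply Finset.prod_eq_zero (Finsupp.mem_support_iff.mpr hj)
          simp [zero_pow hj]
        rw [this, mul_zero]
      have h2 : aeval (Sum.elim (fun _ => (0 : MvPolynomial (σ₁ ⊕ σ₂) K)) (fun j => X (Sum.inr j)))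
          (monomial a c) = 0 := by
        rw [aeval_monomial]
        have : (a.prod fun k e => (Sum.elim (fun _ => (0 : MvPolynomial (σ₁ ⊕ σ₂) K))
            (fun j => X (Sum.inr j)) k) ^ e) = 0 := by
          apply Finset.prod_eq_zero (Finsupp.mem_support_iff.mpr hi)
          simp [zero_pow hi]
        rw [this, mul_zero]
      have hcc : constantCoeff (monomial a c) = 0 := by
        rw [constantCoeff_monomial, if_neg]
        intro h; exact hi (by rw [h]; rfl)
      rw [h1, h2, hcc]
      simpa using mixed_monomial_mem a c i j hi hj

end FPAux

open MvPolynomial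

/-- The fiber product `A ×_K B` of two `K`-algebras relative to augmentations
`πA : A → K` and `πB : B → K`: the subalgebra `{(a,b) : πA a = πB b}` of `A × B`. -/
def fiberProd {K A B : Type*} [CommRing K] [CommRing A] [CommRing B]
    [Algebra K A] [Algebra K B] (πA : A →ₐ[K] K) (πB : B →ₐ[K] K) :
    Subalgebra K (A × B) where
  carrier := {p | πA p.1 = πB p.2}
  mul_mem' := by
    intro a b ha hb
    simp only [Set.mem_setOf_eq, Prod.fst_mul, Prod.snd_mul, map_mul] at *
    rw [ha, hb]
  add_mem' := by
    intro a b ha hb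
    simp only [Set.mem_setOf_eq, Prod.fst_add, Prod.snd_add, map_add] at *
    rw [ha, hb]
  algebraMap_mem' := by
    intro k
    show πA (algebraMap K A k) = πB (algebraMap K B k)
    simp

set_option maxHeartbeats 1000000
set_option synthInstance.maxHeartbeats 400000

/-- **Presentation of the fiber product over `K`.** Let `I ⊂ K[x_1,…,x_n]` and
`J ⊂ K[y_1,…,y_m]` be proper homogeneous ideals, `A = K[x]/I`, `B = K[y]/J`, with
augmentations `πA, πB` (projection to the degree-zero component, i.e. the constant
coefficient of a representative). Then the fiber product `A ×_K B` is isomorphic as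
a `K`-algebra to `T/(I·T + J·T + (x_i y_j))`, where `T = K[x_1,…,x_n,y_1,…,y_m]`. -/
theorem fiberProduct_presentation {K : Type*} [Field K] (n m : ℕ)
    (I : Ideal (MvPolynomial (Fin n) K)) (J : Ideal (MvPolynomial (Fin m) K))
    (hIproper : I ≠ ⊤) (hJproper : J ≠ ⊤)
    (hIhom : IsHomogIdeal I) (hJhom : IsHomogIdeal J)
    (πA : (MvPolynomial (Fin n) K ⧸ I) →ₐ[K] K)
    (πB : (MvPolynomial (Fin m) K ⧸ J) →ₐ[K] K)
    (hπA : ∀ f : MvPolynomial (Fin n) K,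
      πA (Ideal.Quotient.mk I f) = constantCoeff f)
    (hπB : ∀ g : MvPolynomial (Fin m) K,
      πB (Ideal.Quotient.mk J g) = constantCoeff g) :
    Nonempty ((fiberProd πA πB) ≃ₐ[K]
      (MvPolynomial (Fin n ⊕ Fin m) K ⧸
        (Ideal.map (rename (Sum.inl : Fin n → Fin n ⊕ Fin m)).toRingHom I ⊔
         Ideal.map (rename (Sum.inr : Fin m → Fin n ⊕ Fin m)).toRingHom J ⊔
         Ideal.span {p : MvPolynomial (Fin n ⊕ Fin m) K |
            ∃ i j, p = X (Sum.inl i) * X (Sum.inr j)}))) := by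
  classical
  -- constant coefficients of elements of proper homogeneous ideals vanish
  have hccI : ∀ f ∈ I, constantCoeff f = 0 := by
    intro f hf
    by_contra hc
    have h0 : C (constantCoeff f) ∈ I := by
      have := hIhom f hf 0
      rwa [homogeneousComponent_zero] at this
    have h1 : (1 : MvPolynomial (Fin n) K) ∈ I := by
      have := I.mul_mem_left (C (constantCoeff f)⁻¹) h0
      rwa [← C_mul, inv_mul_cancel₀ hc, C_1] at this
    exact hIproper (I.eq_top_iff_one.mpr h1)
  have hccJ : ∀ g ∈ J, constantCoeff g = 0 := by
    intro g hg
    by_contra hc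
    have h0 : C (constantCoeff g) ∈ J := by
      have := hJhom g hg 0
      rwa [homogeneousComponent_zero] at this
    have h1 : (1 : MvPolynomial (Fin m) K) ∈ J := by
      have := J.mul_mem_left (C (constantCoeff g)⁻¹) h0
      rwa [← C_mul, inv_mul_cancel₀ hc, C_1] at this
    exact hJproper (J.eq_top_iff_one.mpr h1)
  set φ1 : MvPolynomial (Fin n ⊕ Fin m) K →ₐ[K] MvPolynomial (Fin n) K :=
    aeval (Sum.elim X (fun _ => 0)) with hφ1def
  set φ2 : MvPolynomial (Fin n ⊕ Fin m) K →ₐ[K] MvPolynomial (Fin m) K :=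
    aeval (Sum.elim (fun _ => 0) X) with hφ2def
  have hφ1cc : ∀ p, constantCoeff (φ1 p) = constantCoeff p := by
    intro p
    exact FPAux.constantCoeff_aeval_of _ (by rintro (i | j) <;> simp) p
  have hφ2cc : ∀ p, constantCoeff (φ2 p) = constantCoeff p := by
    intro p
    exact FPAux.constantCoeff_aeval_of _ (by rintro (i | j) <;> simp) p
  have hr1 : ∀ p : MvPolynomial (Fin n ⊕ Fin m) K,
      rename Sum.inl (φ1 p) = aeval ((Sum.elim (fun i => X (Sum.inl i)) (fun _ => 0)) : Fin n ⊕ Fin m → MvPolynomial (Fin n ⊕ Fin m) K) p := by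
    intro p
    have h : (rename (Sum.inl : Fin n → Fin n ⊕ Fin m)).comp φ1
        = aeval ((Sum.elim (fun i => X (Sum.inl i)) (fun _ => 0)) : Fin n ⊕ Fin m → MvPolynomial (Fin n ⊕ Fin m) K) := by
      apply algHom_ext
      rintro (i | j) <;> simp [hφ1def]
    exact DFunLike.congr_fun h p
  have hr2 : ∀ p : MvPolynomial (Fin n ⊕ Fin m) K,
      rename Sum.inr (φ2 p) = aeval ((Sum.elim (fun _ => 0) (fun j => X (Sum.inr j))) : Fin n ⊕ Fin m → MvPolynomial (Fin n ⊕ Fin m) K) p := by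
    intro p
    have h : (rename (Sum.inr : Fin m → Fin n ⊕ Fin m)).comp φ2
        = aeval ((Sum.elim (fun _ => 0) (fun j => X (Sum.inr j))) : Fin n ⊕ Fin m → MvPolynomial (Fin n ⊕ Fin m) K) := by
      apply algHom_ext
      rintro (i | j) <;> simp [hφ2def]
    exact DFunLike.congr_fun h p
  set ψ0 : MvPolynomial (Fin n ⊕ Fin m) K →ₐ[K]
      (MvPolynomial (Fin n) K ⧸ I) × (MvPolynomial (Fin m) K ⧸ J) :=
    ((Ideal.Quotient.mkₐ K I).comp φ1).prod ((Ideal.Quotient.mkₐ K J).comp φ2) with hψ0def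
  have hψ0fst : ∀ p, (ψ0 p).1 = Ideal.Quotient.mk I (φ1 p) := fun p => rfl
  have hψ0snd : ∀ p, (ψ0 p).2 = Ideal.Quotient.mk J (φ2 p) := fun p => rfl
  have hmem : ∀ p, ψ0 p ∈ fiberProd πA πB := by
    intro p
    show πA ((ψ0 p).1) = πB ((ψ0 p).2)
    rw [hψ0fst, hψ0snd, hπA, hπB, hφ1cc, hφ2cc]
  set ψ : MvPolynomial (Fin n ⊕ Fin m) K →ₐ[K] (fiberProd πA πB) :=
    ψ0.codRestrict _ hmem with hψdef
  have hψcoe : ∀ p, (ψ p : (MvPolynomial (Fin n) K ⧸ I) × (MvPolynomial (Fin m) K ⧸ J)) = ψ0 p :=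
    fun p => rfl
  set L : Ideal (MvPolynomial (Fin n ⊕ Fin m) K) :=
    (Ideal.map (rename (Sum.inl : Fin n → Fin n ⊕ Fin m)).toRingHom I ⊔
     Ideal.map (rename (Sum.inr : Fin m → Fin n ⊕ Fin m)).toRingHom J ⊔
     Ideal.span {p : MvPolynomial (Fin n ⊕ Fin m) K |
        ∃ i j, p = X (Sum.inl i) * X (Sum.inr j)}) with hLdef
  -- generators of L are killed by ψ0
  have hz1 : ∀ f ∈ I, ψ0 (rename Sum.inl f) = 0 := by
    intro f hf
    have c1 : φ1 (rename Sum.inl f) = f := by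
      rw [hφ1def]
      rw [aeval_rename]
      simp [Sum.elim_comp_inl]
    have c2 : φ2 (rename Sum.inl f) = C (constantCoeff f) := by
      rw [hφ2def, aeval_rename]
      have : ((Sum.elim (fun _ => (0 : MvPolynomial (Fin m) K)) X) ∘ (Sum.inl : Fin n → Fin n ⊕ Fin m))
          = (fun _ => (0 : MvPolynomial (Fin m) K)) := rfl
      rw [this, aeval_zero', algebraMap_eq]
    have : ψ0 (rename Sum.inl f) = (Ideal.Quotient.mk I f, Ideal.Quotient.mk J (C (constantCoeff f))) := by
      refine Prod.ext ?_ ?_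
      · rw [hψ0fst, c1]
      · rw [hψ0snd, c2]
    rw [this, hccI f hf, C_0, map_zero, Ideal.Quotient.eq_zero_iff_mem.mpr hf]
    rfl
  have hz2 : ∀ g ∈ J, ψ0 (rename Sum.inr g) = 0 := by
    intro g hg
    have c1 : φ1 (rename Sum.inr g) = C (constantCoeff g) := by
      rw [hφ1def, aeval_rename]
      have : ((Sum.elim X (fun _ => (0 : MvPolynomial (Fin n) K))) ∘ (Sum.inr : Fin m → Fin n ⊕ Fin m))
          = (fun _ => (0 : MvPolynomial (Fin n) K)) := rfl
      rw [this, aeval_zero', algebraMap_eq]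
    have c2 : φ2 (rename Sum.inr g) = g := by
      rw [hφ2def, aeval_rename]
      simp [Sum.elim_comp_inr]
    have : ψ0 (rename Sum.inr g) = (Ideal.Quotient.mk I (C (constantCoeff g)), Ideal.Quotient.mk J g) := by
      refine Prod.ext ?_ ?_
      · rw [hψ0fst, c1]
      · rw [hψ0snd, c2]
    rw [this, hccJ g hg, C_0, map_zero, Ideal.Quotient.eq_zero_iff_mem.mpr hg]
    rfl
  have hz3 : ∀ (i : Fin n) (j : Fin m), ψ0 (X (Sum.inl i) * X (Sum.inr j)) = 0 := by
    intro i j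
    refine Prod.ext ?_ ?_
    · rw [hψ0fst]
      have : φ1 (X (Sum.inl i) * X (Sum.inr j)) = 0 := by
        rw [map_mul, hφ1def]
        simp
      rw [this, map_zero]
      rfl
    · rw [hψ0snd]
      have : φ2 (X (Sum.inl i) * X (Sum.inr j)) = 0 := by
        rw [map_mul, hφ2def]
        simp
      rw [this, map_zero]
      rfl
  have hL0 : ∀ p ∈ L, ψ p = 0 := by
    have key : L ≤ RingHom.ker ψ.toRingHom := by
      refine sup_le (sup_le ?_ ?_) ?_
      · rw [Ideal.map_le_iff_le_comap]
        intro f hf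
        rw [Ideal.mem_comap, RingHom.mem_ker]
        exact Subtype.ext ((hψcoe _).trans (hz1 f hf))
      · rw [Ideal.map_le_iff_le_comap]
        intro g hg
        rw [Ideal.mem_comap, RingHom.mem_ker]
        exact Subtype.ext ((hψcoe _).trans (hz2 g hg))
      · rw [Ideal.span_le]
        rintro p ⟨i, j, rfl⟩
        rw [SetLike.mem_coe, RingHom.mem_ker]
        exact Subtype.ext ((hψcoe _).trans (hz3 i j))
    intro p hp
    exact key hp
  set Φ := Ideal.Quotient.liftₐ L ψ hL0 with hΦdef
  have hΦmk : ∀ p, Φ (Ideal.Quotient.mk L p) = ψ p := by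
    intro p
    rw [hΦdef, Ideal.Quotient.liftₐ_apply]
    rfl
  -- kernel of ψ0 is contained in L
  have hker : ∀ p : MvPolynomial (Fin n ⊕ Fin m) K, ψ0 p = 0 → p ∈ L := by
    intro p hp
    have h1 : φ1 p ∈ I := by
      have := congrArg Prod.fst hp
      rw [hψ0fst] at this
      exact Ideal.Quotient.eq_zero_iff_mem.mp this
    have h2 : φ2 p ∈ J := by
      have := congrArg Prod.snd hp
      rw [hψ0snd] at this
      exact Ideal.Quotient.eq_zero_iff_mem.mp this
    have hcc : constantCoeff p = 0 := by
      rw [← hφ1cc p]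
      exact hccI _ h1
    have hdec := FPAux.decomp_mem (K := K) (σ₁ := Fin n) (σ₂ := Fin m) p
    rw [← hr1 p, ← hr2 p] at hdec
    have m3 : p - rename Sum.inl (φ1 p) - rename Sum.inr (φ2 p) + C (constantCoeff p) ∈ L :=
      Ideal.mem_sup_right hdec
    have m1 : rename Sum.inl (φ1 p) ∈ L :=
      Ideal.mem_sup_left (Ideal.mem_sup_left (Ideal.mem_map_of_mem _ h1))
    have m2 : rename Sum.inr (φ2 p) ∈ L :=
      Ideal.mem_sup_left (Ideal.mem_sup_right (Ideal.mem_map_of_mem _ h2))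
    have hid : p = (p - rename Sum.inl (φ1 p) - rename Sum.inr (φ2 p) + C (constantCoeff p))
        + rename Sum.inl (φ1 p) + rename Sum.inr (φ2 p) := by
      rw [hcc, C_0]
      ring
    rw [hid]
    exact L.add_mem (L.add_mem m3 m1) m2
  have hinj : Function.Injective Φ := by
    intro x y hxy
    obtain ⟨p, rfl⟩ := Ideal.Quotient.mk_surjective x
    obtain ⟨q, rfl⟩ := Ideal.Quotient.mk_surjective y
    rw [Ideal.Quotient.eq]
    rw [hΦmk, hΦmk] at hxy
    have h0 : ψ0 p = ψ0 q := by
      rw [← hψcoe, ← hψcoe, hxy]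
    apply hker
    rw [map_sub, h0, sub_self]
  have hsurj : Function.Surjective Φ := by
    rintro ⟨⟨a, b⟩, hab⟩
    obtain ⟨f, rfl⟩ := Ideal.Quotient.mk_surjective a
    obtain ⟨g, rfl⟩ := Ideal.Quotient.mk_surjective b
    have hab' : πA (Ideal.Quotient.mk I f) = πB (Ideal.Quotient.mk J g) := hab
    rw [hπA, hπB] at hab'
    refine ⟨Ideal.Quotient.mk L
      (rename Sum.inl f + rename Sum.inr g - C (constantCoeff g)), ?_⟩
    rw [hΦmk]
    apply Subtype.ext
    rw [hψcoe]
    have cf1 : φ1 (rename Sum.inl f) = f := by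
      rw [hφ1def, aeval_rename]
      simp [Sum.elim_comp_inl]
    have cf2 : φ2 (rename Sum.inl f) = C (constantCoeff f) := by
      rw [hφ2def, aeval_rename]
      have : ((Sum.elim (fun _ => (0 : MvPolynomial (Fin m) K)) X) ∘ (Sum.inl : Fin n → Fin n ⊕ Fin m))
          = (fun _ => (0 : MvPolynomial (Fin m) K)) := rfl
      rw [this, aeval_zero', algebraMap_eq]
    have cg1 : φ1 (rename Sum.inr g) = C (constantCoeff g) := by
      rw [hφ1def, aeval_rename]
      have : ((Sum.elim X (fun _ => (0 : MvPolynomial (Fin n) K))) ∘ (Sum.inr : Fin m → Fin n ⊕ Fin m))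
          = (fun _ => (0 : MvPolynomial (Fin n) K)) := rfl
      rw [this, aeval_zero', algebraMap_eq]
    have cg2 : φ2 (rename Sum.inr g) = g := by
      rw [hφ2def, aeval_rename]
      simp [Sum.elim_comp_inr]
    have hC1 : φ1 (C (constantCoeff g)) = C (constantCoeff g) := by
      rw [hφ1def, aeval_C, algebraMap_eq]
    have hC2 : φ2 (C (constantCoeff g)) = C (constantCoeff g) := by
      rw [hφ2def, aeval_C, algebraMap_eq]
    refine Prod.ext ?_ ?_
    · rw [hψ0fst, map_sub, map_add, cf1, cg1, hC1]
      simp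
    · rw [hψ0snd, map_sub, map_add, cf2, cg2, hC2, hab']
      simp
  exact ⟨(AlgEquiv.ofBijective Φ ⟨hinj, hsurj⟩).symm⟩
end

section
/- Presentation of the connected sum over K: let K be a field, I ⊂ R = K[x_1,…,x_n] and J ⊂ S = K[y_1,…,y_m] proper homogeneous ideals, A = R/I, B = S/J, with augmentations π_A : A → K, π_B : B → K. Suppose f ∈ R and g ∈ S are homogeneous of the same positive degree with f ∉ I and g ∉ J, and their cosets m_A = f + I and m_B = g + J are socle elements (x_i·m_A = 0 in A for all i, and y_j·m_B = 0 in B for all j). Then the K-span of (m_A, −m_B) is an ideal of the fiber product A ×_K B = {(a,b) : π_A(a) = π_B(b)}, and the quotient ring (A ×_K B) / K·(m_A, −m_B) is isomorphic as a K-algebra to T / (I·T + J·T + (x_i y_j : 1 ≤ i ≤ n, 1 ≤ j ≤ m) + (f − g)), where T = K[x_1,…,x_n,y_1,…,y_m]. -/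
open MvPolynomial

open MvPolynomial

/-- The quotient ring of a subalgebra `S` by the principal ideal generated by `z ∈ S`. -/
noncomputable def quotBySpan {K A : Type*} [CommRing K] [CommRing A] [Algebra K A]
    (S : Subalgebra K A) (z : S) : Type _ :=
  S ⧸ Ideal.span ({z} : Set S)

noncomputable instance quotBySpan.instCommRing {K A : Type*} [CommRing K] [CommRing A]
    [Algebra K A] (S : Subalgebra K A) (z : S) : CommRing (quotBySpan S z) :=
  inferInstanceAs (CommRing (S ⧸ Ideal.span ({z} : Set S)))

noncomputable instance quotBySpan.instAlgebra {K A : Type*} [CommRing K] [CommRing A]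
    [Algebra K A] (S : Subalgebra K A) (z : S) : Algebra K (quotBySpan S z) :=
  inferInstanceAs (Algebra K (S ⧸ Ideal.span ({z} : Set S)))

set_option synthInstance.maxHeartbeats 1000000
set_option maxHeartbeats 1000000


section MyAux
variable {K : Type*} [Field K]

lemma myConstCoeff_zero {σ : Type*} {I : Ideal (MvPolynomial σ K)} (hI : I ≠ ⊤)
    (hIhom : ∀ f ∈ I, ∀ d : ℕ, homogeneousComponent d f ∈ I)
    {q : MvPolynomial σ K} (hq : q ∈ I) : constantCoeff q = 0 := by
  by_contra h
  have h0 : homogeneousComponent 0 q ∈ I := hIhom q hq 0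
  rw [homogeneousComponent_zero] at h0
  have h1 : (1 : MvPolynomial σ K) ∈ I := by
    have h2 := I.mul_mem_left (C (coeff 0 q)⁻¹) h0
    rw [← C_mul, inv_mul_cancel₀ (show coeff 0 q ≠ 0 from h), C_1] at h2
    exact h2
  exact hI ((Ideal.eq_top_iff_one I).mpr h1)

lemma mySocle_mul {σ : Type*} {I : Ideal (MvPolynomial σ K)} {f : MvPolynomial σ K}
    (hsoc : ∀ i : σ, X i * f ∈ I) (q : MvPolynomial σ K) :
    q * f - C (constantCoeff q) * f ∈ I := by
  induction q using MvPolynomial.induction_on with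
  | C a => simp
  | add p q hp hq =>
      have h := I.add_mem hp hq
      have heq : (p + q) * f - C (constantCoeff (p + q)) * f =
          (p * f - C (constantCoeff p) * f) + (q * f - C (constantCoeff q) * f) := by
        rw [map_add, map_add]; ring
      rw [heq]; exact h
  | mul_X p i _ =>
      have h0 : constantCoeff (p * X i) = 0 := by simp
      rw [h0, map_zero, zero_mul, sub_zero, mul_assoc]
      exact I.mul_mem_left p (hsoc i)

lemma myConstCoeff_aeval {σ τ : Type*} (v : σ → MvPolynomial τ K)
    (hv : ∀ s, constantCoeff (v s) = 0) (p : MvPolynomial σ K) :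
    constantCoeff (aeval v p) = constantCoeff p := by
  induction p using MvPolynomial.induction_on with
  | C a => simp
  | add p q hp hq => simp only [map_add, hp, hq]
  | mul_X p s hp => simp only [map_mul, aeval_X, constantCoeff_X, mul_zero, hv s]

end MyAux

section MyAux2
variable {K : Type*} [Field K] {n m : ℕ}

/-- Ideal generated by mixed products of variables. -/
noncomputable def myMix (K : Type*) [Field K] (n m : ℕ) : Ideal (MvPolynomial (Fin n ⊕ Fin m) K) :=
  Ideal.span {p : MvPolynomial (Fin n ⊕ Fin m) K | ∃ i j, p = X (Sum.inl i) * X (Sum.inr j)}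

lemma myMixR (r : MvPolynomial (Fin m) K) (i : Fin n) :
    (rename Sum.inr r - C (constantCoeff r)) * X (Sum.inl i : Fin n ⊕ Fin m) ∈ myMix K n m := by
  induction r using MvPolynomial.induction_on with
  | C a => simp
  | add p q hp hq =>
      have h := (myMix K n m).add_mem hp hq
      have heq : (rename Sum.inr (p + q) - C (constantCoeff (p + q))) * X (Sum.inl i : Fin n ⊕ Fin m) =
          (rename Sum.inr p - C (constantCoeff p)) * X (Sum.inl i) +
          (rename Sum.inr q - C (constantCoeff q)) * X (Sum.inl i) := by
        simp only [map_add]; ring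
      rw [heq]; exact h
  | mul_X p j _ =>
      have hg : (X (Sum.inl i) * X (Sum.inr j) : MvPolynomial (Fin n ⊕ Fin m) K) ∈ myMix K n m :=
        Ideal.subset_span ⟨i, j, rfl⟩
      have h := (myMix K n m).mul_mem_left (rename Sum.inr p) hg
      have heq : (rename Sum.inr (p * X j) - C (constantCoeff (p * X j))) * X (Sum.inl i : Fin n ⊕ Fin m) =
          rename Sum.inr p * (X (Sum.inl i) * X (Sum.inr j)) := by
        simp only [map_mul, rename_X, constantCoeff_X, mul_zero, map_zero]
        ring
      rw [heq]; exact h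

lemma myMixL (q : MvPolynomial (Fin n) K) (j : Fin m) :
    (rename Sum.inl q - C (constantCoeff q)) * X (Sum.inr j : Fin n ⊕ Fin m) ∈ myMix K n m := by
  induction q using MvPolynomial.induction_on with
  | C a => simp
  | add p q hp hq =>
      have h := (myMix K n m).add_mem hp hq
      have heq : (rename Sum.inl (p + q) - C (constantCoeff (p + q))) * X (Sum.inr j : Fin n ⊕ Fin m) =
          (rename Sum.inl p - C (constantCoeff p)) * X (Sum.inr j) +
          (rename Sum.inl q - C (constantCoeff q)) * X (Sum.inr j) := by
        simp only [map_add]; ring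
      rw [heq]; exact h
  | mul_X p i _ =>
      have hg : (X (Sum.inl i) * X (Sum.inr j) : MvPolynomial (Fin n ⊕ Fin m) K) ∈ myMix K n m :=
        Ideal.subset_span ⟨i, j, rfl⟩
      have h := (myMix K n m).mul_mem_left (rename Sum.inl p) hg
      have heq : (rename Sum.inl (p * X i) - C (constantCoeff (p * X i))) * X (Sum.inr j : Fin n ⊕ Fin m) =
          rename Sum.inl p * (X (Sum.inl i) * X (Sum.inr j)) := by
        simp only [map_mul, rename_X, constantCoeff_X, mul_zero, map_zero]
        ring
      rw [heq]; exact h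

lemma myDecomp (p : MvPolynomial (Fin n ⊕ Fin m) K) :
    p - rename Sum.inl (aeval (Sum.elim X 0) p) - rename Sum.inr (aeval (Sum.elim 0 X) p)
      + C (constantCoeff p) ∈ myMix K n m := by
  induction p using MvPolynomial.induction_on with
  | C a => simp
  | add p q hp hq =>
      have h := (myMix K n m).add_mem hp hq
      have heq : p + q - rename Sum.inl (aeval (Sum.elim X 0) (p + q))
          - rename Sum.inr (aeval (Sum.elim 0 X) (p + q)) + C (constantCoeff (p + q)) =
          (p - rename Sum.inl (aeval (Sum.elim X 0) p) - rename Sum.inr (aeval (Sum.elim 0 X) p)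
            + C (constantCoeff p)) +
          (q - rename Sum.inl (aeval (Sum.elim X 0) q) - rename Sum.inr (aeval (Sum.elim 0 X) q)
            + C (constantCoeff q)) := by
        simp only [map_add]; ring
      rw [heq]; exact h
  | mul_X p s hp =>
      cases s with
      | inl i =>
          have h := (myMix K n m).add_mem ((myMix K n m).mul_mem_right (X (Sum.inl i)) hp)
            (myMixR (aeval (Sum.elim 0 X) p) i)
          have heq : p * X (Sum.inl i) - rename Sum.inl (aeval (Sum.elim X 0) (p * X (Sum.inl i)))
              - rename Sum.inr (aeval (Sum.elim 0 X) (p * X (Sum.inl i)))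
              + C (constantCoeff (p * X (Sum.inl i))) =
              (p - rename Sum.inl (aeval (Sum.elim X 0) p) - rename Sum.inr (aeval (Sum.elim 0 X) p)
                + C (constantCoeff p)) * X (Sum.inl i) +
              (rename Sum.inr (aeval (Sum.elim 0 X) p) - C (constantCoeff (aeval (Sum.elim 0 X) p)))
                * X (Sum.inl i) := by
            have hcc : constantCoeff (aeval (Sum.elim (0 : Fin n → MvPolynomial (Fin m) K) X) p)
                = constantCoeff p := by
              refine myConstCoeff_aeval _ (fun s => ?_) p
              cases s <;> simp
            simp only [map_mul, aeval_X, Sum.elim_inl, Sum.elim_inr, Pi.zero_apply, mul_zero,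
              map_zero, constantCoeff_X, rename_X, hcc]
            ring
          rw [heq]; exact h
      | inr j =>
          have h := (myMix K n m).add_mem ((myMix K n m).mul_mem_right (X (Sum.inr j)) hp)
            (myMixL (aeval (Sum.elim X 0) p) j)
          have heq : p * X (Sum.inr j) - rename Sum.inl (aeval (Sum.elim X 0) (p * X (Sum.inr j)))
              - rename Sum.inr (aeval (Sum.elim 0 X) (p * X (Sum.inr j)))
              + C (constantCoeff (p * X (Sum.inr j))) =
              (p - rename Sum.inl (aeval (Sum.elim X 0) p) - rename Sum.inr (aeval (Sum.elim 0 X) p)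
                + C (constantCoeff p)) * X (Sum.inr j) +
              (rename Sum.inl (aeval (Sum.elim X 0) p) - C (constantCoeff (aeval (Sum.elim X 0) p)))
                * X (Sum.inr j) := by
            have hcc : constantCoeff (aeval (Sum.elim X (0 : Fin m → MvPolynomial (Fin n) K)) p)
                = constantCoeff p := by
              refine myConstCoeff_aeval _ (fun s => ?_) p
              cases s <;> simp
            simp only [map_mul, aeval_X, Sum.elim_inl, Sum.elim_inr, Pi.zero_apply, mul_zero,
              map_zero, constantCoeff_X, rename_X, hcc]
            ring
          rw [heq]; exact h

end MyAux2
section MyAux3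
variable {K : Type*} [Field K] {n m : ℕ}

lemma mySmul_mk {σ : Type*} (I : Ideal (MvPolynomial σ K)) (c : K) (h : MvPolynomial σ K) :
    c • Ideal.Quotient.mk I h = Ideal.Quotient.mk I (C c * h) := by
  rw [← MvPolynomial.smul_eq_C_mul, ← Ideal.Quotient.mkₐ_eq_mk K I, map_smul]

lemma myKillY_renameL (q : MvPolynomial (Fin n) K) :
    aeval (Sum.elim X (0 : Fin m → MvPolynomial (Fin n) K)) (rename Sum.inl q) = q := by
  rw [aeval_rename]
  have h : (Sum.elim X (0 : Fin m → MvPolynomial (Fin n) K)) ∘ Sum.inl = X := rfl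
  rw [h, aeval_X_left_apply]

lemma myKillY_renameR (r : MvPolynomial (Fin m) K) :
    aeval (Sum.elim X (0 : Fin m → MvPolynomial (Fin n) K)) (rename Sum.inr r)
      = C (constantCoeff r) := by
  rw [aeval_rename]
  have h : (Sum.elim X (0 : Fin m → MvPolynomial (Fin n) K)) ∘ Sum.inr
      = (0 : Fin m → MvPolynomial (Fin n) K) := rfl
  rw [h, aeval_zero, MvPolynomial.algebraMap_eq]

lemma myKillX_renameL (q : MvPolynomial (Fin n) K) :
    aeval (Sum.elim (0 : Fin n → MvPolynomial (Fin m) K) X) (rename Sum.inl q)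
      = C (constantCoeff q) := by
  rw [aeval_rename]
  have h : (Sum.elim (0 : Fin n → MvPolynomial (Fin m) K) X) ∘ Sum.inl
      = (0 : Fin n → MvPolynomial (Fin m) K) := rfl
  rw [h, aeval_zero, MvPolynomial.algebraMap_eq]

lemma myKillX_renameR (r : MvPolynomial (Fin m) K) :
    aeval (Sum.elim (0 : Fin n → MvPolynomial (Fin m) K) X) (rename Sum.inr r) = r := by
  rw [aeval_rename]
  have h : (Sum.elim (0 : Fin n → MvPolynomial (Fin m) K) X) ∘ Sum.inr = X := rfl
  rw [h, aeval_X_left_apply]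

/-- The presentation map `T → A × B`. -/
noncomputable def myPsi0 (I : Ideal (MvPolynomial (Fin n) K)) (J : Ideal (MvPolynomial (Fin m) K)) :
    MvPolynomial (Fin n ⊕ Fin m) K →ₐ[K]
      (MvPolynomial (Fin n) K ⧸ I) × (MvPolynomial (Fin m) K ⧸ J) :=
  ((Ideal.Quotient.mkₐ K I).comp (aeval (Sum.elim X 0))).prod
    ((Ideal.Quotient.mkₐ K J).comp (aeval (Sum.elim 0 X)))

lemma myPsi0_apply (I : Ideal (MvPolynomial (Fin n) K)) (J : Ideal (MvPolynomial (Fin m) K))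
    (p : MvPolynomial (Fin n ⊕ Fin m) K) :
    myPsi0 I J p = (Ideal.Quotient.mk I (aeval (Sum.elim X 0) p),
      Ideal.Quotient.mk J (aeval (Sum.elim 0 X) p)) := rfl

end MyAux3

/-- **Presentation of the connected sum over `K`.** Let `I ⊂ K[x_1,…,x_n]` and
`J ⊂ K[y_1,…,y_m]` be proper homogeneous ideals, `A = K[x]/I`, `B = K[y]/J`, with
augmentations `πA, πB`. Suppose `f` and `g` are homogeneous of the same positive
degree `e`, `f ∉ I`, `g ∉ J`, and the cosets `m_A = f + I`, `m_B = g + J` are socle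
elements. Then `z = (m_A, -m_B)` lies in the fiber product `A ×_K B`, its `K`-span
is an ideal of `A ×_K B`, and the quotient `(A ×_K B)/K·(m_A, -m_B)` is isomorphic
as a `K`-algebra to `T/(I·T + J·T + (x_i y_j) + (f - g))` with
`T = K[x_1,…,x_n,y_1,…,y_m]`. -/
theorem connectedSum_presentation {K : Type*} [Field K] (n m : ℕ)
    (I : Ideal (MvPolynomial (Fin n) K)) (J : Ideal (MvPolynomial (Fin m) K))
    (hIproper : I ≠ ⊤) (hJproper : J ≠ ⊤)
    (hIhom : IsHomogIdeal I) (hJhom : IsHomogIdeal J)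
    (πA : (MvPolynomial (Fin n) K ⧸ I) →ₐ[K] K)
    (πB : (MvPolynomial (Fin m) K ⧸ J) →ₐ[K] K)
    (hπA : ∀ f : MvPolynomial (Fin n) K,
      πA (Ideal.Quotient.mk I f) = constantCoeff f)
    (hπB : ∀ g : MvPolynomial (Fin m) K,
      πB (Ideal.Quotient.mk J g) = constantCoeff g)
    (f : MvPolynomial (Fin n) K) (g : MvPolynomial (Fin m) K) (e : ℕ) (he : 0 < e)
    (hf : f.IsHomogeneous e) (hg : g.IsHomogeneous e)
    (hfI : f ∉ I) (hgJ : g ∉ J)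
    (hsocf : ∀ i : Fin n, X i * f ∈ I) (hsocg : ∀ j : Fin m, X j * g ∈ J) :
    ∃ hz : ((Ideal.Quotient.mk I f, -(Ideal.Quotient.mk J g)) :
        (MvPolynomial (Fin n) K ⧸ I) × (MvPolynomial (Fin m) K ⧸ J)) ∈
          fiberProd πA πB,
      (∀ p ∈ fiberProd πA πB, ∃ c : K,
        p * (Ideal.Quotient.mk I f, -(Ideal.Quotient.mk J g)) =
          c • (Ideal.Quotient.mk I f, -(Ideal.Quotient.mk J g))) ∧
      Nonempty ((quotBySpan (fiberProd πA πB)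
            ⟨(Ideal.Quotient.mk I f, -(Ideal.Quotient.mk J g)), hz⟩) ≃ₐ[K]
        (MvPolynomial (Fin n ⊕ Fin m) K ⧸
          (Ideal.map (rename (Sum.inl : Fin n → Fin n ⊕ Fin m)).toRingHom I ⊔
           Ideal.map (rename (Sum.inr : Fin m → Fin n ⊕ Fin m)).toRingHom J ⊔
           Ideal.span {p : MvPolynomial (Fin n ⊕ Fin m) K |
              ∃ i j, p = X (Sum.inl i) * X (Sum.inr j)} ⊔
           Ideal.span {rename (Sum.inl : Fin n → Fin n ⊕ Fin m) f -
              rename (Sum.inr : Fin m → Fin n ⊕ Fin m) g}))) := by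
  classical
  have hcf : constantCoeff f = 0 := by
    rw [MvPolynomial.constantCoeff_eq]
    exact hf.coeff_eq_zero (by simpa using he.ne)
  have hcg : constantCoeff g = 0 := by
    rw [MvPolynomial.constantCoeff_eq]
    exact hg.coeff_eq_zero (by simpa using he.ne)
  have hz : ((Ideal.Quotient.mk I f, -(Ideal.Quotient.mk J g)) :
      (MvPolynomial (Fin n) K ⧸ I) × (MvPolynomial (Fin m) K ⧸ J)) ∈ fiberProd πA πB := by
    show πA (Ideal.Quotient.mk I f) = πB (-(Ideal.Quotient.mk J g))
    rw [map_neg, hπA, hπB, hcf, hcg, neg_zero]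
  have key : ∀ p ∈ fiberProd πA πB,
      p * ((Ideal.Quotient.mk I f, -(Ideal.Quotient.mk J g)) :
        (MvPolynomial (Fin n) K ⧸ I) × (MvPolynomial (Fin m) K ⧸ J)) =
      (πA p.1) • ((Ideal.Quotient.mk I f, -(Ideal.Quotient.mk J g)) :
        (MvPolynomial (Fin n) K ⧸ I) × (MvPolynomial (Fin m) K ⧸ J)) := by
    rintro ⟨a, b⟩ hp
    obtain ⟨q, rfl⟩ := Ideal.Quotient.mk_surjective a
    obtain ⟨r, rfl⟩ := Ideal.Quotient.mk_surjective b
    have hab : πA (Ideal.Quotient.mk I q) = πB (Ideal.Quotient.mk J r) := hp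
    rw [hπA, hπB] at hab
    have h1 : Ideal.Quotient.mk I q * Ideal.Quotient.mk I f
        = constantCoeff q • Ideal.Quotient.mk I f := by
      rw [mySmul_mk, ← map_mul, Ideal.Quotient.eq]
      exact mySocle_mul hsocf q
    have h2 : Ideal.Quotient.mk J r * Ideal.Quotient.mk J g
        = constantCoeff q • Ideal.Quotient.mk J g := by
      rw [hab, mySmul_mk, ← map_mul, Ideal.Quotient.eq]
      exact mySocle_mul hsocg r
    refine Prod.ext ?_ ?_
    · simp only [Prod.fst_mul, Prod.smul_fst, hπA]
      exact h1
    · simp only [Prod.snd_mul, Prod.smul_snd, hπA]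
      rw [smul_neg, ← h2]
      ring
  refine ⟨hz, fun p hp => ⟨πA p.1, key p hp⟩, ?_⟩
  set L := (Ideal.map (rename (Sum.inl : Fin n → Fin n ⊕ Fin m)).toRingHom I ⊔
           Ideal.map (rename (Sum.inr : Fin m → Fin n ⊕ Fin m)).toRingHom J ⊔
           Ideal.span {p : MvPolynomial (Fin n ⊕ Fin m) K |
              ∃ i j, p = X (Sum.inl i) * X (Sum.inr j)} ⊔
           Ideal.span {rename (Sum.inl : Fin n → Fin n ⊕ Fin m) f -
              rename (Sum.inr : Fin m → Fin n ⊕ Fin m) g}) with hLdef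
  set z : ↥(fiberProd πA πB) :=
    ⟨(Ideal.Quotient.mk I f, -(Ideal.Quotient.mk J g)), hz⟩ with hzdef
  have hmem : ∀ p, myPsi0 I J p ∈ fiberProd πA πB := by
    intro p
    show πA (Ideal.Quotient.mk I (aeval (Sum.elim X 0) p))
        = πB (Ideal.Quotient.mk J (aeval (Sum.elim 0 X) p))
    rw [hπA, hπB, myConstCoeff_aeval _ (fun s => by cases s <;> simp) p,
      myConstCoeff_aeval _ (fun s => by cases s <;> simp) p]
  set ψ : MvPolynomial (Fin n ⊕ Fin m) K →ₐ[K] ↥(fiberProd πA πB) :=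
    AlgHom.codRestrict (myPsi0 I J) (fiberProd πA πB) hmem with hψdef
  have hψval : ∀ p, (ψ p : (MvPolynomial (Fin n) K ⧸ I) × (MvPolynomial (Fin m) K ⧸ J))
      = myPsi0 I J p := fun p => rfl
  set Φ : MvPolynomial (Fin n ⊕ Fin m) K →ₐ[K] quotBySpan (fiberProd πA πB) z :=
    (Ideal.Quotient.mkₐ K (Ideal.span ({z} : Set (fiberProd πA πB)))).comp ψ with hΦdef
  have hΦz : ∀ p : MvPolynomial (Fin n ⊕ Fin m) K,
      (Φ p = 0 ↔ ψ p ∈ Ideal.span ({z} : Set (fiberProd πA πB))) := by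
    intro p
    exact Ideal.Quotient.eq_zero_iff_mem
  have hψsurj : Function.Surjective ψ := by
    rintro ⟨⟨a, b⟩, hab⟩
    obtain ⟨q, rfl⟩ := Ideal.Quotient.mk_surjective a
    obtain ⟨r, rfl⟩ := Ideal.Quotient.mk_surjective b
    have hab' : constantCoeff q = constantCoeff r := by
      have h : πA (Ideal.Quotient.mk I q) = πB (Ideal.Quotient.mk J r) := hab
      rwa [hπA, hπB] at h
    refine ⟨rename Sum.inl q + rename Sum.inr r - C (constantCoeff q), ?_⟩
    apply Subtype.ext
    rw [hψval, myPsi0_apply]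
    refine Prod.ext ?_ ?_
    · show Ideal.Quotient.mk I (aeval (Sum.elim X 0)
        (rename Sum.inl q + rename Sum.inr r - C (constantCoeff q))) = Ideal.Quotient.mk I q
      rw [map_sub, map_add, myKillY_renameL, myKillY_renameR, aeval_C,
        MvPolynomial.algebraMap_eq, hab']
      congr 1
      ring
    · show Ideal.Quotient.mk J (aeval (Sum.elim 0 X)
        (rename Sum.inl q + rename Sum.inr r - C (constantCoeff q))) = Ideal.Quotient.mk J r
      rw [map_sub, map_add, myKillX_renameL, myKillX_renameR, aeval_C,
        MvPolynomial.algebraMap_eq]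
      congr 1
      ring
  have hsub1 : Ideal.map (rename (Sum.inl : Fin n → Fin n ⊕ Fin m)).toRingHom I
      ≤ RingHom.ker Φ := by
    rw [Ideal.map_le_iff_le_comap]
    intro q hq
    rw [Ideal.mem_comap, RingHom.mem_ker, hΦz]
    have hv : ψ ((rename (Sum.inl : Fin n → Fin n ⊕ Fin m)).toRingHom q) = 0 := by
      apply Subtype.ext
      rw [hψval, myPsi0_apply]
      refine Prod.ext ?_ ?_
      · show Ideal.Quotient.mk I (aeval (Sum.elim X 0) (rename Sum.inl q)) = 0
        rw [myKillY_renameL, Ideal.Quotient.eq_zero_iff_mem]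
        exact hq
      · show Ideal.Quotient.mk J (aeval (Sum.elim 0 X) (rename Sum.inl q)) = 0
        rw [myKillX_renameL, myConstCoeff_zero hIproper hIhom hq, map_zero, map_zero]
    rw [hv]
    exact Ideal.zero_mem _
  have hsub2 : Ideal.map (rename (Sum.inr : Fin m → Fin n ⊕ Fin m)).toRingHom J
      ≤ RingHom.ker Φ := by
    rw [Ideal.map_le_iff_le_comap]
    intro r hr
    rw [Ideal.mem_comap, RingHom.mem_ker, hΦz]
    have hv : ψ ((rename (Sum.inr : Fin m → Fin n ⊕ Fin m)).toRingHom r) = 0 := by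
      apply Subtype.ext
      rw [hψval, myPsi0_apply]
      refine Prod.ext ?_ ?_
      · show Ideal.Quotient.mk I (aeval (Sum.elim X 0) (rename Sum.inr r)) = 0
        rw [myKillY_renameR, myConstCoeff_zero hJproper hJhom hr, map_zero, map_zero]
      · show Ideal.Quotient.mk J (aeval (Sum.elim 0 X) (rename Sum.inr r)) = 0
        rw [myKillX_renameR, Ideal.Quotient.eq_zero_iff_mem]
        exact hr
    rw [hv]
    exact Ideal.zero_mem _
  have hsub3 : Ideal.span {p : MvPolynomial (Fin n ⊕ Fin m) K |
      ∃ i j, p = X (Sum.inl i) * X (Sum.inr j)} ≤ RingHom.ker Φ := by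
    rw [Ideal.span_le]
    rintro p ⟨i, j, rfl⟩
    rw [SetLike.mem_coe, RingHom.mem_ker, hΦz]
    have hv : ψ (X (Sum.inl i) * X (Sum.inr j)) = 0 := by
      apply Subtype.ext
      rw [hψval, myPsi0_apply]
      refine Prod.ext ?_ ?_
      · show Ideal.Quotient.mk I (aeval (Sum.elim X 0) (X (Sum.inl i) * X (Sum.inr j))) = 0
        simp
      · show Ideal.Quotient.mk J (aeval (Sum.elim 0 X) (X (Sum.inl i) * X (Sum.inr j))) = 0
        simp
    rw [hv]
    exact Ideal.zero_mem _
  have hsub4 : Ideal.span {rename (Sum.inl : Fin n → Fin n ⊕ Fin m) f -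
      rename (Sum.inr : Fin m → Fin n ⊕ Fin m) g} ≤ RingHom.ker Φ := by
    rw [Ideal.span_le]
    rintro p hp
    rw [Set.mem_singleton_iff] at hp
    subst hp
    rw [SetLike.mem_coe, RingHom.mem_ker, hΦz]
    have hv : ψ (rename Sum.inl f - rename Sum.inr g) = z := by
      apply Subtype.ext
      rw [hψval, myPsi0_apply]
      refine Prod.ext ?_ ?_
      · show Ideal.Quotient.mk I (aeval (Sum.elim X 0) (rename Sum.inl f - rename Sum.inr g))
            = Ideal.Quotient.mk I f
        rw [map_sub, myKillY_renameL, myKillY_renameR, hcg, map_zero, sub_zero]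
      · show Ideal.Quotient.mk J (aeval (Sum.elim 0 X) (rename Sum.inl f - rename Sum.inr g))
            = -(Ideal.Quotient.mk J g)
        rw [map_sub, myKillX_renameL, myKillX_renameR, hcf, map_zero, zero_sub, map_neg]
    rw [hv]
    exact Ideal.subset_span rfl
  have hsub' : RingHom.ker Φ ≤ L := by
    intro p hp
    rw [RingHom.mem_ker, hΦz] at hp
    obtain ⟨s, hs⟩ := Ideal.mem_span_singleton'.mp hp
    have hk := key s.1 s.2
    have hval : myPsi0 I J p = (πA s.1.1) • ((Ideal.Quotient.mk I f, -(Ideal.Quotient.mk J g)) :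
        (MvPolynomial (Fin n) K ⧸ I) × (MvPolynomial (Fin m) K ⧸ J)) := by
      rw [← hψval p, ← hs]
      rw [Subalgebra.coe_mul]
      exact hk
    have h1 : aeval (Sum.elim X (0 : Fin m → MvPolynomial (Fin n) K)) p
        - C (πA s.1.1) * f ∈ I := by
      rw [← Ideal.Quotient.eq]
      have h := congrArg Prod.fst hval
      rw [myPsi0_apply] at h
      simpa only [Prod.smul_fst, mySmul_mk] using h
    have h2 : aeval (Sum.elim (0 : Fin n → MvPolynomial (Fin m) K) X) p
        + C (πA s.1.1) * g ∈ J := by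
      rw [← sub_neg_eq_add, ← Ideal.Quotient.eq]
      have h := congrArg Prod.snd hval
      rw [myPsi0_apply] at h
      simpa only [Prod.smul_snd, smul_neg, mySmul_mk, map_neg] using h
    have hccp : constantCoeff p = 0 := by
      have hc1 : constantCoeff (aeval (Sum.elim X (0 : Fin m → MvPolynomial (Fin n) K)) p)
          = constantCoeff p := myConstCoeff_aeval _ (fun s => by cases s <;> simp) p
      have hu := myConstCoeff_zero hIproper hIhom h1
      rw [map_sub, map_mul, constantCoeff_C, hcf, mul_zero, sub_zero, hc1] at hu
      exact hu
    have hD := myDecomp p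
    have heq : p = rename Sum.inl (aeval (Sum.elim X 0) p - C (πA s.1.1) * f)
        + rename Sum.inr (aeval (Sum.elim 0 X) p + C (πA s.1.1) * g)
        + C (πA s.1.1) * (rename Sum.inl f - rename Sum.inr g)
        + (p - rename Sum.inl (aeval (Sum.elim X 0) p) - rename Sum.inr (aeval (Sum.elim 0 X) p)
            + C (constantCoeff p)) := by
      simp only [map_sub, map_add, map_mul, rename_C, hccp, map_zero]
      ring
    have hLe1 : Ideal.map (rename (Sum.inl : Fin n → Fin n ⊕ Fin m)).toRingHom I ≤ L := by
      rw [hLdef]; exact le_sup_of_le_left (le_sup_of_le_left le_sup_left)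
    have hLe2 : Ideal.map (rename (Sum.inr : Fin m → Fin n ⊕ Fin m)).toRingHom J ≤ L := by
      rw [hLdef]; exact le_sup_of_le_left (le_sup_of_le_left le_sup_right)
    have hLe3 : myMix K n m ≤ L := by
      rw [hLdef]; exact le_sup_of_le_left le_sup_right
    have hLe4 : Ideal.span {rename (Sum.inl : Fin n → Fin n ⊕ Fin m) f -
        rename (Sum.inr : Fin m → Fin n ⊕ Fin m) g} ≤ L := by
      rw [hLdef]; exact le_sup_right
    rw [heq]
    refine Ideal.add_mem _ (Ideal.add_mem _ (Ideal.add_mem _ ?_ ?_) ?_) ?_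
    · exact hLe1 (Ideal.mem_map_of_mem _ h1)
    · exact hLe2 (Ideal.mem_map_of_mem _ h2)
    · exact hLe4 (Ideal.mul_mem_left _ _ (Ideal.subset_span rfl))
    · exact hLe3 hD
  have hker : RingHom.ker Φ = L := by
    refine le_antisymm hsub' ?_
    rw [hLdef]
    exact sup_le (sup_le (sup_le hsub1 hsub2) hsub3) hsub4
  have hΦsurj : Function.Surjective Φ :=
    (Ideal.Quotient.mkₐ_surjective K
      (I := Ideal.span ({z} : Set (fiberProd πA πB)))).comp hψsurj
  exact ⟨((Ideal.quotientKerAlgEquivOfSurjective hΦsurj).symm.trans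
    (Ideal.quotientEquivAlgOfEq K hker))⟩
end

section
/- Let K be a field, I ⊂ R = K[x_1,…,x_n] and J ⊂ S = K[y_1,…,y_m] proper monomial ideals such that A = R/I and B = S/J are Artinian and each monomial poset M_A, M_B has a unique maximal element, say m_A = f + I and m_B = g + J with f, g monomials of the same total degree. Then the monomial poset of the connected sum A #_K B, i.e. of the ring T / (I·T + J·T + (x_i y_j : 1 ≤ i ≤ n, 1 ≤ j ≤ m) + (f − g)) with T = K[x_1,…,x_n,y_1,…,y_m], is isomorphic as a poset to the closed product M_A ◇ M_B. -/
open MvPolynomial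

/-- The setoid on `α ⊕ β` generated by identifying the least elements `ℓA, ℓB`
with each other and the greatest elements `LA, LB` with each other. -/
def closedSetoid {α β : Type*} (ℓA LA : α) (ℓB LB : β) : Setoid (α ⊕ β) :=
  Relation.EqvGen.setoid fun x y =>
    (x = Sum.inl ℓA ∧ y = Sum.inr ℓB) ∨ (x = Sum.inl LA ∧ y = Sum.inr LB)

/-- The closed product of two posets with least elements `ℓA, ℓB` and greatest
elements `LA, LB`: the disjoint union with the least elements identified and the
greatest elements identified. -/
def ClosedProd {α β : Type*} (ℓA LA : α) (ℓB LB : β) : Type _ :=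
  Quotient (closedSetoid ℓA LA ℓB LB)

/-- The order on the closed product: `x ≤ y` iff they admit representatives in the
same component which are comparable there. -/
def closedLE {α β : Type*} (rA : α → α → Prop) (rB : β → β → Prop)
    (ℓA LA : α) (ℓB LB : β) (x y : ClosedProd ℓA LA ℓB LB) : Prop :=
  ∃ u v : α ⊕ β, x = Quotient.mk (closedSetoid ℓA LA ℓB LB) u ∧
    y = Quotient.mk (closedSetoid ℓA LA ℓB LB) v ∧ Sum.LiftRel rA rB u v



set_option linter.unusedSectionVars false
namespace CSAux

variable {K : Type*} [Field K] {σ τ : Type*} [DecidableEq σ] [DecidableEq τ]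

/-- embed a left exponent -/
noncomputable def El (s : σ →₀ ℕ) : (σ ⊕ τ) →₀ ℕ := s.mapDomain Sum.inl
/-- embed a right exponent -/
noncomputable def Er (t : τ →₀ ℕ) : (σ ⊕ τ) →₀ ℕ := t.mapDomain Sum.inr
/-- left part of an exponent -/
noncomputable def pL (a : (σ ⊕ τ) →₀ ℕ) : σ →₀ ℕ :=
  a.comapDomain Sum.inl Sum.inl_injective.injOn
noncomputable def pR (a : (σ ⊕ τ) →₀ ℕ) : τ →₀ ℕ :=
  a.comapDomain Sum.inr Sum.inr_injective.injOn

@[simp] lemma pL_apply (a : (σ ⊕ τ) →₀ ℕ) (i : σ) : pL a i = a (Sum.inl i) := rfl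
@[simp] lemma pR_apply (a : (σ ⊕ τ) →₀ ℕ) (j : τ) : pR a j = a (Sum.inr j) := rfl
@[simp] lemma El_inl (s : σ →₀ ℕ) (i : σ) : (El (τ := τ) s) (Sum.inl i) = s i :=
  Finsupp.mapDomain_apply Sum.inl_injective s i
@[simp] lemma El_inr (s : σ →₀ ℕ) (j : τ) : (El (τ := τ) s) (Sum.inr j) = 0 :=
  Finsupp.mapDomain_notin_range s _ (by simp)
@[simp] lemma Er_inr (t : τ →₀ ℕ) (j : τ) : (Er (σ := σ) t) (Sum.inr j) = t j :=
  Finsupp.mapDomain_apply Sum.inr_injective t j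
@[simp] lemma Er_inl (t : τ →₀ ℕ) (i : σ) : (Er (σ := σ) t) (Sum.inl i) = 0 :=
  Finsupp.mapDomain_notin_range t _ (by simp)

@[simp] lemma pL_El (s : σ →₀ ℕ) : pL (El (τ := τ) s) = s := by ext i; simp
@[simp] lemma pR_El (s : σ →₀ ℕ) : pR (El (τ := τ) s) = 0 := by ext j; simp
@[simp] lemma pR_Er (t : τ →₀ ℕ) : pR (Er (σ := σ) t) = t := by ext j; simp
@[simp] lemma pL_Er (t : τ →₀ ℕ) : pL (Er (σ := σ) t) = 0 := by ext i; simp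

@[simp] lemma mapDomain_inl_eq_El (s : σ →₀ ℕ) :
  Finsupp.mapDomain (Sum.inl : σ → σ ⊕ τ) s = El s := rfl
@[simp] lemma mapDomain_inr_eq_Er (t : τ →₀ ℕ) :
  Finsupp.mapDomain (Sum.inr : τ → σ ⊕ τ) t = Er t := rfl

lemma decomp (a : (σ ⊕ τ) →₀ ℕ) : a = El (pL a) + Er (pR a) := by
  ext z; rcases z with i | j <;> simp

lemma pL_add (a b : (σ ⊕ τ) →₀ ℕ) : pL (a + b) = pL a + pL b := by ext i; simp
lemma pR_add (a b : (σ ⊕ τ) →₀ ℕ) : pR (a + b) = pR a + pR b := by ext j; simp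

lemma El_injective : Function.Injective (El (σ := σ) (τ := τ)) :=
  Finsupp.mapDomain_injective Sum.inl_injective
lemma Er_injective : Function.Injective (Er (σ := σ) (τ := τ)) :=
  Finsupp.mapDomain_injective Sum.inr_injective

lemma El_add (s s' : σ →₀ ℕ) : El (τ := τ) (s + s') = El s + El s' :=
  Finsupp.mapDomain_add
lemma Er_add (t t' : τ →₀ ℕ) : Er (σ := σ) (t + t') = Er t + Er t' :=
  Finsupp.mapDomain_add

@[simp] lemma El_zero : El (σ := σ) (τ := τ) 0 = 0 := Finsupp.mapDomain_zero
@[simp] lemma Er_zero : Er (σ := σ) (τ := τ) 0 = 0 := Finsupp.mapDomain_zero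

lemma El_eq_zero_iff {s : σ →₀ ℕ} : El (τ := τ) s = 0 ↔ s = 0 := by
  constructor
  · intro h; ext i; have := DFunLike.congr_fun h (Sum.inl i); simpa using this
  · rintro rfl; simp
lemma Er_eq_zero_iff {t : τ →₀ ℕ} : Er (σ := σ) t = 0 ↔ t = 0 := by
  constructor
  · intro h; ext j; have := DFunLike.congr_fun h (Sum.inr j); simpa using this
  · rintro rfl; simp

lemma El_eq_Er_iff {s : σ →₀ ℕ} {t : τ →₀ ℕ} : El s = Er t ↔ s = 0 ∧ t = 0 := by
  constructor
  · intro h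
    constructor
    · ext i; have := DFunLike.congr_fun h (Sum.inl i); simpa using this
    · ext j; have := DFunLike.congr_fun h (Sum.inr j); simpa using this.symm
  · rintro ⟨rfl, rfl⟩; simp

lemma eq_El_of_pure {a : (σ ⊕ τ) →₀ ℕ} (h : ∀ j, a (Sum.inr j) = 0) : a = El (pL a) := by
  ext z; rcases z with i | j <;> simp [h]
lemma eq_Er_of_pure {a : (σ ⊕ τ) →₀ ℕ} (h : ∀ i, a (Sum.inl i) = 0) : a = Er (pR a) := by
  ext z; rcases z with i | j <;> simp [h]

/-- The "bad" exponents: those whose monomials lie in the connected-sum ideal for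
monomial reasons. -/
def Bad (I : Ideal (MvPolynomial σ K)) (J : Ideal (MvPolynomial τ K))
    (a : (σ ⊕ τ) →₀ ℕ) : Prop :=
  ((∃ i, a (Sum.inl i) ≠ 0) ∧ (∃ j, a (Sum.inr j) ≠ 0)) ∨
    monomial (pL a) (1 : K) ∈ I ∨ monomial (pR a) (1 : K) ∈ J

variable {I : Ideal (MvPolynomial σ K)} {J : Ideal (MvPolynomial τ K)}

lemma Bad_add {a : (σ ⊕ τ) →₀ ℕ} (b : (σ ⊕ τ) →₀ ℕ) (h : Bad I J a) : Bad I J (a + b) := by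
  rcases h with ⟨⟨i, hi⟩, ⟨j, hj⟩⟩ | h | h
  · exact Or.inl ⟨⟨i, by simp [Finsupp.add_apply]; omega⟩, ⟨j, by simp [Finsupp.add_apply]; omega⟩⟩
  · refine Or.inr (Or.inl ?_)
    rw [pL_add, ← one_mul (1 : K), ← monomial_mul]
    exact Ideal.mul_mem_right _ _ h
  · refine Or.inr (Or.inr ?_)
    rw [pR_add, ← one_mul (1 : K), ← monomial_mul]
    exact Ideal.mul_mem_right _ _ h

/-- The ideal of polynomials supported on bad exponents. -/
def BadIdeal (I : Ideal (MvPolynomial σ K)) (J : Ideal (MvPolynomial τ K)) :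
    Ideal (MvPolynomial (σ ⊕ τ) K) where
  carrier := {p | ∀ a, coeff a p ≠ 0 → Bad I J a}
  add_mem' := by
    intro x y hx hy a ha
    rw [coeff_add] at ha
    by_cases h : coeff a x ≠ 0
    · exact hx a h
    · push_neg at h; rw [h, zero_add] at ha; exact hy a ha
  zero_mem' := by intro a ha; simp at ha
  smul_mem' := by
    intro c x hx a ha
    rw [smul_eq_mul, coeff_mul] at ha
    obtain ⟨⟨u, v⟩, huv, hne⟩ := Finset.exists_ne_zero_of_sum_ne_zero ha
    have hv : coeff v x ≠ 0 := fun h => hne (by simp [h])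
    have : u + v = a := Finset.HasAntidiagonal.mem_antidiagonal.mp huv
    rw [← this, add_comm]
    exact Bad_add u (hx v hv)

lemma mem_BadIdeal {p : MvPolynomial (σ ⊕ τ) K} :
    p ∈ BadIdeal I J ↔ ∀ a, coeff a p ≠ 0 → Bad I J a := Iff.rfl

lemma monomial_mem_BadIdeal {d : (σ ⊕ τ) →₀ ℕ} {c : K} (h : Bad I J d) :
    monomial d c ∈ BadIdeal I J := by
  intro a ha
  rw [coeff_monomial] at ha
  split_ifs at ha with hda
  · exact hda ▸ h
  · exact absurd rfl ha

lemma Bad_El_iff (h1J : (1 : MvPolynomial τ K) ∉ J) {s : σ →₀ ℕ} :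
    Bad I J (El s) ↔ monomial s (1 : K) ∈ I := by
  constructor
  · rintro (⟨_, ⟨j, hj⟩⟩ | h | h)
    · simp at hj
    · simpa using h
    · rw [pR_El] at h; simp [monomial_zero'] at h; exact absurd h h1J
  · intro h; exact Or.inr (Or.inl (by simpa using h))

lemma Bad_Er_iff (h1I : (1 : MvPolynomial σ K) ∉ I) {t : τ →₀ ℕ} :
    Bad I J (Er t) ↔ monomial t (1 : K) ∈ J := by
  constructor
  · rintro (⟨⟨i, hi⟩, _⟩ | h | h)
    · simp at hi
    · rw [pL_Er] at h; simp [monomial_zero'] at h; exact absurd h h1I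
    · simpa using h
  · intro h; exact Or.inr (Or.inr (by simpa using h))



/-- All hypotheses needed for the connected-sum computation. -/
structure CSetup (I : Ideal (MvPolynomial σ K)) (J : Ideal (MvPolynomial τ K))
    (af : σ →₀ ℕ) (ag : τ →₀ ℕ) (Q : Ideal (MvPolynomial (σ ⊕ τ) K)) : Prop where
  h1I : (1 : MvPolynomial σ K) ∉ I
  h1J : (1 : MvPolynomial τ K) ∉ J
  hIm : IsMonomialIdeal I
  hJm : IsMonomialIdeal J
  hfI : monomial af (1 : K) ∉ I
  hgJ : monomial ag (1 : K) ∉ J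
  hsocI : ∀ i, monomial (af + Finsupp.single i 1) (1 : K) ∈ I
  hsocJ : ∀ j, monomial (ag + Finsupp.single j 1) (1 : K) ∈ J
  hioz : af = 0 ↔ ag = 0
  hQ : Q = Ideal.map (rename (Sum.inl : σ → σ ⊕ τ)).toRingHom I ⊔
        Ideal.map (rename (Sum.inr : τ → σ ⊕ τ)).toRingHom J ⊔
        Ideal.span {p : MvPolynomial (σ ⊕ τ) K |
          ∃ i j, p = X (Sum.inl i) * X (Sum.inr j)} ⊔
        Ideal.span {rename (Sum.inl : σ → σ ⊕ τ) (monomial af (1 : K)) -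
          rename (Sum.inr : τ → σ ⊕ τ) (monomial ag (1 : K))}

variable {af : σ →₀ ℕ} {ag : τ →₀ ℕ} {Q : Ideal (MvPolynomial (σ ⊕ τ) K)}

lemma rename_mono_l (s : σ →₀ ℕ) (c : K) :
    rename (Sum.inl : σ → σ ⊕ τ) (monomial s c) = monomial (El s) c :=
  rename_monomial _ _ _
lemma rename_mono_r (t : τ →₀ ℕ) (c : K) :
    rename (Sum.inr : τ → σ ⊕ τ) (monomial t c) = monomial (Er t) c :=
  rename_monomial _ _ _

lemma memQ_bad (S : CSetup I J af ag Q) {a : (σ ⊕ τ) →₀ ℕ} (h : Bad I J a) :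
    monomial a (1 : K) ∈ Q := by
  rw [S.hQ]
  rcases h with ⟨⟨i, hi⟩, ⟨j, hj⟩⟩ | h | h
  · apply Submodule.mem_sup_left; apply Submodule.mem_sup_right
    have hle : Finsupp.single (Sum.inl i) 1 + Finsupp.single (Sum.inr j) 1 ≤ a := by
      intro z
      rcases z with i' | j' <;>
        simp [Finsupp.add_apply, Finsupp.single_apply, Sum.inl.injEq, Sum.inr.injEq]
      · split_ifs with hii
        · subst hii; omega
        · omega
      · split_ifs with hjj
        · subst hjj; omega
        · omega
    have hX : (X (Sum.inl i) * X (Sum.inr j) : MvPolynomial (σ ⊕ τ) K) =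
        monomial (Finsupp.single (Sum.inl i) 1 + Finsupp.single (Sum.inr j) 1) 1 := by
      rw [X, X, monomial_mul, one_mul]
    have : monomial a (1 : K) = (X (Sum.inl i) * X (Sum.inr j)) *
        monomial (a - (Finsupp.single (Sum.inl i) 1 + Finsupp.single (Sum.inr j) 1)) 1 := by
      rw [hX, monomial_mul, one_mul, add_tsub_cancel_of_le hle]
    rw [this]
    exact Ideal.mul_mem_right _ _ (Ideal.subset_span ⟨i, j, rfl⟩)
  · apply Submodule.mem_sup_left; apply Submodule.mem_sup_left; apply Submodule.mem_sup_left
    have : monomial a (1 : K) =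
        (rename (Sum.inl : σ → σ ⊕ τ)) (monomial (pL a) 1) * monomial (Er (pR a)) 1 := by
      rw [rename_mono_l, monomial_mul, one_mul, ← decomp]
    rw [this]
    exact Ideal.mul_mem_right _ _ (Ideal.mem_map_of_mem _ h)
  · apply Submodule.mem_sup_left; apply Submodule.mem_sup_left; apply Submodule.mem_sup_right
    have : monomial a (1 : K) =
        (rename (Sum.inr : τ → σ ⊕ τ)) (monomial (pR a) 1) * monomial (El (pL a)) 1 := by
      rw [rename_mono_r, monomial_mul, one_mul, add_comm, ← decomp]
    rw [this]
    exact Ideal.mul_mem_right _ _ (Ideal.mem_map_of_mem _ h)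

lemma memQ_FG (S : CSetup I J af ag Q) :
    monomial (El af) (1 : K) - monomial (Er ag) 1 ∈ Q := by
  rw [S.hQ]
  apply Submodule.mem_sup_right
  rw [← rename_mono_l, ← rename_mono_r]
  exact Ideal.subset_span rfl

lemma socle (S : CSetup I J af ag Q) (haf : af ≠ 0) (hag : ag ≠ 0)
    (t : MvPolynomial (σ ⊕ τ) K) (ht : coeff 0 t = 0) :
    (monomial (El af) (1 : K) - monomial (Er ag) 1) * t ∈ BadIdeal I J := by
  have hts : (monomial (El af) (1 : K) - monomial (Er ag) 1) * t =
      ∑ v ∈ t.support, (monomial (El af) (1 : K) - monomial (Er ag) 1) *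
        monomial v (coeff v t) := by
    rw [← Finset.mul_sum, ← as_sum]
  rw [hts]
  apply Ideal.sum_mem
  intro v hv
  have hv0 : v ≠ 0 := by
    rintro rfl
    exact (mem_support_iff.mp hv) ht
  rw [sub_mul, monomial_mul, monomial_mul, one_mul]
  obtain ⟨z, hz⟩ := Finsupp.ne_iff.mp hv0
  simp only [Finsupp.coe_zero, Pi.zero_apply] at hz
  apply Ideal.sub_mem
  · apply monomial_mem_BadIdeal
    rcases z with i | j
    · refine Or.inr (Or.inl ?_)
      rw [pL_add, pL_El]
      have h1 : Finsupp.single i 1 ≤ pL v := by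
        rw [Finsupp.single_le_iff, pL_apply]; omega
      have : monomial (af + pL v) (1 : K) =
          monomial (af + Finsupp.single i 1) 1 * monomial (pL v - Finsupp.single i 1) 1 := by
        rw [monomial_mul, one_mul, add_assoc, add_tsub_cancel_of_le h1]
      rw [this]
      exact Ideal.mul_mem_right _ _ (S.hsocI i)
    · obtain ⟨i0, hi0⟩ := Finsupp.ne_iff.mp haf
      simp only [Finsupp.coe_zero, Pi.zero_apply] at hi0
      refine Or.inl ⟨⟨i0, ?_⟩, ⟨j, ?_⟩⟩
      · simp only [Finsupp.add_apply, El_inl]; omega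
      · simp only [Finsupp.add_apply, El_inr]; omega
  · apply monomial_mem_BadIdeal
    rcases z with i | j
    · obtain ⟨j0, hj0⟩ := Finsupp.ne_iff.mp hag
      simp only [Finsupp.coe_zero, Pi.zero_apply] at hj0
      refine Or.inl ⟨⟨i, ?_⟩, ⟨j0, ?_⟩⟩
      · simp only [Finsupp.add_apply, Er_inl]; omega
      · simp only [Finsupp.add_apply, Er_inr]; omega
    · refine Or.inr (Or.inr ?_)
      rw [pR_add, pR_Er]
      have h1 : Finsupp.single j 1 ≤ pR v := by
        rw [Finsupp.single_le_iff, pR_apply]; omega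
      have : monomial (ag + pR v) (1 : K) =
          monomial (ag + Finsupp.single j 1) 1 * monomial (pR v - Finsupp.single j 1) 1 := by
        rw [monomial_mul, one_mul, add_assoc, add_tsub_cancel_of_le h1]
      rw [this]
      exact Ideal.mul_mem_right _ _ (S.hsocJ j)

lemma rep (S : CSetup I J af ag Q) {q : MvPolynomial (σ ⊕ τ) K} (hq : q ∈ Q) :
    ∃ c : K, (ag = 0 → c = 0) ∧
      q - c • (monomial (El af) (1 : K) - monomial (Er ag) 1) ∈ BadIdeal I J := by
  have hQle : Q ≤ BadIdeal I J ⊔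
      Ideal.span {monomial (El af) (1 : K) - monomial (Er ag) 1} := by
    rw [S.hQ]
    refine sup_le (sup_le (sup_le ?_ ?_) ?_) ?_
    · rw [Ideal.map_le_iff_le_comap]
      intro p hp
      apply Submodule.mem_sup_left
      intro a ha
      obtain ⟨u, hu, hcu⟩ := coeff_rename_ne_zero _ _ _ ha
      rw [← hu]
      exact Or.inr (Or.inl (by simpa using S.hIm p hp u (mem_support_iff.mpr hcu)))
    · rw [Ideal.map_le_iff_le_comap]
      intro p hp
      apply Submodule.mem_sup_left
      intro a ha
      obtain ⟨u, hu, hcu⟩ := coeff_rename_ne_zero _ _ _ ha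
      rw [← hu]
      exact Or.inr (Or.inr (by simpa using S.hJm p hp u (mem_support_iff.mpr hcu)))
    · rw [Ideal.span_le]
      rintro p ⟨i, j, rfl⟩
      apply Submodule.mem_sup_left
      intro a ha
      have hX : (X (Sum.inl i) * X (Sum.inr j) : MvPolynomial (σ ⊕ τ) K) =
          monomial (Finsupp.single (Sum.inl i) 1 + Finsupp.single (Sum.inr j) 1) 1 := by
        rw [X, X, monomial_mul, one_mul]
      rw [hX, coeff_monomial] at ha
      split_ifs at ha with h
      · rw [← h]
        refine Or.inl ⟨⟨i, ?_⟩, ⟨j, ?_⟩⟩ <;>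
          simp [Finsupp.add_apply, Finsupp.single_apply]
      · exact absurd rfl ha
    · rw [Ideal.span_le, Set.singleton_subset_iff]
      apply Submodule.mem_sup_right
      rw [rename_mono_l, rename_mono_r]
      exact Ideal.subset_span rfl
  obtain ⟨p, hp, r, hr, hpr⟩ := Submodule.mem_sup.mp (hQle hq)
  obtain ⟨t, rfl⟩ := Ideal.mem_span_singleton.mp hr
  by_cases hag : ag = 0
  · have haf : af = 0 := S.hioz.mpr hag
    have hFG : monomial (El af) (1 : K) - monomial (Er ag) 1 = 0 := by
      rw [haf, hag]; simp
    refine ⟨0, fun _ => rfl, ?_⟩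
    rw [zero_smul, sub_zero, ← hpr, hFG, zero_mul, add_zero]
    exact hp
  · have haf : af ≠ 0 := fun h => hag (S.hioz.mp h)
    refine ⟨constantCoeff t, fun h => absurd h hag, ?_⟩
    have hsoc : (monomial (El af) (1 : K) - monomial (Er ag) 1) *
        (t - C (constantCoeff t)) ∈ BadIdeal I J := by
      apply socle S haf hag
      simp [coeff_sub, constantCoeff_eq]
    have hrw : q - constantCoeff t • (monomial (El af) (1 : K) - monomial (Er ag) 1) =
        p + (monomial (El af) (1 : K) - monomial (Er ag) 1) * (t - C (constantCoeff t)) := by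
      rw [← hpr, smul_eq_C_mul]; ring
    rw [hrw]
    exact Ideal.add_mem _ hp hsoc

lemma rep_coeff (S : CSetup I J af ag Q) {q : MvPolynomial (σ ⊕ τ) K} (hq : q ∈ Q) :
    ∃ c : K, (ag = 0 → c = 0) ∧ ∀ a, ¬ Bad I J a →
      coeff a q = c * ((if El af = a then (1 : K) else 0) - (if Er ag = a then 1 else 0)) := by
  obtain ⟨c, hc0, hP⟩ := rep S hq
  refine ⟨c, hc0, fun a ha => ?_⟩
  have h0 : coeff a (q - c • (monomial (El af) (1 : K) - monomial (Er ag) 1)) = 0 := by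
    by_contra h
    exact ha (hP a h)
  rw [coeff_sub, coeff_smul, coeff_sub, coeff_monomial, coeff_monomial, sub_eq_zero] at h0
  simpa using h0

lemma rep0 (S : CSetup I J af ag Q) {q : MvPolynomial (σ ⊕ τ) K} (hq : q ∈ Q)
    (h : ag ≠ 0 → coeff (Er ag) q = 0) :
    ∀ a, ¬ Bad I J a → coeff a q = 0 := by
  obtain ⟨c, hc0, hco⟩ := rep_coeff S hq
  have hc : c = 0 := by
    by_cases hag : ag = 0
    · exact hc0 hag
    · have hEg : ¬ Bad I J (Er ag) := fun hb => S.hgJ ((Bad_Er_iff S.h1I).mp hb)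
      have h2 := hco (Er ag) hEg
      have hne : El (τ := τ) af ≠ Er ag := fun he => hag (El_eq_Er_iff.mp he).2
      rw [h hag, if_neg hne, if_pos rfl] at h2
      have : (0 : K) = -c := by rw [h2]; ring
      simpa using this.symm
  intro a ha
  rw [hco a ha, hc, zero_mul]

lemma rep0' (S : CSetup I J af ag Q) {q : MvPolynomial (σ ⊕ τ) K} (hq : q ∈ Q)
    (h : af ≠ 0 → coeff (El af) q = 0) :
    ∀ a, ¬ Bad I J a → coeff a q = 0 := by
  obtain ⟨c, hc0, hco⟩ := rep_coeff S hq
  have hc : c = 0 := by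
    by_cases hag : ag = 0
    · exact hc0 hag
    · have haf : af ≠ 0 := fun h0 => hag (S.hioz.mp h0)
      have hEf : ¬ Bad I J (El af) := fun hb => S.hfI ((Bad_El_iff S.h1J).mp hb)
      have h2 := hco (El af) hEf
      have hne : Er (σ := σ) ag ≠ El af := fun he => haf (El_eq_Er_iff.mp he.symm).1
      rw [h haf, if_neg hne, if_pos rfl, sub_zero, mul_one] at h2
      exact h2.symm
  intro a ha
  rw [hco a ha, hc, zero_mul]

lemma L1 (S : CSetup I J af ag Q) {s : σ →₀ ℕ} :
    rename (Sum.inl : σ → σ ⊕ τ) (monomial s (1 : K)) ∈ Q ↔ monomial s (1 : K) ∈ I := by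
  rw [rename_mono_l]
  constructor
  · intro hq
    by_contra hsI
    have h0 := rep0 S hq (fun hag => by
      rw [coeff_monomial, if_neg (fun he : El s = Er ag => hag (El_eq_Er_iff.mp he).2)])
      (El s) (fun hb => hsI ((Bad_El_iff S.h1J).mp hb))
    rw [coeff_monomial, if_pos rfl] at h0
    exact one_ne_zero h0
  · intro h
    exact memQ_bad S ((Bad_El_iff S.h1J).mpr h)

lemma L1' (S : CSetup I J af ag Q) {t : τ →₀ ℕ} :
    rename (Sum.inr : τ → σ ⊕ τ) (monomial t (1 : K)) ∈ Q ↔ monomial t (1 : K) ∈ J := by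
  rw [rename_mono_r]
  constructor
  · intro hq
    by_contra htJ
    have h0 := rep0' S hq (fun haf => by
      rw [coeff_monomial, if_neg (fun he : Er t = El af => haf (El_eq_Er_iff.mp he.symm).1)])
      (Er t) (fun hb => htJ ((Bad_Er_iff S.h1I).mp hb))
    rw [coeff_monomial, if_pos rfl] at h0
    exact one_ne_zero h0
  · intro h
    exact memQ_bad S ((Bad_Er_iff S.h1I).mpr h)

lemma L2 (S : CSetup I J af ag Q) {s t : σ →₀ ℕ}
    (h : Ideal.Quotient.mk Q (rename (Sum.inl : σ → σ ⊕ τ) (monomial s (1 : K))) =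
      Ideal.Quotient.mk Q (rename (Sum.inl : σ → σ ⊕ τ) (monomial t (1 : K)))) :
    Ideal.Quotient.mk I (monomial s (1 : K)) = Ideal.Quotient.mk I (monomial t (1 : K)) := by
  by_cases hst : s = t
  · rw [hst]
  have hmem : monomial (El s) (1 : K) - monomial (El t) 1 ∈ Q := by
    rw [← rename_mono_l, ← rename_mono_l]
    exact Ideal.Quotient.eq.mp h
  have h0 := rep0 S hmem (fun hag => by
    rw [coeff_sub, coeff_monomial, coeff_monomial,
      if_neg (fun he : El s = Er ag => hag (El_eq_Er_iff.mp he).2),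
      if_neg (fun he : El t = Er ag => hag (El_eq_Er_iff.mp he).2), sub_zero])
  have hsI : monomial s (1 : K) ∈ I := by
    by_contra hsI
    have := h0 (El s) (fun hb => hsI ((Bad_El_iff S.h1J).mp hb))
    rw [coeff_sub, coeff_monomial, coeff_monomial, if_pos rfl,
      if_neg (fun he : El t = El s => hst (El_injective he).symm), sub_zero] at this
    exact one_ne_zero this
  have htI : monomial t (1 : K) ∈ I := by
    by_contra htI
    have := h0 (El t) (fun hb => htI ((Bad_El_iff S.h1J).mp hb))
    rw [coeff_sub, coeff_monomial, coeff_monomial, if_pos rfl,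
      if_neg (fun he : El s = El t => hst (El_injective he)), zero_sub] at this
    simpa using this
  rw [Ideal.Quotient.eq]
  exact I.sub_mem hsI htI

lemma L2' (S : CSetup I J af ag Q) {s t : τ →₀ ℕ}
    (h : Ideal.Quotient.mk Q (rename (Sum.inr : τ → σ ⊕ τ) (monomial s (1 : K))) =
      Ideal.Quotient.mk Q (rename (Sum.inr : τ → σ ⊕ τ) (monomial t (1 : K)))) :
    Ideal.Quotient.mk J (monomial s (1 : K)) = Ideal.Quotient.mk J (monomial t (1 : K)) := by
  by_cases hst : s = t
  · rw [hst]
  have hmem : monomial (Er s) (1 : K) - monomial (Er t) 1 ∈ Q := by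
    rw [← rename_mono_r, ← rename_mono_r]
    exact Ideal.Quotient.eq.mp h
  have h0 := rep0' S hmem (fun haf => by
    rw [coeff_sub, coeff_monomial, coeff_monomial,
      if_neg (fun he : Er s = El af => haf (El_eq_Er_iff.mp he.symm).1),
      if_neg (fun he : Er t = El af => haf (El_eq_Er_iff.mp he.symm).1), sub_zero])
  have hsJ : monomial s (1 : K) ∈ J := by
    by_contra hsJ
    have := h0 (Er s) (fun hb => hsJ ((Bad_Er_iff S.h1I).mp hb))
    rw [coeff_sub, coeff_monomial, coeff_monomial, if_pos rfl,
      if_neg (fun he : Er t = Er s => hst (Er_injective he).symm), sub_zero] at this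
    exact one_ne_zero this
  have htJ : monomial t (1 : K) ∈ J := by
    by_contra htJ
    have := h0 (Er t) (fun hb => htJ ((Bad_Er_iff S.h1I).mp hb))
    rw [coeff_sub, coeff_monomial, coeff_monomial, if_pos rfl,
      if_neg (fun he : Er s = Er t => hst (Er_injective he)), zero_sub] at this
    simpa using this
  rw [Ideal.Quotient.eq]
  exact J.sub_mem hsJ htJ

lemma L3 (S : CSetup I J af ag Q) {s : σ →₀ ℕ} {t : τ →₀ ℕ}
    (hsI : monomial s (1 : K) ∉ I) (htJ : monomial t (1 : K) ∉ J)
    (h : Ideal.Quotient.mk Q (rename (Sum.inl : σ → σ ⊕ τ) (monomial s (1 : K))) =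
      Ideal.Quotient.mk Q (rename (Sum.inr : τ → σ ⊕ τ) (monomial t (1 : K)))) :
    (s = 0 ∧ t = 0) ∨ (s = af ∧ t = ag) := by
  have hmem : monomial (El s) (1 : K) - monomial (Er t) 1 ∈ Q := by
    rw [← rename_mono_l, ← rename_mono_r]
    exact Ideal.Quotient.eq.mp h
  by_cases hE : El (τ := τ) s = Er t
  · exact Or.inl (El_eq_Er_iff.mp hE)
  obtain ⟨c, hc0, hco⟩ := rep_coeff S hmem
  have hnBs : ¬ Bad I J (El s) := fun hb => hsI ((Bad_El_iff S.h1J).mp hb)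
  have hnBt : ¬ Bad I J (Er t) := fun hb => htJ ((Bad_Er_iff S.h1I).mp hb)
  have h1 := hco (El s) hnBs
  rw [coeff_sub, coeff_monomial, coeff_monomial, if_pos rfl,
    if_neg (fun he : Er t = El s => hE he.symm), sub_zero] at h1
  have hag : ag ≠ 0 := by
    intro hag
    rw [hc0 hag, zero_mul] at h1
    exact one_ne_zero h1
  have haf : af ≠ 0 := fun h0 => hag (S.hioz.mp h0)
  rw [if_neg (fun he : Er ag = El s => hag (El_eq_Er_iff.mp he.symm).2), sub_zero] at h1
  have hEaf : El (τ := τ) af = El s := by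
    by_contra hne
    rw [if_neg hne, mul_zero] at h1
    exact one_ne_zero h1
  rw [if_pos hEaf, mul_one] at h1
  have h2 := hco (Er t) hnBt
  rw [coeff_sub, coeff_monomial, coeff_monomial, if_neg hE, if_pos rfl, zero_sub,
    if_neg (fun he : El af = Er t => haf (El_eq_Er_iff.mp he).1), ← h1, zero_sub] at h2
  have hgt : Er (σ := σ) ag = Er t := by
    by_contra hne
    rw [if_neg hne] at h2
    simpa using h2
  exact Or.inr ⟨(El_injective hEaf).symm, (Er_injective hgt).symm⟩

lemma finsupp_sum_eq_zero {α : Type*} {f : α →₀ ℕ} (h : (f.sum fun _ k => k) = 0) :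
    f = 0 := by
  ext a
  by_cases ha : a ∈ f.support
  · exact (Finset.sum_eq_zero_iff.mp h) a ha
  · simpa using Finsupp.notMem_support_iff.mp ha

/-- The bottom element divides everything. -/
lemma oneDvd {ρ : Type*} {L : Ideal (MvPolynomial ρ K)} {c d : MonPoset L}
    (hc : c.1 = Ideal.Quotient.mk L 1) : monDvd L c d :=
  ⟨d.1, d.2, by rw [hc, map_one, one_mul]⟩

lemma maxstep {ρ : Type*} [DecidableEq ρ] {L : Ideal (MvPolynomial ρ K)} {a0 : ρ →₀ ℕ} {mA : MonPoset L}
    (hIm : IsMonomialIdeal L) (hmax : ∀ c : MonPoset L, monDvd L mA c → c = mA)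
    (hmA : mA.1 = Ideal.Quotient.mk L (monomial a0 (1 : K)))
    (hfI : monomial a0 (1 : K) ∉ L) :
    ∀ i, monomial (a0 + Finsupp.single i 1) (1 : K) ∈ L := by
  intro i
  by_contra hni
  have hXi : monomial (Finsupp.single i 1) (1 : K) ∉ L := fun h => hni (by
    have he : monomial (a0 + Finsupp.single i 1) (1 : K) =
        monomial a0 1 * monomial (Finsupp.single i 1) 1 := by
      rw [monomial_mul, one_mul]
    rw [he]
    exact L.mul_mem_left _ h)
  set c : MonPoset L := ⟨Ideal.Quotient.mk L (monomial (a0 + Finsupp.single i 1) (1 : K)), by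
    refine ⟨?_, _, rfl⟩
    rw [Ne, Ideal.Quotient.eq_zero_iff_mem]
    exact hni⟩ with hc
  have hd : monDvd L mA c := by
    refine ⟨Ideal.Quotient.mk L (monomial (Finsupp.single i 1) (1 : K)), ⟨?_, _, rfl⟩, ?_⟩
    · rw [Ne, Ideal.Quotient.eq_zero_iff_mem]
      exact hXi
    · rw [hmA, ← map_mul, monomial_mul, one_mul]
  have hceq : c = mA := hmax c hd
  have h5 : Ideal.Quotient.mk L (monomial (a0 + Finsupp.single i 1) (1 : K)) =
      Ideal.Quotient.mk L (monomial a0 1) := by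
    rw [← hmA, ← hceq]
  have hsub : monomial (a0 + Finsupp.single i 1) (1 : K) - monomial a0 1 ∈ L :=
    Ideal.Quotient.eq.mp h5
  have hne : a0 ≠ a0 + Finsupp.single i 1 := by
    intro h
    have := DFunLike.congr_fun h i
    simp at this
  apply hni
  apply hIm _ hsub
  rw [mem_support_iff, coeff_sub, coeff_monomial, coeff_monomial, if_pos rfl, if_neg hne]
  simp

/-- The induced ring hom `R/I → T/Q`. -/
noncomputable def phiA (S : CSetup I J af ag Q) :
    MvPolynomial σ K ⧸ I →+* MvPolynomial (σ ⊕ τ) K ⧸ Q :=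
  Ideal.quotientMap Q (rename (Sum.inl : σ → σ ⊕ τ)).toRingHom (by
    intro p hp
    rw [Ideal.mem_comap, S.hQ]
    exact Submodule.mem_sup_left (Submodule.mem_sup_left
      (Submodule.mem_sup_left (Ideal.mem_map_of_mem _ hp))))

noncomputable def phiB (S : CSetup I J af ag Q) :
    MvPolynomial τ K ⧸ J →+* MvPolynomial (σ ⊕ τ) K ⧸ Q :=
  Ideal.quotientMap Q (rename (Sum.inr : τ → σ ⊕ τ)).toRingHom (by
    intro p hp
    rw [Ideal.mem_comap, S.hQ]
    exact Submodule.mem_sup_left (Submodule.mem_sup_left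
      (Submodule.mem_sup_right (Ideal.mem_map_of_mem _ hp))))

lemma phiA_mk (S : CSetup I J af ag Q) (p : MvPolynomial σ K) :
    phiA S (Ideal.Quotient.mk I p) =
      Ideal.Quotient.mk Q (rename (Sum.inl : σ → σ ⊕ τ) p) :=
  Ideal.quotientMap_mk

lemma phiB_mk (S : CSetup I J af ag Q) (p : MvPolynomial τ K) :
    phiB S (Ideal.Quotient.mk J p) =
      Ideal.Quotient.mk Q (rename (Sum.inr : τ → σ ⊕ τ) p) :=
  Ideal.quotientMap_mk

-- convenient forms of the L-lemmas
lemma L1E (S : CSetup I J af ag Q) {s : σ →₀ ℕ} :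
    Ideal.Quotient.mk Q (monomial (El s) (1 : K)) = 0 ↔ monomial s (1 : K) ∈ I := by
  rw [Ideal.Quotient.eq_zero_iff_mem, ← rename_mono_l, L1 S]
lemma L1E' (S : CSetup I J af ag Q) {t : τ →₀ ℕ} :
    Ideal.Quotient.mk Q (monomial (Er t) (1 : K)) = 0 ↔ monomial t (1 : K) ∈ J := by
  rw [Ideal.Quotient.eq_zero_iff_mem, ← rename_mono_r, L1' S]
lemma L2E (S : CSetup I J af ag Q) {s t : σ →₀ ℕ}
    (h : Ideal.Quotient.mk Q (monomial (El s) (1 : K)) =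
      Ideal.Quotient.mk Q (monomial (El t) (1 : K))) :
    Ideal.Quotient.mk I (monomial s (1 : K)) = Ideal.Quotient.mk I (monomial t (1 : K)) :=
  L2 S (by rw [rename_mono_l, rename_mono_l]; exact h)
lemma L2E' (S : CSetup I J af ag Q) {s t : τ →₀ ℕ}
    (h : Ideal.Quotient.mk Q (monomial (Er s) (1 : K)) =
      Ideal.Quotient.mk Q (monomial (Er t) (1 : K))) :
    Ideal.Quotient.mk J (monomial s (1 : K)) = Ideal.Quotient.mk J (monomial t (1 : K)) :=
  L2' S (by rw [rename_mono_r, rename_mono_r]; exact h)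
lemma L3E (S : CSetup I J af ag Q) {s : σ →₀ ℕ} {t : τ →₀ ℕ}
    (hsI : monomial s (1 : K) ∉ I) (htJ : monomial t (1 : K) ∉ J)
    (h : Ideal.Quotient.mk Q (monomial (El s) (1 : K)) =
      Ideal.Quotient.mk Q (monomial (Er t) (1 : K))) :
    (s = 0 ∧ t = 0) ∨ (s = af ∧ t = ag) :=
  L3 S hsI htJ (by rw [rename_mono_l, rename_mono_r]; exact h)

/-- The map from `M_A` to `M_{A #_K B}`. -/
noncomputable def psiA (S : CSetup I J af ag Q) (c : MonPoset I) : MonPoset Q :=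
  ⟨phiA S c.1, by
    obtain ⟨hne, a, ha⟩ := c.2
    refine ⟨?_, El a, by rw [ha, phiA_mk, rename_mono_l]⟩
    rw [ha, phiA_mk, rename_mono_l, Ne, L1E S]
    intro hmem
    exact hne (by rw [ha, Ideal.Quotient.eq_zero_iff_mem]; exact hmem)⟩

noncomputable def psiB (S : CSetup I J af ag Q) (d : MonPoset J) : MonPoset Q :=
  ⟨phiB S d.1, by
    obtain ⟨hne, a, ha⟩ := d.2
    refine ⟨?_, Er a, by rw [ha, phiB_mk, rename_mono_r]⟩
    rw [ha, phiB_mk, rename_mono_r, Ne, L1E' S]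
    intro hmem
    exact hne (by rw [ha, Ideal.Quotient.eq_zero_iff_mem]; exact hmem)⟩

lemma psiA_val (S : CSetup I J af ag Q) (c : MonPoset I) {a : σ →₀ ℕ}
    (ha : c.1 = Ideal.Quotient.mk I (monomial a 1)) :
    (psiA S c).1 = Ideal.Quotient.mk Q (monomial (El a) (1 : K)) := by
  show phiA S c.1 = _
  rw [ha, phiA_mk, rename_mono_l]

lemma psiB_val (S : CSetup I J af ag Q) (d : MonPoset J) {a : τ →₀ ℕ}
    (ha : d.1 = Ideal.Quotient.mk J (monomial a 1)) :
    (psiB S d).1 = Ideal.Quotient.mk Q (monomial (Er a) (1 : K)) := by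
  show phiB S d.1 = _
  rw [ha, phiB_mk, rename_mono_r]

lemma mk_mul_monomial {u v : (σ ⊕ τ) →₀ ℕ} :
    Ideal.Quotient.mk Q (monomial u (1 : K)) * Ideal.Quotient.mk Q (monomial v 1) =
      Ideal.Quotient.mk Q (monomial (u + v) 1) := by
  rw [← map_mul, monomial_mul, one_mul]

lemma psiA_injective (S : CSetup I J af ag Q) : Function.Injective (psiA S) := by
  intro c c' h
  obtain ⟨hne, a, ha⟩ := c.2
  obtain ⟨hne', a', ha'⟩ := c'.2
  apply Subtype.ext
  rw [ha, ha']
  apply L2E S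
  rw [← psiA_val S c ha, ← psiA_val S c' ha', h]

lemma psiB_injective (S : CSetup I J af ag Q) : Function.Injective (psiB S) := by
  intro c c' h
  obtain ⟨hne, a, ha⟩ := c.2
  obtain ⟨hne', a', ha'⟩ := c'.2
  apply Subtype.ext
  rw [ha, ha']
  apply L2E' S
  rw [← psiB_val S c ha, ← psiB_val S c' ha', h]

lemma psiAB (S : CSetup I J af ag Q) (c : MonPoset I) (d : MonPoset J)
    (h : psiA S c = psiB S d) :
    (c.1 = Ideal.Quotient.mk I 1 ∧ d.1 = Ideal.Quotient.mk J 1) ∨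
    (c.1 = Ideal.Quotient.mk I (monomial af 1) ∧
      d.1 = Ideal.Quotient.mk J (monomial ag 1)) := by
  obtain ⟨hne, a, ha⟩ := c.2
  obtain ⟨hne', b, hb⟩ := d.2
  have hnI : monomial a (1 : K) ∉ I := fun hm =>
    hne (by rw [ha, Ideal.Quotient.eq_zero_iff_mem]; exact hm)
  have hnJ : monomial b (1 : K) ∉ J := fun hm =>
    hne' (by rw [hb, Ideal.Quotient.eq_zero_iff_mem]; exact hm)
  have heq : Ideal.Quotient.mk Q (monomial (El a) (1 : K)) =
      Ideal.Quotient.mk Q (monomial (Er b) (1 : K)) := by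
    rw [← psiA_val S c ha, ← psiB_val S d hb, h]
  rcases L3E S hnI hnJ heq with ⟨ha0, hb0⟩ | ⟨haf, hbg⟩
  · subst ha0 hb0
    left
    constructor
    · rw [ha]; simp [monomial_zero']
    · rw [hb]; simp [monomial_zero']
  · subst haf hbg
    right
    exact ⟨ha, hb⟩

lemma rev (S : CSetup I J af ag Q) (t t' : MonPoset I ⊕ MonPoset J)
    (h : Sum.LiftRel (monDvd I) (monDvd J) t t') :
    monDvd Q (Sum.elim (psiA S) (psiB S) t) (Sum.elim (psiA S) (psiB S) t') := by
  cases h with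
  | inl hr =>
    obtain ⟨hh, ⟨hhn, b, hhb⟩, hhm⟩ := hr
    refine ⟨phiA S hh, ⟨?_, El b, by rw [hhb, phiA_mk, rename_mono_l]⟩, ?_⟩
    · rw [hhb, phiA_mk, rename_mono_l, Ne, L1E S]
      intro hm
      exact hhn (by rw [hhb, Ideal.Quotient.eq_zero_iff_mem]; exact hm)
    · show phiA S _ * phiA S hh = phiA S _
      rw [← map_mul, hhm]
  | inr hr =>
    obtain ⟨hh, ⟨hhn, b, hhb⟩, hhm⟩ := hr
    refine ⟨phiB S hh, ⟨?_, Er b, by rw [hhb, phiB_mk, rename_mono_r]⟩, ?_⟩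
    · rw [hhb, phiB_mk, rename_mono_r, Ne, L1E' S]
      intro hm
      exact hhn (by rw [hhb, Ideal.Quotient.eq_zero_iff_mem]; exact hm)
    · show phiB S _ * phiB S hh = phiB S _
      rw [← map_mul, hhm]

lemma fwd (S : CSetup I J af ag Q) (hIp : I ≠ ⊤) (hJp : J ≠ ⊤)
    {mA : MonPoset I} {mB : MonPoset J}
    (hmA : mA.1 = Ideal.Quotient.mk I (monomial af 1))
    (hmB : mB.1 = Ideal.Quotient.mk J (monomial ag 1))
    (s s' : MonPoset I ⊕ MonPoset J)
    (h : monDvd Q (Sum.elim (psiA S) (psiB S) s) (Sum.elim (psiA S) (psiB S) s')) :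
    ∃ t t', Relation.EqvGen (fun x y =>
        (x = Sum.inl (oneMon I hIp) ∧ y = Sum.inr (oneMon J hJp)) ∨
        (x = Sum.inl mA ∧ y = Sum.inr mB)) s t ∧
      Relation.EqvGen (fun x y =>
        (x = Sum.inl (oneMon I hIp) ∧ y = Sum.inr (oneMon J hJp)) ∨
        (x = Sum.inl mA ∧ y = Sum.inr mB)) s' t' ∧
      Sum.LiftRel (monDvd I) (monDvd J) t t' := by
  obtain ⟨h0, ⟨hne, b, hb⟩, hmul⟩ := h
  have hpure : (∀ j, b (Sum.inr j) = 0) ∨ (∀ i, b (Sum.inl i) = 0) := by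
    by_contra hcon
    push_neg at hcon
    obtain ⟨j, hj⟩ := hcon.1
    obtain ⟨i, hi⟩ := hcon.2
    exact hne (by
      rw [hb, Ideal.Quotient.eq_zero_iff_mem]
      exact memQ_bad S (Or.inl ⟨⟨i, hi⟩, ⟨j, hj⟩⟩))
  rcases s with c | d <;> rcases s' with c' | d'
  · -- inl, inl
    obtain ⟨hnc, a, ha⟩ := c.2
    obtain ⟨hnc', a', ha'⟩ := c'.2
    have hprodgen : Ideal.Quotient.mk Q (monomial (El a + b) (1 : K)) = (psiA S c').1 := by
      rw [← mk_mul_monomial, ← hb, ← psiA_val S c ha]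
      exact hmul
    by_cases hbl : ∀ j, b (Sum.inr j) = 0
    · have hbE : b = El (pL b) := eq_El_of_pure hbl
      have hIeq : Ideal.Quotient.mk I (monomial (a + pL b) (1 : K)) = c'.1 := by
        rw [ha']
        apply L2E S
        rw [← psiA_val S c' ha', ← hprodgen, El_add, ← hbE]
      refine ⟨Sum.inl c, Sum.inl c', Relation.EqvGen.refl _, Relation.EqvGen.refl _,
        Sum.LiftRel.inl ?_⟩
      refine ⟨Ideal.Quotient.mk I (monomial (pL b) 1), ⟨?_, _, rfl⟩, ?_⟩
      · rw [Ne, Ideal.Quotient.eq_zero_iff_mem]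
        intro hmem
        apply hnc'
        rw [← hIeq, Ideal.Quotient.eq_zero_iff_mem]
        have he : monomial (a + pL b) (1 : K) = monomial a 1 * monomial (pL b) 1 := by
          rw [monomial_mul, one_mul]
        rw [he]
        exact I.mul_mem_left _ hmem
      · rw [ha, ← map_mul, monomial_mul, one_mul]
        exact hIeq
    · push_neg at hbl
      obtain ⟨j, hj⟩ := hbl
      have ha0 : a = 0 := by
        by_contra ha0
        obtain ⟨i, hi⟩ := Finsupp.ne_iff.mp ha0
        simp only [Finsupp.coe_zero, Pi.zero_apply] at hi
        apply (psiA S c').2.1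
        rw [← hprodgen, Ideal.Quotient.eq_zero_iff_mem]
        apply memQ_bad S
        refine Or.inl ⟨⟨i, ?_⟩, ⟨j, ?_⟩⟩
        · simp only [Finsupp.add_apply, El_inl]; omega
        · simp only [Finsupp.add_apply, El_inr]; omega
      have hc1 : c.1 = Ideal.Quotient.mk I 1 := by
        rw [ha, ha0, monomial_zero', C_1]
      exact ⟨Sum.inl c, Sum.inl c', Relation.EqvGen.refl _, Relation.EqvGen.refl _,
        Sum.LiftRel.inl (oneDvd hc1)⟩
  · -- inl, inr
    obtain ⟨hnc, a, ha⟩ := c.2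
    obtain ⟨hnd', b', hb'⟩ := d'.2
    have hprodgen : Ideal.Quotient.mk Q (monomial (El a + b) (1 : K)) = (psiB S d').1 := by
      rw [← mk_mul_monomial, ← hb, ← psiA_val S c ha]
      exact hmul
    by_cases hbl : ∀ j, b (Sum.inr j) = 0
    · have hbE : b = El (pL b) := eq_El_of_pure hbl
      have hEe : El (τ := τ) (a + pL b) = El a + b := by rw [El_add, ← hbE]
      have hnI : monomial (a + pL b) (1 : K) ∉ I := by
        intro hmem
        apply (psiB S d').2.1
        rw [← hprodgen, ← hEe, L1E S]
        exact hmem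
      have hnJ : monomial b' (1 : K) ∉ J := fun hm =>
        hnd' (by rw [hb', Ideal.Quotient.eq_zero_iff_mem]; exact hm)
      have heq : Ideal.Quotient.mk Q (monomial (El (a + pL b)) (1 : K)) =
          Ideal.Quotient.mk Q (monomial (Er b') (1 : K)) := by
        rw [hEe, hprodgen, psiB_val S d' hb']
      rcases L3E S hnI hnJ heq with ⟨hab0, hb'0⟩ | ⟨habf, hb'g⟩
      · have ha0 : a = 0 := by
          ext i
          have := DFunLike.congr_fun hab0 i
          simp only [Finsupp.add_apply, Finsupp.coe_zero, Pi.zero_apply] at this ⊢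
          omega
        have hc1 : c.1 = Ideal.Quotient.mk I 1 := by
          rw [ha, ha0, monomial_zero', C_1]
        have hd'1 : d' = oneMon J hJp := Subtype.ext (by
          rw [hb', hb'0, monomial_zero', C_1]; rfl)
        refine ⟨Sum.inl c, Sum.inl (oneMon I hIp), Relation.EqvGen.refl _, ?_,
          Sum.LiftRel.inl (oneDvd hc1)⟩
        rw [hd'1]
        exact Relation.EqvGen.symm _ _ (Relation.EqvGen.rel _ _ (Or.inl ⟨rfl, rfl⟩))
      · have hd'm : d' = mB := Subtype.ext (by rw [hb', hb'g, hmB])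
        refine ⟨Sum.inl c, Sum.inl mA, Relation.EqvGen.refl _, ?_, Sum.LiftRel.inl ?_⟩
        · rw [hd'm]
          exact Relation.EqvGen.symm _ _ (Relation.EqvGen.rel _ _ (Or.inr ⟨rfl, rfl⟩))
        · refine ⟨Ideal.Quotient.mk I (monomial (pL b) 1), ⟨?_, _, rfl⟩, ?_⟩
          · rw [Ne, Ideal.Quotient.eq_zero_iff_mem]
            intro hmem
            apply S.hfI
            rw [← habf]
            have he : monomial (a + pL b) (1 : K) = monomial a 1 * monomial (pL b) 1 := by
              rw [monomial_mul, one_mul]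
            rw [he]
            exact I.mul_mem_left _ hmem
          · rw [ha, ← map_mul, monomial_mul, one_mul, hmA, habf]
    · push_neg at hbl
      obtain ⟨j, hj⟩ := hbl
      have ha0 : a = 0 := by
        by_contra ha0
        obtain ⟨i, hi⟩ := Finsupp.ne_iff.mp ha0
        simp only [Finsupp.coe_zero, Pi.zero_apply] at hi
        apply (psiB S d').2.1
        rw [← hprodgen, Ideal.Quotient.eq_zero_iff_mem]
        apply memQ_bad S
        refine Or.inl ⟨⟨i, ?_⟩, ⟨j, ?_⟩⟩
        · simp only [Finsupp.add_apply, El_inl]; omega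
        · simp only [Finsupp.add_apply, El_inr]; omega
      have hc1 : c.1 = Ideal.Quotient.mk I 1 := by
        rw [ha, ha0, monomial_zero', C_1]
      have hceq : c = oneMon I hIp := Subtype.ext hc1
      refine ⟨Sum.inr (oneMon J hJp), Sum.inr d', ?_, Relation.EqvGen.refl _,
        Sum.LiftRel.inr (oneDvd rfl)⟩
      rw [hceq]
      exact Relation.EqvGen.rel _ _ (Or.inl ⟨rfl, rfl⟩)
  · -- inr, inl
    obtain ⟨hnd, a, ha⟩ := d.2
    obtain ⟨hnc', a', ha'⟩ := c'.2
    have hprodgen : Ideal.Quotient.mk Q (monomial (Er a + b) (1 : K)) = (psiA S c').1 := by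
      rw [← mk_mul_monomial, ← hb, ← psiB_val S d ha]
      exact hmul
    by_cases hbr : ∀ i, b (Sum.inl i) = 0
    · have hbE : b = Er (pR b) := eq_Er_of_pure hbr
      have hEe : Er (σ := σ) (a + pR b) = Er a + b := by rw [Er_add, ← hbE]
      have hnJ : monomial (a + pR b) (1 : K) ∉ J := by
        intro hmem
        apply (psiA S c').2.1
        rw [← hprodgen, ← hEe, L1E' S]
        exact hmem
      have hnI : monomial a' (1 : K) ∉ I := fun hm =>
        hnc' (by rw [ha', Ideal.Quotient.eq_zero_iff_mem]; exact hm)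
      have heq : Ideal.Quotient.mk Q (monomial (El a') (1 : K)) =
          Ideal.Quotient.mk Q (monomial (Er (a + pR b)) (1 : K)) := by
        rw [hEe, hprodgen, psiA_val S c' ha']
      rcases L3E S hnI hnJ heq with ⟨ha'0, hab0⟩ | ⟨ha'f, habg⟩
      · have ha0 : a = 0 := by
          ext j
          have := DFunLike.congr_fun hab0 j
          simp only [Finsupp.add_apply, Finsupp.coe_zero, Pi.zero_apply] at this ⊢
          omega
        have hd1 : d.1 = Ideal.Quotient.mk J 1 := by
          rw [ha, ha0, monomial_zero', C_1]
        have hc'1 : c' = oneMon I hIp := Subtype.ext (by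
          rw [ha', ha'0, monomial_zero', C_1]; rfl)
        refine ⟨Sum.inr d, Sum.inr (oneMon J hJp), Relation.EqvGen.refl _, ?_,
          Sum.LiftRel.inr (oneDvd hd1)⟩
        rw [hc'1]
        exact Relation.EqvGen.rel _ _ (Or.inl ⟨rfl, rfl⟩)
      · have hc'm : c' = mA := Subtype.ext (by rw [ha', ha'f, hmA])
        refine ⟨Sum.inr d, Sum.inr mB, Relation.EqvGen.refl _, ?_, Sum.LiftRel.inr ?_⟩
        · rw [hc'm]
          exact Relation.EqvGen.rel _ _ (Or.inr ⟨rfl, rfl⟩)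
        · refine ⟨Ideal.Quotient.mk J (monomial (pR b) 1), ⟨?_, _, rfl⟩, ?_⟩
          · rw [Ne, Ideal.Quotient.eq_zero_iff_mem]
            intro hmem
            apply S.hgJ
            rw [← habg]
            have he : monomial (a + pR b) (1 : K) = monomial a 1 * monomial (pR b) 1 := by
              rw [monomial_mul, one_mul]
            rw [he]
            exact J.mul_mem_left _ hmem
          · rw [ha, ← map_mul, monomial_mul, one_mul, hmB, habg]
    · push_neg at hbr
      obtain ⟨i, hi⟩ := hbr
      have hbl : ∀ j, b (Sum.inr j) = 0 := by
        rcases hpure with h1 | h2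
        · exact h1
        · exact absurd (h2 i) hi
      have ha0 : a = 0 := by
        by_contra ha0
        obtain ⟨j, hj⟩ := Finsupp.ne_iff.mp ha0
        simp only [Finsupp.coe_zero, Pi.zero_apply] at hj
        apply (psiA S c').2.1
        rw [← hprodgen, Ideal.Quotient.eq_zero_iff_mem]
        apply memQ_bad S
        refine Or.inl ⟨⟨i, ?_⟩, ⟨j, ?_⟩⟩
        · simp only [Finsupp.add_apply, Er_inl]; omega
        · simp only [Finsupp.add_apply, Er_inr]
          rw [hbl j]
          omega
      have hd1 : d.1 = Ideal.Quotient.mk J 1 := by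
        rw [ha, ha0, monomial_zero', C_1]
      have hdeq : d = oneMon J hJp := Subtype.ext hd1
      refine ⟨Sum.inl (oneMon I hIp), Sum.inl c', ?_, Relation.EqvGen.refl _,
        Sum.LiftRel.inl (oneDvd rfl)⟩
      rw [hdeq]
      exact Relation.EqvGen.symm _ _ (Relation.EqvGen.rel _ _ (Or.inl ⟨rfl, rfl⟩))
  · -- inr, inr
    obtain ⟨hnd, a, ha⟩ := d.2
    obtain ⟨hnd', a', ha'⟩ := d'.2
    have hprodgen : Ideal.Quotient.mk Q (monomial (Er a + b) (1 : K)) = (psiB S d').1 := by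
      rw [← mk_mul_monomial, ← hb, ← psiB_val S d ha]
      exact hmul
    by_cases hbr : ∀ i, b (Sum.inl i) = 0
    · have hbE : b = Er (pR b) := eq_Er_of_pure hbr
      have hJeq : Ideal.Quotient.mk J (monomial (a + pR b) (1 : K)) = d'.1 := by
        rw [ha']
        apply L2E' S
        rw [← psiB_val S d' ha', ← hprodgen, Er_add, ← hbE]
      refine ⟨Sum.inr d, Sum.inr d', Relation.EqvGen.refl _, Relation.EqvGen.refl _,
        Sum.LiftRel.inr ?_⟩
      refine ⟨Ideal.Quotient.mk J (monomial (pR b) 1), ⟨?_, _, rfl⟩, ?_⟩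
      · rw [Ne, Ideal.Quotient.eq_zero_iff_mem]
        intro hmem
        apply hnd'
        rw [← hJeq, Ideal.Quotient.eq_zero_iff_mem]
        have he : monomial (a + pR b) (1 : K) = monomial a 1 * monomial (pR b) 1 := by
          rw [monomial_mul, one_mul]
        rw [he]
        exact J.mul_mem_left _ hmem
      · rw [ha, ← map_mul, monomial_mul, one_mul]
        exact hJeq
    · push_neg at hbr
      obtain ⟨i, hi⟩ := hbr
      have hbl : ∀ j, b (Sum.inr j) = 0 := by
        rcases hpure with h1 | h2
        · exact h1
        · exact absurd (h2 i) hi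
      have ha0 : a = 0 := by
        by_contra ha0
        obtain ⟨j, hj⟩ := Finsupp.ne_iff.mp ha0
        simp only [Finsupp.coe_zero, Pi.zero_apply] at hj
        apply (psiB S d').2.1
        rw [← hprodgen, Ideal.Quotient.eq_zero_iff_mem]
        apply memQ_bad S
        refine Or.inl ⟨⟨i, ?_⟩, ⟨j, ?_⟩⟩
        · simp only [Finsupp.add_apply, Er_inl]; omega
        · simp only [Finsupp.add_apply, Er_inr]
          rw [hbl j]
          omega
      have hd1 : d.1 = Ideal.Quotient.mk J 1 := by
        rw [ha, ha0, monomial_zero', C_1]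
      exact ⟨Sum.inr d, Sum.inr d', Relation.EqvGen.refl _, Relation.EqvGen.refl _,
        Sum.LiftRel.inr (oneDvd hd1)⟩

end CSAux

/-- Let `I ⊂ K[x_1,…,x_n]` and `J ⊂ K[y_1,…,y_m]` be proper monomial ideals with
`A = K[x]/I`, `B = K[y]/J` Artinian, such that the monomial posets `M_A`, `M_B` have
unique maximal elements `m_A = f + I`, `m_B = g + J` with `f, g` monomials of the
same total degree. Then the monomial poset of the connected sum `A #_K B`, i.e. of
`T/(I·T + J·T + (x_i y_j) + (f - g))` with `T = K[x,y]`, is isomorphic as a poset to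
the closed product `M_A ◇ M_B`. -/
theorem monPoset_connectedSum_eq_closedProd {K : Type*} [Field K] (n m : ℕ)
    (I : Ideal (MvPolynomial (Fin n) K)) (J : Ideal (MvPolynomial (Fin m) K))
    (hIproper : I ≠ ⊤) (hJproper : J ≠ ⊤)
    (hImon : IsMonomialIdeal I) (hJmon : IsMonomialIdeal J)
    (hAart : IsArtinianRing (MvPolynomial (Fin n) K ⧸ I))
    (hBart : IsArtinianRing (MvPolynomial (Fin m) K ⧸ J))
    (af : Fin n →₀ ℕ) (ag : Fin m →₀ ℕ)
    (hdeg : (af.sum fun _ k => k) = ag.sum fun _ k => k)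
    (mA : MonPoset I) (mB : MonPoset J)
    (hmA : mA.1 = Ideal.Quotient.mk I (monomial af (1 : K)))
    (hmB : mB.1 = Ideal.Quotient.mk J (monomial ag (1 : K)))
    (hmaxA : (∀ c : MonPoset I, monDvd I mA c → c = mA) ∧
      ∀ c : MonPoset I, (∀ c', monDvd I c c' → c' = c) → c = mA)
    (hmaxB : (∀ c : MonPoset J, monDvd J mB c → c = mB) ∧
      ∀ c : MonPoset J, (∀ c', monDvd J c c' → c' = c) → c = mB)
    (Q : Ideal (MvPolynomial (Fin n ⊕ Fin m) K))
    (hQ : Q = Ideal.map (rename (Sum.inl : Fin n → Fin n ⊕ Fin m)).toRingHom I ⊔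
        Ideal.map (rename (Sum.inr : Fin m → Fin n ⊕ Fin m)).toRingHom J ⊔
        Ideal.span {p : MvPolynomial (Fin n ⊕ Fin m) K |
          ∃ i j, p = X (Sum.inl i) * X (Sum.inr j)} ⊔
        Ideal.span {rename (Sum.inl : Fin n → Fin n ⊕ Fin m) (monomial af (1 : K)) -
          rename (Sum.inr : Fin m → Fin n ⊕ Fin m) (monomial ag (1 : K))}) :
    ∃ e : MonPoset Q ≃ ClosedProd (oneMon I hIproper) mA (oneMon J hJproper) mB,
      ∀ u v : MonPoset Q,
        monDvd Q u v ↔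
          closedLE (monDvd I) (monDvd J) (oneMon I hIproper) mA (oneMon J hJproper) mB
            (e u) (e v) := by
  have h1I : (1 : MvPolynomial (Fin n) K) ∉ I := (Ideal.ne_top_iff_one I).mp hIproper
  have h1J : (1 : MvPolynomial (Fin m) K) ∉ J := (Ideal.ne_top_iff_one J).mp hJproper
  have hfI : monomial af (1 : K) ∉ I := fun hm =>
    mA.2.1 (by rw [hmA, Ideal.Quotient.eq_zero_iff_mem]; exact hm)
  have hgJ : monomial ag (1 : K) ∉ J := fun hm =>
    mB.2.1 (by rw [hmB, Ideal.Quotient.eq_zero_iff_mem]; exact hm)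
  have hioz : af = 0 ↔ ag = 0 := by
    constructor
    · intro h
      apply CSAux.finsupp_sum_eq_zero
      rw [← hdeg, h, Finsupp.sum_zero_index]
    · intro h
      apply CSAux.finsupp_sum_eq_zero
      rw [hdeg, h, Finsupp.sum_zero_index]
  have S : CSAux.CSetup I J af ag Q := ⟨h1I, h1J, hImon, hJmon, hfI, hgJ,
    CSAux.maxstep hImon hmaxA.1 hmA hfI, CSAux.maxstep hJmon hmaxB.1 hmB hgJ, hioz, hQ⟩
  set f0 : MonPoset I ⊕ MonPoset J → MonPoset Q :=
    Sum.elim (CSAux.psiA S) (CSAux.psiB S) with hf0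
  have hsound : ∀ x y : MonPoset I ⊕ MonPoset J,
      (closedSetoid (oneMon I hIproper) mA (oneMon J hJproper) mB).r x y → f0 x = f0 y := by
    intro x y hxy
    induction hxy with
    | rel x y hr =>
      rcases hr with ⟨rfl, rfl⟩ | ⟨rfl, rfl⟩
      · apply Subtype.ext
        show (CSAux.psiA S (oneMon I hIproper)).1 = (CSAux.psiB S (oneMon J hJproper)).1
        rw [CSAux.psiA_val S _ (show (oneMon I hIproper).1 =
            Ideal.Quotient.mk I (monomial 0 1) by rw [monomial_zero', C_1]; rfl),
          CSAux.psiB_val S _ (show (oneMon J hJproper).1 =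
            Ideal.Quotient.mk J (monomial 0 1) by rw [monomial_zero', C_1]; rfl)]
        simp
      · apply Subtype.ext
        show (CSAux.psiA S mA).1 = (CSAux.psiB S mB).1
        rw [CSAux.psiA_val S mA hmA, CSAux.psiB_val S mB hmB]
        exact Ideal.Quotient.eq.mpr (CSAux.memQ_FG S)
    | refl x => rfl
    | symm x y _ ih => exact ih.symm
    | trans x y z _ _ ih1 ih2 => exact ih1.trans ih2
  set ψ : ClosedProd (oneMon I hIproper) mA (oneMon J hJproper) mB → MonPoset Q :=
    Quotient.lift f0 hsound with hψ
  have hinj : Function.Injective ψ := by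
    intro x y hxy
    obtain ⟨u, rfl⟩ := Quot.exists_rep x
    obtain ⟨v, rfl⟩ := Quot.exists_rep y
    have h2 : f0 u = f0 v := hxy
    rcases u with c | d <;> rcases v with c' | d'
    · rw [CSAux.psiA_injective S (h2 : CSAux.psiA S c = CSAux.psiA S c')]
    · rcases CSAux.psiAB S c d' (h2 : CSAux.psiA S c = CSAux.psiB S d') with
        ⟨hc1, hd1⟩ | ⟨hcf, hdg⟩
      · have hc' : c = oneMon I hIproper := Subtype.ext hc1
        have hd' : d' = oneMon J hJproper := Subtype.ext hd1
        rw [hc', hd']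
        exact Quot.sound (Relation.EqvGen.rel _ _ (Or.inl ⟨rfl, rfl⟩))
      · have hc' : c = mA := Subtype.ext (hcf.trans hmA.symm)
        have hd' : d' = mB := Subtype.ext (hdg.trans hmB.symm)
        rw [hc', hd']
        exact Quot.sound (Relation.EqvGen.rel _ _ (Or.inr ⟨rfl, rfl⟩))
    · rcases CSAux.psiAB S c' d (h2.symm : CSAux.psiA S c' = CSAux.psiB S d) with
        ⟨hc1, hd1⟩ | ⟨hcf, hdg⟩
      · have hc' : c' = oneMon I hIproper := Subtype.ext hc1
        have hd' : d = oneMon J hJproper := Subtype.ext hd1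
        rw [hc', hd']
        symm
        exact Quot.sound (Relation.EqvGen.rel _ _ (Or.inl ⟨rfl, rfl⟩))
      · have hc' : c' = mA := Subtype.ext (hcf.trans hmA.symm)
        have hd' : d = mB := Subtype.ext (hdg.trans hmB.symm)
        rw [hc', hd']
        symm
        exact Quot.sound (Relation.EqvGen.rel _ _ (Or.inr ⟨rfl, rfl⟩))
    · rw [CSAux.psiB_injective S (h2 : CSAux.psiB S d = CSAux.psiB S d')]
  have hsurj : Function.Surjective ψ := by
    rintro ⟨q, hq⟩
    obtain ⟨hqne, a, hqa⟩ := id hq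
    by_cases hbl : ∀ j, a (Sum.inr j) = 0
    · have haE : a = CSAux.El (CSAux.pL a) := CSAux.eq_El_of_pure hbl
      have hnI : monomial (CSAux.pL a) (1 : K) ∉ I := by
        intro hm
        apply hqne
        rw [hqa, haE]
        exact (CSAux.L1E S).mpr hm
      refine ⟨Quotient.mk _ (Sum.inl ⟨Ideal.Quotient.mk I (monomial (CSAux.pL a) 1),
        ?_, _, rfl⟩), ?_⟩
      · rw [Ne, Ideal.Quotient.eq_zero_iff_mem]
        exact hnI
      · apply Subtype.ext
        show (CSAux.psiA S _).1 = q
        refine (CSAux.psiA_val (a := CSAux.pL a) S _ ?_).trans ?_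
        · rfl
        · rw [hqa, ← haE]
    · push_neg at hbl
      obtain ⟨j, hj⟩ := hbl
      have hbr : ∀ i, a (Sum.inl i) = 0 := by
        by_contra hbc
        push_neg at hbc
        obtain ⟨i, hi⟩ := hbc
        apply hqne
        rw [hqa, Ideal.Quotient.eq_zero_iff_mem]
        exact CSAux.memQ_bad S (Or.inl ⟨⟨i, hi⟩, ⟨j, hj⟩⟩)
      have haE : a = CSAux.Er (CSAux.pR a) := CSAux.eq_Er_of_pure hbr
      have hnJ : monomial (CSAux.pR a) (1 : K) ∉ J := by
        intro hm
        apply hqne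
        rw [hqa, haE]
        exact (CSAux.L1E' S).mpr hm
      refine ⟨Quotient.mk _ (Sum.inr ⟨Ideal.Quotient.mk J (monomial (CSAux.pR a) 1),
        ?_, _, rfl⟩), ?_⟩
      · rw [Ne, Ideal.Quotient.eq_zero_iff_mem]
        exact hnJ
      · apply Subtype.ext
        show (CSAux.psiB S _).1 = q
        refine (CSAux.psiB_val (a := CSAux.pR a) S _ ?_).trans ?_
        · rfl
        · rw [hqa, ← haE]
  have hbij : Function.Bijective ψ := ⟨hinj, hsurj⟩
  refine ⟨(Equiv.ofBijective ψ hbij).symm, ?_⟩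
  intro u v
  have hψu : ψ ((Equiv.ofBijective ψ hbij).symm u) = u :=
    (Equiv.ofBijective ψ hbij).apply_symm_apply u
  have hψv : ψ ((Equiv.ofBijective ψ hbij).symm v) = v :=
    (Equiv.ofBijective ψ hbij).apply_symm_apply v
  constructor
  · intro hdvd
    obtain ⟨su, hsu⟩ := Quot.exists_rep ((Equiv.ofBijective ψ hbij).symm u)
    obtain ⟨sv, hsv⟩ := Quot.exists_rep ((Equiv.ofBijective ψ hbij).symm v)
    have hu : f0 su = u := by rw [← hψu, ← hsu]
    have hv : f0 sv = v := by rw [← hψv, ← hsv]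
    obtain ⟨t, t', h1, h2, h3⟩ := CSAux.fwd S hIproper hJproper hmA hmB su sv
      (by show monDvd Q (f0 su) (f0 sv); rw [hu, hv]; exact hdvd)
    refine ⟨t, t', ?_, ?_, h3⟩
    · rw [← hsu]
      exact Quot.sound h1
    · rw [← hsv]
      exact Quot.sound h2
  · rintro ⟨u', v', heu, hev, hlr⟩
    have hrev := CSAux.rev S u' v' hlr
    have hu : f0 u' = u := by
      have h4 : ψ (Quotient.mk _ u') = u := by rw [← heu]; exact hψu
      exact h4
    have hv : f0 v' = v := by
      have h4 : ψ (Quotient.mk _ v') = v := by rw [← hev]; exact hψv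
      exact h4
    have hrev' : monDvd Q (f0 u') (f0 v') := hrev
    rw [hu, hv] at hrev'
    exact hrev'
end

section
/- The monomial poset of ℚ[x,y]/(x⁵, x²y², y⁵) — the 16-element poset of cosets of the monomials 1; x, y; x², xy, y²; x³, x²y, xy², y³; x⁴, x³y, xy³, y⁴; x⁴y, xy⁴ under divisibility, ranked by total degree — is a Macaulay poset, and the total orders witnessing the Macaulay property are, up to the (irrelevant) ordering between elements of different ranks, exactly the following two: the order whose restriction to each rank level is y ≺ x; y² ≺ xy ≺ x²; y³ ≺ xy² ≺ x³ ≺ x²y; y⁴ ≺ xy³ ≺ x⁴ ≺ x³y; xy⁴ ≺ x⁴y, and its image under exchanging x and y. -/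
open MvPolynomial

/-- The ideal `(x⁵, x²y², y⁵)` of `ℚ[x,y]`. -/
noncomputable def heartIdeal : Ideal (MvPolynomial (Fin 2) ℚ) :=
  Ideal.span {(X 0 : MvPolynomial (Fin 2) ℚ) ^ 5, X 0 ^ 2 * X 1 ^ 2, X 1 ^ 5}

/-- Position table of the twist order on the monomial poset of
`ℚ[x,y]/(x⁵, x²y², y⁵)`, keyed by the exponents of `x` and `y`; within each total
degree the values increase according to
`y ≺ x`; `y² ≺ xy ≺ x²`; `y³ ≺ xy² ≺ x³ ≺ x²y`; `y⁴ ≺ xy³ ≺ x⁴ ≺ x³y`;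
`xy⁴ ≺ x⁴y`. -/
def twistTable : ℕ → ℕ → ℕ
  | 0, 0 => 0
  | 0, 1 => 10 -- y
  | 1, 0 => 11 -- x
  | 0, 2 => 20 -- y²
  | 1, 1 => 21 -- xy
  | 2, 0 => 22 -- x²
  | 0, 3 => 30 -- y³
  | 1, 2 => 31 -- xy²
  | 3, 0 => 32 -- x³
  | 2, 1 => 33 -- x²y
  | 0, 4 => 40 -- y⁴
  | 1, 3 => 41 -- xy³
  | 4, 0 => 42 -- x⁴
  | 3, 1 => 43 -- x³y
  | 1, 4 => 50 -- xy⁴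
  | 4, 1 => 51 -- x⁴y
  | _, _ => 0

/-- The order on monomial cosets induced by a position table on the exponents
(first argument: exponent of `x`, second: exponent of `y`). -/
def tableOrder (tbl : ℕ → ℕ → ℕ) (c c' : MonPoset heartIdeal) : Prop :=
  ∃ a b : Fin 2 →₀ ℕ,
    c.1 = Ideal.Quotient.mk heartIdeal (monomial a (1 : ℚ)) ∧
    c'.1 = Ideal.Quotient.mk heartIdeal (monomial b (1 : ℚ)) ∧
    tbl (a 0) (a 1) ≤ tbl (b 0) (b 1)

section GenTransfer

variable {α β : Type*} (e : β ≃ α)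

lemma covers_transfer (le : α → α → Prop) (le' : β → β → Prop)
    (hle : ∀ u v, le' u v ↔ le (e u) (e v)) (u v : β) :
    CoversR le' u v ↔ CoversR le (e u) (e v) := by
  constructor
  · rintro ⟨h1, h2, h3⟩
    refine ⟨(hle _ _).1 h1, fun h => h2 (e.injective h), fun x hx1 hx2 => ?_⟩
    have hx1' : le' u (e.symm x) := (hle _ _).2 (by simpa using hx1)
    have hx2' : le' (e.symm x) v := (hle _ _).2 (by simpa using hx2)
    rcases h3 (e.symm x) hx1' hx2' with h | h
    · left; have := congrArg e h; simpa using this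
    · right; have := congrArg e h; simpa using this
  · rintro ⟨h1, h2, h3⟩
    refine ⟨(hle _ _).2 h1, fun h => h2 (congrArg e h), fun w hw1 hw2 => ?_⟩
    rcases h3 (e w) ((hle _ _).1 hw1) ((hle _ _).1 hw2) with h | h
    · left; exact e.injective h
    · right; exact e.injective h

lemma shadow_transfer (le : α → α → Prop) (le' : β → β → Prop)
    (hle : ∀ u v, le' u v ↔ le (e u) (e v)) (A : Set β) :
    UpperShadowR le (e '' A) = e '' UpperShadowR le' A := by
  ext q
  constructor
  · rintro ⟨a, ⟨a', ha', rfl⟩, hc⟩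
    refine ⟨e.symm q, ⟨a', ha', ?_⟩, by simp⟩
    rw [covers_transfer e le le' hle]
    simpa using hc
  · rintro ⟨q', ⟨a, ha, hc⟩, rfl⟩
    exact ⟨e a, ⟨a, ha, rfl⟩, (covers_transfer e le le' hle a q').1 hc⟩

lemma seg_transfer (t : α → α → Prop) (t' : β → β → Prop)
    (ht : ∀ u v, t' u v ↔ t (e u) (e v)) (L S : Set β) :
    IsInitialSegIn t' L S ↔ IsInitialSegIn t (e '' L) (e '' S) := by
  constructor
  · rintro ⟨h1, h2⟩
    refine ⟨Set.image_mono h1, ?_⟩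
    rintro a ⟨a', ha', rfl⟩ b ⟨b', hb', rfl⟩ hab
    exact ⟨b', h2 a' ha' b' hb' ((ht _ _).2 hab), rfl⟩
  · rintro ⟨h1, h2⟩
    refine ⟨fun x hx => ?_, ?_⟩
    · have : e x ∈ e '' L := h1 ⟨x, hx, rfl⟩
      rcases this with ⟨y, hy, hxy⟩
      rwa [← e.injective hxy]
    · intro a ha b hb hab
      have : e b ∈ e '' S := h2 (e a) ⟨a, ha, rfl⟩ (e b) ⟨b, hb, rfl⟩ ((ht _ _).1 hab)
      rcases this with ⟨y, hy, hxy⟩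
      rwa [← e.injective hxy]

lemma mac_transfer (le : α → α → Prop) (le' : β → β → Prop)
    (hle : ∀ u v, le' u v ↔ le (e u) (e v))
    (t : α → α → Prop) (t' : β → β → Prop)
    (ht : ∀ u v, t' u v ↔ t (e u) (e v))
    (r : α → ℕ) (r' : β → ℕ) (hr : ∀ u, r' u = r (e u)) :
    MacaulayWith le r t → MacaulayWith le' r' t' := by
  intro hM d A hA S hS hcard
  have hlev : ∀ n : ℕ, e '' {p | r' p = n} = {p | r p = n} := by
    intro n
    ext x
    simp only [Set.mem_image, Set.mem_setOf_eq]
    constructor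
    · rintro ⟨y, hy, rfl⟩; rw [← hr]; exact hy
    · intro hx; exact ⟨e.symm x, by rw [hr]; simpa using hx, by simp⟩
  have hA' : e '' A ⊆ {p | r p = d} := by
    rw [← hlev d]; exact Set.image_mono hA
  have hS' : IsInitialSegIn t {p | r p = d} (e '' S) := by
    rw [← hlev d]
    exact (seg_transfer e t t' ht _ _).1 hS
  have hcard' : (e '' S).ncard = (e '' A).ncard := by
    rw [Set.ncard_image_of_injective _ e.injective,
      Set.ncard_image_of_injective _ e.injective]
    exact hcard
  obtain ⟨h1, h2⟩ := hM d (e '' A) hA' (e '' S) hS' hcard'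
  rw [shadow_transfer e le le' hle, shadow_transfer e le le' hle,
    Set.ncard_image_of_injective _ e.injective,
    Set.ncard_image_of_injective _ e.injective] at h1
  refine ⟨h1, ?_⟩
  rw [seg_transfer e t t' ht, hlev (d+1)]
  rwa [shadow_transfer e le le' hle] at h2

lemma lin_pullback (t : α → α → Prop) (hlin : IsLinearOrder α t)
    {f : β → α} (hf : Function.Injective f) :
    IsLinearOrder β (fun u v => t (f u) (f v)) :=
  { refl := fun a => hlin.toIsPartialOrder.toIsPreorder.toRefl.refl _
    trans := fun a b c hab hbc =>
      hlin.toIsPartialOrder.toIsPreorder.toIsTrans.trans _ _ _ hab hbc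
    antisymm := fun a b hab hba =>
      hf (hlin.toIsPartialOrder.toAntisymm.antisymm _ _ hab hba)
    total := fun a b => hlin.toTotal.total _ _ }

end GenTransfer

abbrev MM : Type := {v : Fin 5 × Fin 5 // v.1.1 < 2 ∨ v.2.1 < 2}
def mle (u v : MM) : Prop := u.1.1.1 ≤ v.1.1.1 ∧ u.1.2.1 ≤ v.1.2.1
instance : DecidableRel mle := fun _ _ => instDecidableAnd
def mrank (u : MM) : ℕ := u.1.1.1 + u.1.2.1
def mk' (a b : Fin 5) (h : a.1 < 2 ∨ b.1 < 2) : MM := ⟨(a,b),h⟩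
def twKey (u : MM) : ℕ := twistTable u.1.1.1 u.1.2.1
def swKey (u : MM) : ℕ := twistTable u.1.2.1 u.1.1.1
instance : ∀ u v : MM, Decidable (CoversR mle u v) := fun u v => by
  unfold CoversR; infer_instance

def allMM : List MM :=
  [mk' 0 0 (by decide),
   mk' 0 1 (by decide), mk' 1 0 (by decide),
   mk' 0 2 (by decide), mk' 1 1 (by decide), mk' 2 0 (by decide),
   mk' 0 3 (by decide), mk' 1 2 (by decide), mk' 3 0 (by decide), mk' 2 1 (by decide),
   mk' 0 4 (by decide), mk' 1 3 (by decide), mk' 4 0 (by decide), mk' 3 1 (by decide),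
   mk' 1 4 (by decide), mk' 4 1 (by decide)]
def lvlL (d : ℕ) : List MM := allMM.filter (fun u => mrank u == d)
def shL (S : List MM) : List MM := allMM.filter (fun q => S.any (fun a => decide (CoversR mle a q)))
def segOfL (Q T : List MM) : Prop :=
  (∀ a ∈ T, a ∈ Q) ∧ ∀ a ∈ T, ∀ b ∈ Q, Q.idxOf a ≤ Q.idxOf b → b ∈ T
instance (Q T) : Decidable (segOfL Q T) := by unfold segOfL; exact instDecidableAnd
def macStep (P Q : List MM) : Prop :=
  ∀ A ∈ P.sublists, ∀ i ∈ List.range (P.length + 1),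
    (P.drop i).length = A.length →
      ((shL (P.drop i)).length ≤ (shL A).length ∧ segOfL Q (shL (P.drop i)))
instance (P Q) : Decidable (macStep P Q) := by unfold macStep; infer_instance

lemma mem_allMM : ∀ u : MM, u ∈ allMM := by decide

lemma nodup_allMM : allMM.Nodup := by decide

lemma mem_lvlL {u : MM} {d : ℕ} : u ∈ lvlL d ↔ mrank u = d := by
  simp [lvlL, List.mem_filter, mem_allMM]

lemma nodup_lvlL (d : ℕ) : (lvlL d).Nodup := nodup_allMM.filter _

lemma mem_shL {S : List MM} {q : MM} : q ∈ shL S ↔ ∃ a ∈ S, CoversR mle a q := by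
  simp [shL, List.mem_filter, mem_allMM]

lemma nodup_shL (S : List MM) : (shL S).Nodup := nodup_allMM.filter _

lemma shadow_coe (S : List MM) :
    UpperShadowR mle (↑S.toFinset : Set MM) = ↑(shL S).toFinset := by
  ext q
  simp [UpperShadowR, Set.mem_setOf_eq, List.mem_toFinset, mem_shL]

lemma ncard_coe_list {S : List MM} (h : S.Nodup) :
    (↑S.toFinset : Set MM).ncard = S.length := by
  rw [Set.ncard_coe_finset, List.toFinset_card_of_nodup h]

lemma mem_drop_iff {l : List MM} (hl : l.Nodup) {i : ℕ} {b : MM} :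
    b ∈ l.drop i ↔ b ∈ l ∧ i ≤ l.idxOf b := by
  constructor
  · intro hb
    obtain ⟨j, hj, hbe⟩ := List.mem_iff_getElem.mp hb
    rw [List.getElem_drop] at hbe
    subst hbe
    refine ⟨List.getElem_mem _, ?_⟩
    rw [hl.idxOf_getElem]
    omega
  · rintro ⟨hb, hi⟩
    have hlt : l.idxOf b < l.length := List.idxOf_lt_length_iff.mpr hb
    obtain ⟨j, hj⟩ := Nat.le.dest hi
    refine List.mem_iff_getElem.mpr ⟨j, ?_, ?_⟩
    · rw [List.length_drop]; omega
    · rw [List.getElem_drop]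
      have : l[i + j]'(by omega) = l[List.idxOf b l]'hlt := by
        congr 1
      rw [this]
      exact List.getElem_idxOf hlt

lemma sorted_idx_iff {s : MM → MM → Prop}
    {P : List MM}
    (hrefl : ∀ a, s a a) (hanti : ∀ a b, a ∈ P → b ∈ P → s a b → s b a → a = b)
    (hnd : P.Nodup) (hs : P.Pairwise s) {a b : MM}
    (ha : a ∈ P) (hb : b ∈ P) :
    s a b ↔ P.idxOf a ≤ P.idxOf b := by
  have hia := List.idxOf_lt_length_iff.mpr ha
  have hib := List.idxOf_lt_length_iff.mpr hb
  have key : ∀ u v : MM, u ∈ P → v ∈ P → P.idxOf u < P.idxOf v → s u v := by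
    intro u v hu hv hlt
    have hiu := List.idxOf_lt_length_iff.mpr hu
    have hiv := List.idxOf_lt_length_iff.mpr hv
    have := hs.rel_get_of_lt (a := ⟨P.idxOf u, hiu⟩) (b := ⟨P.idxOf v, hiv⟩) hlt
    simpa [List.get_eq_getElem, List.getElem_idxOf] using this
  constructor
  · intro hab
    by_contra hcon
    push_neg at hcon
    have h1 := key b a hb ha hcon
    have h2 : a = b := hanti _ _ ha hb hab h1
    subst h2
    omega
  · intro hidx
    rcases eq_or_lt_of_le hidx with heq | hlt
    · have : a = b := (List.idxOf_inj ha (y := b)).mp heq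
      subst this
      exact hrefl a
    · exact key a b ha hb hlt

section Bridge

variable {s : MM → MM → Prop} {k : MM → ℕ} {P : ℕ → List MM}

lemma ndP (PERM : ∀ d, (P d).Perm (lvlL d)) (d : ℕ) :
    (P d).Nodup := (PERM d).symm.nodup (nodup_lvlL d)

lemma memP (PERM : ∀ d, (P d).Perm (lvlL d)) (d : ℕ) :
    ∀ u : MM, u ∈ P d ↔ mrank u = d := fun u =>
  (PERM d).mem_iff.trans mem_lvlL

lemma sidx (AGR : ∀ u v, mrank u = mrank v → (s u v ↔ k u ≤ k v))
    (INJ : ∀ u v, mrank u = mrank v → k u = k v → u = v)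
    (PERM : ∀ d, (P d).Perm (lvlL d))
    (SORT : ∀ d, (P d).Pairwise (fun u v => k u ≤ k v)) (d : ℕ) :
    ∀ a b : MM, a ∈ P d → b ∈ P d →
    (s a b ↔ (P d).idxOf a ≤ (P d).idxOf b) := by
  intro a b ha hb
  have memP := memP PERM d
  have h1 : s a b ↔ k a ≤ k b :=
    AGR a b (((memP a).mp ha).trans ((memP b).mp hb).symm)
  rw [h1]
  refine sorted_idx_iff (s := fun u v => k u ≤ k v) (fun a => le_refl _) ?_ (ndP PERM d) (SORT d) ha hb
  intro a b ha hb h1 h2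
  exact INJ a b (((memP a).mp ha).trans ((memP b).mp hb).symm) (le_antisymm h1 h2)

lemma seg_iff (AGR : ∀ u v, mrank u = mrank v → (s u v ↔ k u ≤ k v))
    (INJ : ∀ u v, mrank u = mrank v → k u = k v → u = v)
    (PERM : ∀ d, (P d).Perm (lvlL d))
    (SORT : ∀ d, (P d).Pairwise (fun u v => k u ≤ k v)) (d : ℕ) (S : Set MM) :
    IsInitialSegIn s {p | mrank p = d} S ↔
      ∃ i ≤ (P d).length, S = ↑((P d).drop i).toFinset := by
  have ndP := ndP PERM d
  have memP := memP PERM d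
  have sidx := sidx AGR INJ PERM SORT d
  constructor
  · rintro ⟨hsub, hcl⟩
    rcases S.eq_empty_or_nonempty with rfl | ⟨a₀, ha₀⟩
    · refine ⟨(P d).length, le_refl _, ?_⟩
      rw [List.drop_length]
      simp
    · set J : Set ℕ := (fun a => (P d).idxOf a) '' S with hJ
      have hJne : J.Nonempty := ⟨_, a₀, ha₀, rfl⟩
      obtain ⟨a₁, ha₁S, ha₁i₀⟩ := Nat.sInf_mem hJne
      have ha₁i : (P d).idxOf a₁ = sInf J := ha₁i₀
      have ha₁P : a₁ ∈ P d := (memP a₁).mpr (hsub ha₁S)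
      refine ⟨sInf J, ?_, ?_⟩
      · rw [← ha₁i]
        exact le_of_lt (List.idxOf_lt_length_iff.mpr ha₁P)
      · ext b
        simp only [Finset.coe_sort_coe, List.coe_toFinset, Set.mem_setOf_eq,
          List.mem_toFinset]
        rw [mem_drop_iff ndP]
        constructor
        · intro hb
          have hbP : b ∈ P d := (memP b).mpr (hsub hb)
          exact ⟨hbP, Nat.sInf_le ⟨b, hb, rfl⟩⟩
        · rintro ⟨hbP, hib⟩
          refine hcl a₁ ha₁S b ((memP b).mp hbP) ?_
          rw [sidx a₁ b ha₁P hbP, ha₁i]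
          exact hib
  · rintro ⟨i, hi, rfl⟩
    constructor
    · intro a ha
      simp only [List.coe_toFinset, Set.mem_setOf_eq, List.mem_toFinset] at ha ⊢
      exact (memP a).mp (List.drop_subset _ _ ha)
    · intro a ha b hb hsab
      simp only [List.coe_toFinset, Set.mem_setOf_eq, List.mem_toFinset] at ha ⊢
      rw [mem_drop_iff ndP] at ha ⊢
      obtain ⟨haP, hia⟩ := ha
      have hbP : b ∈ P d := (memP b).mpr hb
      refine ⟨hbP, le_trans hia ?_⟩
      rw [← sidx a b haP hbP]
      exact hsab

lemma segOf_iff (AGR : ∀ u v, mrank u = mrank v → (s u v ↔ k u ≤ k v))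
    (INJ : ∀ u v, mrank u = mrank v → k u = k v → u = v)
    (PERM : ∀ d, (P d).Perm (lvlL d))
    (SORT : ∀ d, (P d).Pairwise (fun u v => k u ≤ k v)) (d : ℕ) (T : List MM) :
    IsInitialSegIn s {p | mrank p = d} ↑T.toFinset ↔ segOfL (P d) T := by
  have memP := memP PERM d
  have sidx := sidx AGR INJ PERM SORT d
  constructor
  · rintro ⟨hsub, hcl⟩
    have hTP : ∀ a ∈ T, a ∈ P d := by
      intro a ha
      exact (memP a).mpr (hsub (by simpa using ha))
    refine ⟨hTP, ?_⟩
    intro a ha b hb hab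
    have hsab : s a b := by
      rw [sidx a b (hTP a ha) hb]
      exact hab
    simpa using hcl a (by simpa using ha) b ((memP b).mp hb) hsab
  · rintro ⟨hTP, hcl⟩
    constructor
    · intro a ha
      simp only [List.coe_toFinset, Set.mem_setOf_eq, List.mem_toFinset] at ha ⊢
      exact (memP a).mp (hTP a ha)
    · intro a ha b hb hsab
      simp only [List.coe_toFinset, Set.mem_setOf_eq, List.mem_toFinset] at ha ⊢
      have hbP : b ∈ P d := (memP b).mpr hb
      refine hcl a ha b hbP ?_
      rw [← sidx a b (hTP a ha) hbP]
      exact hsab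

theorem bridge (AGR : ∀ u v, mrank u = mrank v → (s u v ↔ k u ≤ k v))
    (INJ : ∀ u v, mrank u = mrank v → k u = k v → u = v)
    (PERM : ∀ d, (P d).Perm (lvlL d))
    (SORT : ∀ d, (P d).Pairwise (fun u v => k u ≤ k v)) :
    MacaulayWith mle mrank s ↔ ∀ d, macStep (P d) (P (d+1)) := by
  constructor
  · intro hM d
    intro A hA i hi hlen
    have ndP := ndP PERM d
    have hAsub : A.Sublist (P d) := List.mem_sublists.mp hA
    have hAnd : A.Nodup := hAsub.nodup ndP
    have hdnd : ((P d).drop i).Nodup := (List.drop_sublist i (P d)).nodup ndP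
    have hAset : (↑A.toFinset : Set MM) ⊆ {p | mrank p = d} := by
      intro a ha
      simp only [List.coe_toFinset, Set.mem_setOf_eq, List.mem_toFinset] at ha ⊢
      exact (memP PERM d a).mp (hAsub.subset ha)
    have hseg : IsInitialSegIn s {p | mrank p = d} ↑((P d).drop i).toFinset := by
      rw [seg_iff AGR INJ PERM SORT d]
      exact ⟨i, by simpa using Nat.lt_succ_iff.mp (List.mem_range.mp hi), rfl⟩
    have hcard : (↑((P d).drop i).toFinset : Set MM).ncard = (↑A.toFinset : Set MM).ncard := by
      rw [ncard_coe_list hdnd, ncard_coe_list hAnd, hlen]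
    obtain ⟨h1, h2⟩ := hM d ↑A.toFinset hAset ↑((P d).drop i).toFinset hseg hcard
    rw [shadow_coe, shadow_coe, ncard_coe_list (nodup_shL _), ncard_coe_list (nodup_shL _)] at h1
    rw [shadow_coe] at h2
    exact ⟨h1, (segOf_iff AGR INJ PERM SORT (d+1) _).mp h2⟩
  · intro h d A hA S hS hcard
    obtain ⟨i, hi, rfl⟩ := (seg_iff AGR INJ PERM SORT d S).mp hS
    have ndP := ndP PERM d
    have hAfin : A.Finite := A.toFinite
    classical
    set A' : List MM := (P d).filter (fun a => decide (a ∈ A)) with hA'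
    have hA'sub : A'.Sublist (P d) := List.filter_sublist
    have hA'nd : A'.Nodup := hA'sub.nodup ndP
    have hA'set : ↑A'.toFinset = A := by
      ext a
      simp only [List.coe_toFinset, Set.mem_setOf_eq, List.mem_toFinset, hA',
        List.mem_filter, decide_eq_true_eq]
      constructor
      · rintro ⟨_, ha⟩; exact ha
      · intro ha
        exact ⟨(memP PERM d a).mpr (hA ha), ha⟩
    have hdnd : ((P d).drop i).Nodup := (List.drop_sublist i (P d)).nodup ndP
    have hlen : ((P d).drop i).length = A'.length := by
      have h1 : (↑((P d).drop i).toFinset : Set MM).ncard = ((P d).drop i).length :=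
        ncard_coe_list hdnd
      have h2 : (↑A'.toFinset : Set MM).ncard = A'.length := ncard_coe_list hA'nd
      rw [hA'set] at h2
      omega
    obtain ⟨h1, h2⟩ := h d A' (List.mem_sublists.mpr hA'sub) i
      (List.mem_range.mpr (Nat.lt_succ_of_le hi)) hlen
    constructor
    · rw [← hA'set, shadow_coe, shadow_coe, ncard_coe_list (nodup_shL _),
        ncard_coe_list (nodup_shL _)]
      exact h1
    · rw [shadow_coe]
      exact (segOf_iff AGR INJ PERM SORT (d+1) _).mpr h2

end Bridge

def tw : ℕ → List MM
  | 0 => [mk' 0 0 (by decide)]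
  | 1 => [mk' 0 1 (by decide), mk' 1 0 (by decide)]
  | 2 => [mk' 0 2 (by decide), mk' 1 1 (by decide), mk' 2 0 (by decide)]
  | 3 => [mk' 0 3 (by decide), mk' 1 2 (by decide), mk' 3 0 (by decide), mk' 2 1 (by decide)]
  | 4 => [mk' 0 4 (by decide), mk' 1 3 (by decide), mk' 4 0 (by decide), mk' 3 1 (by decide)]
  | 5 => [mk' 1 4 (by decide), mk' 4 1 (by decide)]
  | _ => []

def sw : ℕ → List MM
  | 0 => [mk' 0 0 (by decide)]
  | 1 => [mk' 1 0 (by decide), mk' 0 1 (by decide)]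
  | 2 => [mk' 2 0 (by decide), mk' 1 1 (by decide), mk' 0 2 (by decide)]
  | 3 => [mk' 3 0 (by decide), mk' 2 1 (by decide), mk' 0 3 (by decide), mk' 1 2 (by decide)]
  | 4 => [mk' 4 0 (by decide), mk' 3 1 (by decide), mk' 0 4 (by decide), mk' 1 3 (by decide)]
  | 5 => [mk' 4 1 (by decide), mk' 1 4 (by decide)]
  | _ => []

lemma tw_ge6 (n : ℕ) : tw (n + 6) = [] := rfl
lemma sw_ge6 (n : ℕ) : sw (n + 6) = [] := rfl

lemma mrank_le5 : ∀ u : MM, mrank u ≤ 5 := by decide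

lemma lvlL_ge6 (n : ℕ) : lvlL (n + 6) = [] := by
  apply List.filter_eq_nil_iff.mpr
  intro a _
  simp only [beq_iff_eq]
  have := mrank_le5 a
  omega

set_option maxRecDepth 100000

lemma perm_tw : ∀ d, (tw d).Perm (lvlL d) := by
  intro d
  match d with
  | 0 => decide
  | 1 => decide
  | 2 => decide
  | 3 => decide
  | 4 => decide
  | 5 => decide
  | (n+6) => rw [tw_ge6, lvlL_ge6]

lemma perm_sw : ∀ d, (sw d).Perm (lvlL d) := by
  intro d
  match d with
  | 0 => decide
  | 1 => decide
  | 2 => decide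
  | 3 => decide
  | 4 => decide
  | 5 => decide
  | (n+6) => rw [sw_ge6, lvlL_ge6]

lemma sort_tw : ∀ d, (tw d).Pairwise (fun u v => twKey u ≤ twKey v) := by
  intro d
  match d with
  | 0 => decide
  | 1 => decide
  | 2 => decide
  | 3 => decide
  | 4 => decide
  | 5 => decide
  | (n+6) => rw [tw_ge6]; exact List.Pairwise.nil

lemma sort_sw : ∀ d, (sw d).Pairwise (fun u v => swKey u ≤ swKey v) := by
  intro d
  match d with
  | 0 => decide
  | 1 => decide
  | 2 => decide
  | 3 => decide
  | 4 => decide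
  | 5 => decide
  | (n+6) => rw [sw_ge6]; exact List.Pairwise.nil

lemma inj_tw : ∀ u v : MM, mrank u = mrank v → twKey u = twKey v → u = v := by decide
lemma inj_sw : ∀ u v : MM, mrank u = mrank v → swKey u = swKey v → u = v := by decide

lemma pos_tw : ∀ d, macStep (tw d) (tw (d+1)) := by
  intro d
  match d with
  | 0 => decide
  | 1 => decide
  | 2 => decide
  | 3 => decide
  | 4 => decide
  | 5 => decide
  | (n+6) => rw [tw_ge6, tw_ge6]; decide

lemma pos_sw : ∀ d, macStep (sw d) (sw (d+1)) := by
  intro d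
  match d with
  | 0 => decide
  | 1 => decide
  | 2 => decide
  | 3 => decide
  | 4 => decide
  | 5 => decide
  | (n+6) => rw [sw_ge6, sw_ge6]; decide
def surv1 : List (List MM × List MM) :=
  [([mk' 0 1 (by decide), mk' 1 0 (by decide)], [mk' 0 2 (by decide), mk' 1 1 (by decide), mk' 2 0 (by decide)]),
   ([mk' 0 1 (by decide), mk' 1 0 (by decide)], [mk' 0 2 (by decide), mk' 2 0 (by decide), mk' 1 1 (by decide)]),
   ([mk' 1 0 (by decide), mk' 0 1 (by decide)], [mk' 2 0 (by decide), mk' 1 1 (by decide), mk' 0 2 (by decide)]),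
   ([mk' 1 0 (by decide), mk' 0 1 (by decide)], [mk' 2 0 (by decide), mk' 0 2 (by decide), mk' 1 1 (by decide)])]

def surv2 : List (List MM × List MM) :=
  [([mk' 0 2 (by decide), mk' 1 1 (by decide), mk' 2 0 (by decide)], [mk' 0 3 (by decide), mk' 1 2 (by decide), mk' 3 0 (by decide), mk' 2 1 (by decide)]),
   ([mk' 0 2 (by decide), mk' 1 1 (by decide), mk' 2 0 (by decide)], [mk' 0 3 (by decide), mk' 1 2 (by decide), mk' 2 1 (by decide), mk' 3 0 (by decide)]),
   ([mk' 0 2 (by decide), mk' 2 0 (by decide), mk' 1 1 (by decide)], [mk' 0 3 (by decide), mk' 3 0 (by decide), mk' 1 2 (by decide), mk' 2 1 (by decide)]),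
   ([mk' 0 2 (by decide), mk' 2 0 (by decide), mk' 1 1 (by decide)], [mk' 0 3 (by decide), mk' 3 0 (by decide), mk' 2 1 (by decide), mk' 1 2 (by decide)]),
   ([mk' 2 0 (by decide), mk' 1 1 (by decide), mk' 0 2 (by decide)], [mk' 3 0 (by decide), mk' 2 1 (by decide), mk' 1 2 (by decide), mk' 0 3 (by decide)]),
   ([mk' 2 0 (by decide), mk' 1 1 (by decide), mk' 0 2 (by decide)], [mk' 3 0 (by decide), mk' 2 1 (by decide), mk' 0 3 (by decide), mk' 1 2 (by decide)]),
   ([mk' 2 0 (by decide), mk' 0 2 (by decide), mk' 1 1 (by decide)], [mk' 3 0 (by decide), mk' 0 3 (by decide), mk' 1 2 (by decide), mk' 2 1 (by decide)]),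
   ([mk' 2 0 (by decide), mk' 0 2 (by decide), mk' 1 1 (by decide)], [mk' 3 0 (by decide), mk' 0 3 (by decide), mk' 2 1 (by decide), mk' 1 2 (by decide)])]

def surv3 : List (List MM × List MM) :=
  [([mk' 0 3 (by decide), mk' 1 2 (by decide), mk' 3 0 (by decide), mk' 2 1 (by decide)], [mk' 0 4 (by decide), mk' 1 3 (by decide), mk' 4 0 (by decide), mk' 3 1 (by decide)]),
   ([mk' 0 3 (by decide), mk' 3 0 (by decide), mk' 1 2 (by decide), mk' 2 1 (by decide)], [mk' 0 4 (by decide), mk' 4 0 (by decide), mk' 1 3 (by decide), mk' 3 1 (by decide)]),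
   ([mk' 0 3 (by decide), mk' 3 0 (by decide), mk' 2 1 (by decide), mk' 1 2 (by decide)], [mk' 0 4 (by decide), mk' 4 0 (by decide), mk' 3 1 (by decide), mk' 1 3 (by decide)]),
   ([mk' 3 0 (by decide), mk' 2 1 (by decide), mk' 0 3 (by decide), mk' 1 2 (by decide)], [mk' 4 0 (by decide), mk' 3 1 (by decide), mk' 0 4 (by decide), mk' 1 3 (by decide)]),
   ([mk' 3 0 (by decide), mk' 0 3 (by decide), mk' 1 2 (by decide), mk' 2 1 (by decide)], [mk' 4 0 (by decide), mk' 0 4 (by decide), mk' 1 3 (by decide), mk' 3 1 (by decide)]),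
   ([mk' 3 0 (by decide), mk' 0 3 (by decide), mk' 2 1 (by decide), mk' 1 2 (by decide)], [mk' 4 0 (by decide), mk' 0 4 (by decide), mk' 3 1 (by decide), mk' 1 3 (by decide)])]

def surv4 : List (List MM × List MM) :=
  [([mk' 0 4 (by decide), mk' 1 3 (by decide), mk' 4 0 (by decide), mk' 3 1 (by decide)], [mk' 1 4 (by decide), mk' 4 1 (by decide)]),
   ([mk' 4 0 (by decide), mk' 3 1 (by decide), mk' 0 4 (by decide), mk' 1 3 (by decide)], [mk' 4 1 (by decide), mk' 1 4 (by decide)])]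

def inserts (a : MM) : List MM → List (List MM)
  | [] => [[a]]
  | b :: l => (a :: b :: l) :: (inserts a l).map (b :: ·)

def permsL : List MM → List (List MM)
  | [] => [[]]
  | a :: l => (permsL l).flatMap (inserts a)

lemma cons_mem_inserts (a : MM) : ∀ l : List MM, (a :: l) ∈ inserts a l
  | [] => by simp [inserts]
  | b :: l => by simp [inserts]

lemma append_mem_inserts (a : MM) : ∀ q1 q2 : List MM,
    (q1 ++ a :: q2) ∈ inserts a (q1 ++ q2)
  | [], q2 => by simpa using cons_mem_inserts a q2
  | b :: q1, q2 => by
    simp only [List.cons_append, inserts, List.mem_cons, List.mem_map]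
    exact Or.inr ⟨q1 ++ a :: q2, append_mem_inserts a q1 q2, rfl⟩

lemma mem_permsL : ∀ {l q : List MM}, q.Perm l → q ∈ permsL l
  | [], q, h => by simp [permsL, h.eq_nil]
  | a :: l, q, h => by
    have ha : a ∈ q := h.mem_iff.mpr List.mem_cons_self
    obtain ⟨q1, q2, rfl⟩ := List.append_of_mem ha
    have h2 : (q1 ++ q2).Perm l := by
      have := (List.perm_middle.symm.trans h)
      exact this.cons_inv
    have IH := mem_permsL h2
    simp only [permsL, List.mem_flatMap]
    exact ⟨q1 ++ q2, IH, append_mem_inserts a q1 q2⟩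

lemma stage0 : ∀ p0 ∈ permsL (lvlL 0), p0 = tw 0 := by decide

lemma stage1 : ∀ p1 ∈ permsL (lvlL 1), ∀ p2 ∈ permsL (lvlL 2),
    macStep p1 p2 → (p1, p2) ∈ surv1 := by decide

lemma stage2 : ∀ pq ∈ surv1, ∀ p3 ∈ permsL (lvlL 3),
    macStep pq.2 p3 → (pq.2, p3) ∈ surv2 := by decide

lemma stage3 : ∀ pq ∈ surv2, ∀ p4 ∈ permsL (lvlL 4),
    macStep pq.2 p4 → (pq.2, p4) ∈ surv3 := by decide

lemma stage4 : ∀ pq ∈ surv3, ∀ p5 ∈ permsL (lvlL 5),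
    macStep pq.2 p5 → (pq.2, p5) ∈ surv4 := by decide

lemma bp4 : ∀ pq ∈ surv4, (pq.1 = tw 4 ∧ pq.2 = tw 5) ∨ (pq.1 = sw 4 ∧ pq.2 = sw 5) := by decide

lemma bp3 : ∀ pq ∈ surv3, (pq.2 = tw 4 → pq.1 = tw 3) ∧ (pq.2 = sw 4 → pq.1 = sw 3) := by decide

lemma bp2 : ∀ pq ∈ surv2, (pq.2 = tw 3 → pq.1 = tw 2) ∧ (pq.2 = sw 3 → pq.1 = sw 2) := by decide

lemma bp1 : ∀ pq ∈ surv1, (pq.2 = tw 2 → pq.1 = tw 1) ∧ (pq.2 = sw 2 → pq.1 = sw 1) := by decide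

lemma idxtw : ∀ u v : MM, ∀ d ∈ List.range 6, u ∈ tw d → v ∈ tw d →
    (List.idxOf u (tw d) ≤ List.idxOf v (tw d) ↔ twKey u ≤ twKey v) := by decide

lemma idxsw : ∀ u v : MM, ∀ d ∈ List.range 6, u ∈ sw d → v ∈ sw d →
    (List.idxOf u (sw d) ≤ List.idxOf v (sw d) ↔ swKey u ≤ swKey v) := by decide

theorem modelMain (s : MM → MM → Prop) (hlin : IsLinearOrder MM s) :
    MacaulayWith mle mrank s ↔
      ((∀ u v, mrank u = mrank v → (s u v ↔ twKey u ≤ twKey v)) ∨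
       (∀ u v, mrank u = mrank v → (s u v ↔ swKey u ≤ swKey v))) := by
  constructor
  · intro hM
    classical
    have hrefl : ∀ a : MM, s a a := fun a => hlin.toIsPartialOrder.toIsPreorder.toRefl.refl a
    have hanti : ∀ a b : MM, s a b → s b a → a = b := fun a b =>
      hlin.toIsPartialOrder.toAntisymm.antisymm a b
    haveI : IsTotal MM s := hlin.toTotal
    haveI : IsTrans MM s := hlin.toIsPartialOrder.toIsPreorder.toIsTrans
    letI : DecidableRel s := Classical.decRel s
    set P : ℕ → List MM := fun d => List.insertionSort s (lvlL d) with hP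
    have PERM : ∀ d, (P d).Perm (lvlL d) := fun d => List.perm_insertionSort s _
    have SORTs : ∀ d, (P d).Pairwise s := fun d => List.pairwise_insertionSort s _
    have ndPs : ∀ d, (P d).Nodup := fun d => (PERM d).symm.nodup (nodup_lvlL d)
    have memPs : ∀ d (u : MM), u ∈ P d ↔ mrank u = d := fun d u =>
      (PERM d).mem_iff.trans mem_lvlL
    have sidxs : ∀ d (a b : MM), a ∈ P d → b ∈ P d →
        (s a b ↔ (P d).idxOf a ≤ (P d).idxOf b) := by
      intro d a b ha hb
      exact sorted_idx_iff hrefl (fun a b _ _ h1 h2 => hanti a b h1 h2)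
        (ndPs d) (SORTs d) ha hb
    set k : MM → ℕ := fun u => (P (mrank u)).idxOf u with hk
    have memself : ∀ u : MM, u ∈ P (mrank u) := fun u => (memPs _ u).mpr rfl
    have INJ : ∀ u v, mrank u = mrank v → k u = k v → u = v := by
      intro u v hr hkuv
      have hu := memself u
      have hv := memself v
      rw [hr] at hu
      apply (List.idxOf_inj hu (y := v)).mp
      simpa [hk, hr] using hkuv
    have AGR : ∀ u v, mrank u = mrank v → (s u v ↔ k u ≤ k v) := by
      intro u v hr
      have hu := memself u
      have hv := memself v
      rw [hr] at hu
      rw [sidxs (mrank v) u v hu hv]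
      simp [hk, hr]
    have SORT : ∀ d, (P d).Pairwise (fun u v => k u ≤ k v) := by
      intro d
      rw [List.pairwise_iff_getElem]
      intro i j hi hj hij
      have hmem_i : (P d)[i] ∈ P d := List.getElem_mem _
      have hmem_j : (P d)[j] ∈ P d := List.getElem_mem _
      have hri : mrank ((P d)[i]) = d := (memPs d _).mp hmem_i
      have hrj : mrank ((P d)[j]) = d := (memPs d _).mp hmem_j
      show k _ ≤ k _
      rw [hk]
      simp only [hri, hrj]
      rw [(ndPs d).idxOf_getElem, (ndPs d).idxOf_getElem]
      omega
    have hsteps := (bridge AGR INJ PERM SORT).mp hM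
    have h0 : P 0 = tw 0 := stage0 _ (mem_permsL (PERM 0))
    have m1 := mem_permsL (PERM 1)
    have m2 := mem_permsL (PERM 2)
    have m3 := mem_permsL (PERM 3)
    have m4 := mem_permsL (PERM 4)
    have m5 := mem_permsL (PERM 5)
    have s1 := stage1 (P 1) m1 (P 2) m2 (hsteps 1)
    have s2 := stage2 _ s1 (P 3) m3 (hsteps 2)
    have s3 := stage3 _ s2 (P 4) m4 (hsteps 3)
    have s4 := stage4 _ s3 (P 5) m5 (hsteps 4)
    rcases bp4 _ s4 with ⟨h4e, h5e⟩ | ⟨h4e, h5e⟩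
    · left
      have h3e : P 3 = tw 3 := (bp3 _ s3).1 h4e
      have h2e : P 2 = tw 2 := (bp2 _ s2).1 h3e
      have h1e : P 1 = tw 1 := (bp1 _ s1).1 h2e
      have h0e : P 0 = tw 0 := h0
      intro u v hruv
      have hu := memself u
      have hv := memself v
      rw [hruv] at hu
      rw [sidxs (mrank v) u v hu hv]
      have hle := mrank_le5 v
      have hPd : P (mrank v) = tw (mrank v) := by
        have : mrank v = 0 ∨ mrank v = 1 ∨ mrank v = 2 ∨ mrank v = 3 ∨
            mrank v = 4 ∨ mrank v = 5 := by omega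
        rcases this with h|h|h|h|h|h <;> rw [h] <;> assumption
      rw [hPd] at hu hv ⊢
      exact idxtw u v (mrank v) (List.mem_range.mpr (by omega)) hu hv
    · right
      have h3e : P 3 = sw 3 := (bp3 _ s3).2 h4e
      have h2e : P 2 = sw 2 := (bp2 _ s2).2 h3e
      have h1e : P 1 = sw 1 := (bp1 _ s1).2 h2e
      have h0e : P 0 = sw 0 := h0
      intro u v hruv
      have hu := memself u
      have hv := memself v
      rw [hruv] at hu
      rw [sidxs (mrank v) u v hu hv]
      have hle := mrank_le5 v
      have hPd : P (mrank v) = sw (mrank v) := by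
        have : mrank v = 0 ∨ mrank v = 1 ∨ mrank v = 2 ∨ mrank v = 3 ∨
            mrank v = 4 ∨ mrank v = 5 := by omega
        rcases this with h|h|h|h|h|h <;> rw [h] <;> assumption
      rw [hPd] at hu hv ⊢
      exact idxsw u v (mrank v) (List.mem_range.mpr (by omega)) hu hv
  · rintro (hAGR | hAGR)
    · exact (bridge hAGR inj_tw perm_tw sort_tw).mpr pos_tw
    · exact (bridge hAGR inj_sw perm_sw sort_sw).mpr pos_sw

-- ===== quotient ring facts =====

def okv (a : Fin 2 →₀ ℕ) : Prop := a 0 < 5 ∧ a 1 < 5 ∧ (a 0 < 2 ∨ a 1 < 2)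

lemma heartIdeal_eq : heartIdeal = Ideal.span ((fun s => monomial s (1:ℚ)) ''
    {Finsupp.single 0 5, Finsupp.single 0 2 + Finsupp.single 1 2, Finsupp.single 1 5}) := by
  have g1 : (X 0 : MvPolynomial (Fin 2) ℚ) ^ 5 = monomial (Finsupp.single 0 5) 1 :=
    X_pow_eq_monomial
  have g2 : (X 0 : MvPolynomial (Fin 2) ℚ) ^ 2 * X 1 ^ 2 =
      monomial (Finsupp.single 0 2 + Finsupp.single 1 2) 1 := by
    rw [X_pow_eq_monomial, X_pow_eq_monomial, monomial_mul, one_mul]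
  have g3 : (X 1 : MvPolynomial (Fin 2) ℚ) ^ 5 = monomial (Finsupp.single 1 5) 1 :=
    X_pow_eq_monomial
  unfold heartIdeal
  rw [g1, g2, g3, Set.image_insert_eq, Set.image_insert_eq, Set.image_singleton]

lemma gen_le_iff (a : Fin 2 →₀ ℕ) :
    (∃ si ∈ ({Finsupp.single 0 5, Finsupp.single 0 2 + Finsupp.single 1 2,
      Finsupp.single (1 : Fin 2) (5 : ℕ)} : Set (Fin 2 →₀ ℕ)), si ≤ a) ↔ ¬ okv a := by
  have h1 : (Finsupp.single (0 : Fin 2) (5:ℕ) ≤ a) ↔ 5 ≤ a 0 := Finsupp.single_le_iff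
  have h3 : (Finsupp.single (1 : Fin 2) (5:ℕ) ≤ a) ↔ 5 ≤ a 1 := Finsupp.single_le_iff
  have h2 : (Finsupp.single (0 : Fin 2) (2:ℕ) + Finsupp.single 1 2 ≤ a) ↔
      (2 ≤ a 0 ∧ 2 ≤ a 1) := by
    rw [Finsupp.le_def, Fin.forall_fin_two]
    simp [Finsupp.single_apply]
  constructor
  · rintro ⟨si, hsi, hle⟩
    simp only [Set.mem_insert_iff, Set.mem_singleton_iff] at hsi
    rcases hsi with rfl | rfl | rfl
    · rw [h1] at hle; unfold okv; omega
    · rw [h2] at hle; unfold okv; omega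
    · rw [h3] at hle; unfold okv; omega
  · intro hno
    unfold okv at hno
    push_neg at hno
    by_cases hc1 : 5 ≤ a 0
    · exact ⟨_, Set.mem_insert _ _, h1.mpr hc1⟩
    · by_cases hc2 : 5 ≤ a 1
      · exact ⟨_, by simp, h3.mpr hc2⟩
      · refine ⟨_, by simp, h2.mpr ?_⟩
        omega

lemma mem_heart_iff {a : Fin 2 →₀ ℕ} :
    monomial a (1:ℚ) ∈ heartIdeal ↔ ¬ okv a := by
  rw [heartIdeal_eq, mem_ideal_span_monomial_image]
  rw [← gen_le_iff a]
  simp [support_monomial]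

lemma mk_mono_inj {a b : Fin 2 →₀ ℕ} (ha : okv a) (hb : okv b)
    (h : Ideal.Quotient.mk heartIdeal (monomial a (1:ℚ)) =
         Ideal.Quotient.mk heartIdeal (monomial b (1:ℚ))) : a = b := by
  by_cases hab : a = b
  · exact hab
  · exfalso
    rw [Ideal.Quotient.eq] at h
    rw [heartIdeal_eq, mem_ideal_span_monomial_image] at h
    have hmem : a ∈ (monomial a (1:ℚ) - monomial b (1:ℚ)).support := by
      rw [mem_support_iff, coeff_sub, coeff_monomial, coeff_monomial]
      simp [Ne.symm hab]
    obtain ⟨si, hsi, hle⟩ := h a hmem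
    exact (gen_le_iff a).mp ⟨si, hsi, hle⟩ ha

noncomputable def fsv (u : MM) : Fin 2 →₀ ℕ :=
  Finsupp.single 0 u.1.1.1 + Finsupp.single 1 u.1.2.1

lemma fsv_zero (u : MM) : fsv u 0 = u.1.1.1 := by
  simp [fsv, Finsupp.single_apply]

lemma fsv_one (u : MM) : fsv u 1 = u.1.2.1 := by
  simp [fsv, Finsupp.single_apply]

lemma okv_fsv (u : MM) : okv (fsv u) := by
  refine ⟨?_, ?_, ?_⟩
  · rw [fsv_zero]; exact u.1.1.2
  · rw [fsv_one]; exact u.1.2.2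
  · rcases u.2 with h | h
    · left; rw [fsv_zero]; exact h
    · right; rw [fsv_one]; exact h

lemma fsv_inj : Function.Injective fsv := by
  intro u v h
  have h0 : fsv u 0 = fsv v 0 := by rw [h]
  have h1 : fsv u 1 = fsv v 1 := by rw [h]
  rw [fsv_zero, fsv_zero] at h0
  rw [fsv_one, fsv_one] at h1
  exact Subtype.ext (Prod.ext (Fin.ext h0) (Fin.ext h1))

noncomputable def toMon (u : MM) : MonPoset heartIdeal :=
  ⟨Ideal.Quotient.mk heartIdeal (monomial (fsv u) 1),
    by
      constructor
      · rw [Ne, Ideal.Quotient.eq_zero_iff_mem]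
        rw [mem_heart_iff]
        simp [okv_fsv u]
      · exact ⟨fsv u, rfl⟩⟩

lemma toMon_val (u : MM) :
    (toMon u).1 = Ideal.Quotient.mk heartIdeal (monomial (fsv u) 1) := rfl

lemma toMon_inj : Function.Injective toMon := by
  intro u v h
  have := congrArg Subtype.val h
  rw [toMon_val, toMon_val] at this
  exact fsv_inj (mk_mono_inj (okv_fsv u) (okv_fsv v) this)

lemma okv_of_ne_zero {a : Fin 2 →₀ ℕ}
    (h : Ideal.Quotient.mk heartIdeal (monomial a (1:ℚ)) ≠ 0) : okv a := by
  by_contra hno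
  exact h (Ideal.Quotient.eq_zero_iff_mem.mpr (mem_heart_iff.mpr hno))

lemma toMon_surj : Function.Surjective toMon := by
  rintro ⟨x, hne, a, rfl⟩
  have hok : okv a := okv_of_ne_zero hne
  have hor : ((⟨a 0, hok.1⟩ : Fin 5), (⟨a 1, hok.2.1⟩ : Fin 5)).1.1 < 2 ∨
      ((⟨a 0, hok.1⟩ : Fin 5), (⟨a 1, hok.2.1⟩ : Fin 5)).2.1 < 2 := by
    rcases hok.2.2 with h | h
    · exact Or.inl h
    · exact Or.inr h
  set u0 : MM := ⟨(⟨a 0, hok.1⟩, ⟨a 1, hok.2.1⟩), hor⟩ with hu0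
  have hfa : fsv u0 = a := by
    ext i
    fin_cases i
    · show fsv u0 0 = a 0
      rw [fsv_zero]
    · show fsv u0 1 = a 1
      rw [fsv_one]
  refine ⟨u0, ?_⟩
  apply Subtype.ext
  rw [toMon_val, hfa]

lemma toMon_bij : Function.Bijective toMon := ⟨toMon_inj, toMon_surj⟩

lemma monClass_iff {h : MvPolynomial (Fin 2) ℚ ⧸ heartIdeal} :
    MonClass heartIdeal h ↔ ∃ c : Fin 2 →₀ ℕ, okv c ∧
      h = Ideal.Quotient.mk heartIdeal (monomial c (1:ℚ)) := by
  constructor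
  · rintro ⟨hne, c, rfl⟩
    exact ⟨c, okv_of_ne_zero hne, rfl⟩
  · rintro ⟨c, hok, rfl⟩
    refine ⟨?_, c, rfl⟩
    rw [Ne, Ideal.Quotient.eq_zero_iff_mem, mem_heart_iff]
    simp [hok]

lemma monDvd_iff (u v : MM) : monDvd heartIdeal (toMon u) (toMon v) ↔ mle u v := by
  constructor
  · rintro ⟨h, hcl, hmul⟩
    obtain ⟨c, hok, rfl⟩ := monClass_iff.mp hcl
    rw [toMon_val, toMon_val, ← map_mul, monomial_mul, one_mul] at hmul
    have hne : Ideal.Quotient.mk heartIdeal (monomial (fsv u + c) (1:ℚ)) ≠ 0 := by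
      rw [hmul, ← toMon_val]
      exact (toMon v).2.1
    have hok2 : okv (fsv u + c) := okv_of_ne_zero hne
    have heq : fsv u + c = fsv v := mk_mono_inj hok2 (okv_fsv v) hmul
    constructor
    · have := congrArg (fun f => f 0) heq
      simp only [Finsupp.add_apply] at this
      rw [fsv_zero, fsv_zero] at this
      omega
    · have := congrArg (fun f => f 1) heq
      simp only [Finsupp.add_apply] at this
      rw [fsv_one, fsv_one] at this
      omega
  · rintro ⟨h0, h1⟩
    set c : Fin 2 →₀ ℕ := Finsupp.single 0 (v.1.1.1 - u.1.1.1) +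
      Finsupp.single 1 (v.1.2.1 - u.1.2.1) with hc
    have hc0 : c 0 = v.1.1.1 - u.1.1.1 := by simp [hc, Finsupp.single_apply]
    have hc1 : c 1 = v.1.2.1 - u.1.2.1 := by simp [hc, Finsupp.single_apply]
    have hcok : okv c := by
      obtain ⟨hv1, hv2, hv3⟩ := okv_fsv v
      rw [fsv_zero] at hv1
      rw [fsv_one] at hv2
      refine ⟨?_, ?_, ?_⟩
      · rw [hc0]; omega
      · rw [hc1]; omega
      · rcases hv3 with h | h
        · rw [fsv_zero] at h; left; rw [hc0]; omega
        · rw [fsv_one] at h; right; rw [hc1]; omega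
    have hsum : fsv u + c = fsv v := by
      ext i
      fin_cases i
      · show (fsv u + c) 0 = fsv v 0
        rw [Finsupp.add_apply, fsv_zero, fsv_zero, hc0]; omega
      · show (fsv u + c) 1 = fsv v 1
        rw [Finsupp.add_apply, fsv_one, fsv_one, hc1]; omega
    refine ⟨Ideal.Quotient.mk heartIdeal (monomial c 1),
      monClass_iff.mpr ⟨c, hcok, rfl⟩, ?_⟩
    rw [toMon_val, toMon_val, ← map_mul, monomial_mul, one_mul, hsum]

lemma tableOrder_iff (tbl : ℕ → ℕ → ℕ) (u v : MM) :
    tableOrder tbl (toMon u) (toMon v) ↔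
      tbl u.1.1.1 u.1.2.1 ≤ tbl v.1.1.1 v.1.2.1 := by
  constructor
  · rintro ⟨a, b, ha, hb, hle⟩
    have hnea : Ideal.Quotient.mk heartIdeal (monomial a (1:ℚ)) ≠ 0 := by
      rw [← ha]; exact (toMon u).2.1
    have hneb : Ideal.Quotient.mk heartIdeal (monomial b (1:ℚ)) ≠ 0 := by
      rw [← hb]; exact (toMon v).2.1
    have hau : a = fsv u := mk_mono_inj (okv_of_ne_zero hnea) (okv_fsv u)
      (ha.symm.trans (toMon_val u))
    have hbv : b = fsv v := mk_mono_inj (okv_of_ne_zero hneb) (okv_fsv v)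
      (hb.symm.trans (toMon_val v))
    rw [hau, hbv, fsv_zero, fsv_one, fsv_zero, fsv_one] at hle
    exact hle
  · intro hle
    refine ⟨fsv u, fsv v, toMon_val u, toMon_val v, ?_⟩
    rw [fsv_zero, fsv_one, fsv_zero, fsv_one]
    exact hle

lemma twKey_inj : ∀ u v : MM, twKey u = twKey v → u = v := by decide

lemma minrank0 : ∀ u : MM, (∀ q, mle q u → q = u) → mrank u = 0 := by decide
lemma covstep : ∀ u v : MM, CoversR mle u v → mrank v = mrank u + 1 := by decide

/-- The monomial poset of `ℚ[x,y]/(x⁵, x²y², y⁵)`, ranked by total degree, is a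
Macaulay poset, and a total order on it witnesses the Macaulay property if and only
if, within each rank level, it agrees with the twist order
`y ≺ x`; `y² ≺ xy ≺ x²`; `y³ ≺ xy² ≺ x³ ≺ x²y`; `y⁴ ≺ xy³ ≺ x⁴ ≺ x³y`; `xy⁴ ≺ x⁴y`
or with its image under exchanging `x` and `y` — i.e. up to the irrelevant ordering
between elements of different ranks these are exactly the two Macaulay orders. -/
theorem heart_monPoset_macaulay_orders
    (r : MonPoset heartIdeal → ℕ)
    (hr : ∀ (c : MonPoset heartIdeal) (a : Fin 2 →₀ ℕ),
      c.1 = Ideal.Quotient.mk heartIdeal (monomial a (1 : ℚ)) → r c = a 0 + a 1) :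
    (IsRankFunctionR (monDvd heartIdeal) r ∧
      (∀ d : ℕ, {c : MonPoset heartIdeal | r c = d}.Finite) ∧
      ∃ t, IsLinearOrder (MonPoset heartIdeal) t ∧
        MacaulayWith (monDvd heartIdeal) r t) ∧
    (∀ t, IsLinearOrder (MonPoset heartIdeal) t →
      (MacaulayWith (monDvd heartIdeal) r t ↔
        ((∀ c c' : MonPoset heartIdeal, r c = r c' →
            (t c c' ↔ tableOrder twistTable c c')) ∨
         (∀ c c' : MonPoset heartIdeal, r c = r c' →
            (t c c' ↔ tableOrder (fun i j => twistTable j i) c c'))))) := by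
  classical
  have hre : ∀ u : MM, r (toMon u) = mrank u := by
    intro u
    have h := hr (toMon u) (fsv u) (toMon_val u)
    rw [h, fsv_zero, fsv_one]
    rfl
  set e : MM ≃ MonPoset heartIdeal := Equiv.ofBijective toMon toMon_bij with he
  have hesymm : ∀ c, toMon (e.symm c) = c := fun c => e.apply_symm_apply c
  have hle : ∀ u v : MM, mle u v ↔ monDvd heartIdeal (toMon u) (toMon v) :=
    fun u v => (monDvd_iff u v).symm
  have main : ∀ t, IsLinearOrder (MonPoset heartIdeal) t →
      (MacaulayWith (monDvd heartIdeal) r t ↔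
        ((∀ c c' : MonPoset heartIdeal, r c = r c' →
            (t c c' ↔ tableOrder twistTable c c')) ∨
         (∀ c c' : MonPoset heartIdeal, r c = r c' →
            (t c c' ↔ tableOrder (fun i j => twistTable j i) c c')))) := by
    intro t hlin
    set s : MM → MM → Prop := fun u v => t (toMon u) (toMon v) with hs
    have hslin : IsLinearOrder MM s := lin_pullback t hlin toMon_inj
    have hmac : MacaulayWith (monDvd heartIdeal) r t ↔ MacaulayWith mle mrank s := by
      constructor
      · intro h
        exact mac_transfer e (monDvd heartIdeal) mle hle t s (fun _ _ => Iff.rfl)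
          r mrank (fun u => (hre u).symm) h
      · intro h
        refine mac_transfer e.symm mle (monDvd heartIdeal) ?_ s t ?_ mrank r ?_ h
        · intro c c'
          have h2 := monDvd_iff (e.symm c) (e.symm c')
          rw [hesymm c, hesymm c'] at h2
          exact h2
        · intro c c'
          show t c c' ↔ t (toMon (e.symm c)) (toMon (e.symm c'))
          rw [hesymm c, hesymm c']
        · intro c
          have h2 := hre (e.symm c)
          rw [hesymm c] at h2
          exact h2
    have hrhs1 : (∀ c c' : MonPoset heartIdeal, r c = r c' →
        (t c c' ↔ tableOrder twistTable c c')) ↔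
        (∀ u v, mrank u = mrank v → (s u v ↔ twKey u ≤ twKey v)) := by
      constructor
      · intro h u v hruv
        have h2 := h (toMon u) (toMon v) (by rw [hre, hre, hruv])
        exact h2.trans (tableOrder_iff twistTable u v)
      · intro h c c' hrc
        obtain ⟨u, rfl⟩ := toMon_surj c
        obtain ⟨v, rfl⟩ := toMon_surj c'
        have hm : mrank u = mrank v := by rw [← hre, ← hre, hrc]
        exact (h u v hm).trans (tableOrder_iff twistTable u v).symm
    have hrhs2 : (∀ c c' : MonPoset heartIdeal, r c = r c' →
        (t c c' ↔ tableOrder (fun i j => twistTable j i) c c')) ↔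
        (∀ u v, mrank u = mrank v → (s u v ↔ swKey u ≤ swKey v)) := by
      constructor
      · intro h u v hruv
        have h2 := h (toMon u) (toMon v) (by rw [hre, hre, hruv])
        exact h2.trans (tableOrder_iff (fun i j => twistTable j i) u v)
      · intro h c c' hrc
        obtain ⟨u, rfl⟩ := toMon_surj c
        obtain ⟨v, rfl⟩ := toMon_surj c'
        have hm : mrank u = mrank v := by rw [← hre, ← hre, hrc]
        exact (h u v hm).trans (tableOrder_iff (fun i j => twistTable j i) u v).symm
    exact hmac.trans ((modelMain s hslin).trans (or_congr hrhs1.symm hrhs2.symm))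
  refine ⟨⟨⟨?_, ?_⟩, ?_, ?_⟩, main⟩
  · intro p hp
    obtain ⟨u, rfl⟩ := toMon_surj p
    have hmin : ∀ q : MM, mle q u → q = u := by
      intro q hq
      exact toMon_inj (hp (toMon q) ((monDvd_iff q u).mpr hq))
    rw [hre u, minrank0 u hmin]
  · intro p q hc
    obtain ⟨u, rfl⟩ := toMon_surj p
    obtain ⟨v, rfl⟩ := toMon_surj q
    have hcm : CoversR mle u v :=
      (covers_transfer e (monDvd heartIdeal) mle hle u v).mpr hc
    rw [hre, hre]
    exact covstep u v hcm
  · intro d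
    haveI : Finite (MonPoset heartIdeal) := Finite.of_equiv MM e
    exact Set.toFinite _
  · have hlinN : IsLinearOrder ℕ (· ≤ ·) :=
      { refl := le_refl
        trans := fun _ _ _ => le_trans
        antisymm := fun _ _ => le_antisymm
        total := le_total }
    have hfinj : Function.Injective (fun c : MonPoset heartIdeal => twKey (e.symm c)) :=
      fun c c' hcc => e.symm.injective (twKey_inj _ _ hcc)
    refine ⟨fun c c' => twKey (e.symm c) ≤ twKey (e.symm c'),
      lin_pullback (· ≤ ·) hlinN hfinj, ?_⟩
    apply (main _ (lin_pullback (· ≤ ·) hlinN hfinj)).mpr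
    left
    intro c c' _
    obtain ⟨u, rfl⟩ := toMon_surj c
    obtain ⟨v, rfl⟩ := toMon_surj c'
    have h1 : e.symm (toMon u) = u := e.symm_apply_apply u
    have h2 : e.symm (toMon v) = v := e.symm_apply_apply v
    show twKey (e.symm (toMon u)) ≤ twKey (e.symm (toMon v)) ↔ _
    rw [h1, h2]
    exact (tableOrder_iff twistTable u v).symm
end
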